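/- arXiv:2307.14054 — 9 statements merged into one kernel-verified Lean document; each statement's English description precedes it below -/
import Mathlib

section
/- Let s^a_n denote the number of vertices of the metallic cube Π^a_n. Then s^a_0 = 1, s^a_1 = a, and for every n ≥ 2, s^a_n = a·s^a_{n−1} + s^a_{n−2}. -/
/-- Strings of length `n` over the alphabet `{0,1,…,a}` in which the letter `a`
occurs only immediately after a `0` (i.e. `a` appears only inside blocks `0a`). -/
def MetallicOK (a n : ℕ) (α : Fin n → Fin (a + 1)) : Prop :=
  ∀ i : Fin n, (α i : ℕ) = a →
    ∃ j : Fin n, (j : ℕ) + 1 = (i : ℕ) ∧ (α j : ℕ) = 0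

instance (a n : ℕ) : DecidablePred (MetallicOK a n) := fun α => by
  unfold MetallicOK; infer_instance

/-- Vertices of the metallic cube `Π^a_n`. -/
abbrev MetallicVertex (a n : ℕ) : Type :=
  {α : Fin n → Fin (a + 1) // MetallicOK a n α}

/-- The metallic cube `Π^a_n`: two strings are adjacent iff `Σ_i |α_i - β_i| = 1`. -/
def metallicCube (a n : ℕ) : SimpleGraph (MetallicVertex a n) where
  Adj u v := (∑ i : Fin n, Nat.dist (u.1 i : ℕ) (v.1 i : ℕ)) = 1
  symm := by
    constructor
    intro u v h
    simpa [Nat.dist_comm] using h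
  loopless := by
    constructor
    intro u h
    simp [Nat.dist_self] at h

instance (a n : ℕ) : DecidableRel (metallicCube a n).Adj := fun u v =>
  inferInstanceAs (Decidable ((∑ i : Fin n, Nat.dist (u.1 i : ℕ) (v.1 i : ℕ)) = 1))

lemma ok_init {a n : ℕ} {α : Fin (n+1) → Fin (a+1)} (h : MetallicOK a (n+1) α) :
    MetallicOK a n (Fin.init α) := by
  intro i hi
  obtain ⟨j, hj1, hj0⟩ := h i.castSucc (by simpa [Fin.init] using hi)
  have hjlt : (j : ℕ) < n := by
    have := i.isLt; simp [Fin.coe_castSucc] at hj1; omega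
  refine ⟨⟨j, hjlt⟩, by simpa using hj1, ?_⟩
  have heq : (⟨(j : ℕ), hjlt⟩ : Fin n).castSucc = j := Fin.ext rfl
  simpa [Fin.init, heq] using hj0

lemma ok_snoc_lt {a n : ℕ} {α : Fin n → Fin (a+1)} (h : MetallicOK a n α)
    (c : Fin (a+1)) (hc : (c : ℕ) ≠ a) : MetallicOK a (n+1) (Fin.snoc α c) := by
  intro i hi
  induction i using Fin.lastCases with
  | last => rw [Fin.snoc_last] at hi; exact absurd hi hc
  | cast k =>
    rw [Fin.snoc_castSucc] at hi
    obtain ⟨j, hj1, hj0⟩ := h k hi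
    exact ⟨j.castSucc, by simpa using hj1, by simpa [Fin.snoc_castSucc] using hj0⟩

lemma ok_snoc_a {a n : ℕ} {α : Fin (n+1) → Fin (a+1)} (h : MetallicOK a (n+1) α)
    (h0 : (α (Fin.last n) : ℕ) = 0) :
    MetallicOK a (n+2) (Fin.snoc α ⟨a, Nat.lt_succ_self a⟩) := by
  intro i hi
  induction i using Fin.lastCases with
  | last =>
    refine ⟨(Fin.last n).castSucc, by simp, ?_⟩
    simpa [Fin.snoc_castSucc] using h0
  | cast k =>
    rw [Fin.snoc_castSucc] at hi
    obtain ⟨j, hj1, hj0⟩ := h k hi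
    exact ⟨j.castSucc, by simpa using hj1, by simpa [Fin.snoc_castSucc] using hj0⟩

lemma last_zero_of_a {a n : ℕ} {α : Fin (n+2) → Fin (a+1)} (h : MetallicOK a (n+2) α)
    (hl : (α (Fin.last (n+1)) : ℕ) = a) : (α ((Fin.last n).castSucc) : ℕ) = 0 := by
  obtain ⟨j, hj1, hj0⟩ := h _ hl
  have : j = (Fin.last n).castSucc := by
    apply Fin.ext; simp [Fin.last] at hj1 ⊢; omega
  rwa [this] at hj0

def equivOne (a : ℕ) : MetallicVertex a 1 ≃ Fin a where
  toFun α := ⟨(α.1 0 : ℕ), by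
    have hle : (α.1 0 : ℕ) ≤ a := Nat.lt_succ_iff.mp (α.1 0).isLt
    rcases Nat.lt_or_ge (α.1 0 : ℕ) a with h | h
    · exact h
    · exfalso
      obtain ⟨j, hj1, _⟩ := α.2 0 (le_antisymm hle h)
      simp at hj1⟩
  invFun c := ⟨fun _ => c.castSucc, by
    intro i hi
    exact absurd hi (by simpa using c.isLt.ne)⟩
  left_inv α := by
    apply Subtype.ext; funext i
    have : i = 0 := Subsingleton.elim i 0
    subst this
    apply Fin.ext; simp
  right_inv c := by apply Fin.ext; simp

def equivRec (a m : ℕ) (ha : 1 ≤ a) :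
    MetallicVertex a (m+2) ≃ (Fin a × MetallicVertex a (m+1)) ⊕ MetallicVertex a m where
  toFun α :=
    if h : (α.1 (Fin.last (m+1)) : ℕ) = a then
      Sum.inr ⟨Fin.init (Fin.init α.1), ok_init (ok_init α.2)⟩
    else
      Sum.inl (⟨(α.1 (Fin.last (m+1)) : ℕ),
        lt_of_le_of_ne (Nat.lt_succ_iff.mp (α.1 (Fin.last (m+1))).isLt) h⟩,
        ⟨Fin.init α.1, ok_init α.2⟩)
  invFun x :=
    match x with
    | Sum.inl (c, β) => ⟨Fin.snoc β.1 c.castSucc,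
        ok_snoc_lt β.2 _ (by simpa using c.isLt.ne)⟩
    | Sum.inr γ => ⟨Fin.snoc (Fin.snoc γ.1 (0 : Fin (a+1))) ⟨a, Nat.lt_succ_self a⟩,
        ok_snoc_a (ok_snoc_lt γ.2 0 (by simpa using (Nat.one_le_iff_ne_zero.mp ha).symm))
          (by simp [Fin.snoc_last])⟩
  left_inv α := by
    by_cases h : (α.1 (Fin.last (m+1)) : ℕ) = a
    · simp only [h, dif_pos]
      apply Subtype.ext
      dsimp only
      funext i
      induction i using Fin.lastCases with
      | last =>
        rw [Fin.snoc_last]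
        exact (Fin.ext h).symm
      | cast k =>
        rw [Fin.snoc_castSucc]
        induction k using Fin.lastCases with
        | last =>
          rw [Fin.snoc_last]
          exact (Fin.ext (last_zero_of_a α.2 h)).symm
        | cast k' =>
          rw [Fin.snoc_castSucc]
          simp [Fin.init]
    · simp only [h, dif_neg, not_false_iff]
      apply Subtype.ext
      dsimp only
      funext i
      induction i using Fin.lastCases with
      | last =>
        rw [Fin.snoc_last]
        exact Fin.ext rfl
      | cast k =>
        rw [Fin.snoc_castSucc]
        simp [Fin.init]
  right_inv x := by
    match x with
    | Sum.inl (c, β) =>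
      have hlast : ((Fin.snoc β.1 c.castSucc : Fin (m+2) → Fin (a+1)) (Fin.last (m+1)) : ℕ) = (c : ℕ) := by
        simp [Fin.snoc_last]
      simp only [hlast, c.isLt.ne, dif_neg, not_false_iff]
      congr 1
      refine Prod.ext (Fin.ext (by simp [hlast])) (Subtype.ext ?_)
      simp [Fin.init_snoc]
    | Sum.inr γ =>
      have hlast : ((Fin.snoc (Fin.snoc γ.1 (0:Fin (a+1))) ⟨a, Nat.lt_succ_self a⟩ : Fin (m+2) → Fin (a+1)) (Fin.last (m+1)) : ℕ) = a := by
        simp [Fin.snoc_last]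
      simp only [hlast, dif_pos]
      congr 1
      exact Subtype.ext (by simp [Fin.init_snoc])

/-- `s^a_0 = 1`, `s^a_1 = a`, and `s^a_n = a·s^a_{n-1} + s^a_{n-2}` for `n ≥ 2`,
where `s^a_n` is the number of vertices of the metallic cube `Π^a_n`. -/
theorem metallic_card_recurrence (a : ℕ) (ha : 1 ≤ a) :
    Fintype.card (MetallicVertex a 0) = 1 ∧
    Fintype.card (MetallicVertex a 1) = a ∧
    ∀ n : ℕ, 2 ≤ n →
      Fintype.card (MetallicVertex a n) =
        a * Fintype.card (MetallicVertex a (n - 1)) +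
          Fintype.card (MetallicVertex a (n - 2)) := by
  refine ⟨?_, ?_, ?_⟩
  · rw [Fintype.card_eq_one_iff]
    exact ⟨⟨fun i => i.elim0, fun i => i.elim0⟩, fun y => Subtype.ext (funext fun i => i.elim0)⟩
  · rw [Fintype.card_congr (equivOne a), Fintype.card_fin]
  · intro n hn
    obtain ⟨m, rfl⟩ : ∃ m, n = m + 2 := ⟨n - 2, by omega⟩
    rw [Fintype.card_congr (equivRec a m ha)]
    simp [Fintype.card_sum, Fintype.card_prod, Fintype.card_fin]
end

section
/- For every integer a ≥ 1 and n ≥ 0, the number of vertices of the metallic cube Π^a_n equals Σ_{k=0}^{⌊n/2⌋} C(n−k, k) · a^{n−2k}. -/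
private def Scount (a n : ℕ) : ℕ := ∑ k ∈ Finset.range (n+1), Nat.choose (n-k) k * a^(n-2*k)

private lemma sum_eq_Scount (a n : ℕ) :
    ∑ k ∈ Finset.range (n/2+1), Nat.choose (n-k) k * a^(n-2*k) = Scount a n := by
  apply Finset.sum_subset
  · intro k hk
    simp only [Finset.mem_range] at *
    omega
  · intro k hk hk'
    simp only [Finset.mem_range, not_lt] at hk hk'
    have h : n - k < k := by omega
    simp [Nat.choose_eq_zero_of_lt h]

private lemma Scount_rec (a n : ℕ) :
    Scount a (n+2) = a * Scount a (n+1) + Scount a n := by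
  have h1 : Scount a (n+2)
      = ((∑ k ∈ Finset.range (n+2), Nat.choose (n-k) (k+1) * a^(n-2*k))
        + (∑ k ∈ Finset.range (n+2), Nat.choose (n-k) k * a^(n-2*k)))
        + a^(n+2) := by
    unfold Scount
    rw [Finset.sum_range_succ' _ (n+2)]
    simp only [Nat.sub_zero, Nat.choose_zero_right, one_mul, Nat.mul_zero]
    congr 1
    rw [← Finset.sum_add_distrib]
    apply Finset.sum_congr rfl
    intro k hk
    simp only [Finset.mem_range] at hk
    have he : n + 2 - 2*(k+1) = n - 2*k := by omega
    rw [he]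
    rcases le_or_gt k n with h | h
    · have h' : n + 2 - (k+1) = (n-k) + 1 := by omega
      rw [h', Nat.choose_succ_succ, add_mul, add_comm]
    · have e1 : n + 2 - (k+1) = 0 := by omega
      have e2 : n - k = 0 := by omega
      rw [e1, e2]
      simp
      exact Or.inl (Nat.choose_eq_zero_of_lt (by omega))
  have h2 : ∑ k ∈ Finset.range (n+2), Nat.choose (n-k) k * a^(n-2*k) = Scount a n := by
    unfold Scount
    rw [Finset.sum_range_succ]
    have e2 : n - (n+1) = 0 := by omega
    rw [e2, Nat.choose_eq_zero_of_lt (by omega)]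
    simp
  have h3 : a * Scount a (n+1)
      = (∑ k ∈ Finset.range (n+2), Nat.choose (n-k) (k+1) * a^(n-2*k)) + a^(n+2) := by
    unfold Scount
    rw [Finset.mul_sum]
    have hterm : ∀ k ∈ Finset.range (n+2),
        a * (Nat.choose (n+1-k) k * a^(n+1-2*k)) = Nat.choose (n+1-k) k * a^(n+2-2*k) := by
      intro k hk
      simp only [Finset.mem_range] at hk
      rcases le_or_gt (2*k) (n+1) with h | h
      · have : n+2-2*k = (n+1-2*k) + 1 := by omega
        rw [this, pow_succ]
        ring
      · have : n+1-k < k := by omega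
        rw [Nat.choose_eq_zero_of_lt this]
        ring
    rw [Finset.sum_congr rfl hterm, Finset.sum_range_succ' _ (n+1)]
    simp only [Nat.sub_zero, Nat.choose_zero_right, one_mul, Nat.mul_zero]
    congr 1
    · symm
      rw [Finset.sum_range_succ]
      have e2' : n - (n+1) = 0 := by omega
      rw [e2', Nat.choose_eq_zero_of_lt (by omega)]
      simp only [zero_mul, add_zero]
      apply Finset.sum_congr rfl
      intro k hk
      simp only [Finset.mem_range] at hk
      have e1 : n + 1 - (k+1) = n - k := by omega
      have e2 : n + 2 - 2*(k+1) = n - 2*k := by omega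
      rw [e1, e2]
  omega

private def stepEquiv (a n : ℕ) (ha : 1 ≤ a) :
    MetallicVertex a (n+2) ≃ (Fin a × MetallicVertex a (n+1)) ⊕ MetallicVertex a n where
  toFun α :=
    if h : (α.1 (Fin.last (n+1)) : ℕ) = a then
      Sum.inr ⟨fun i => α.1 ⟨i.1, by omega⟩, by
        intro i hi
        obtain ⟨j, hj1, hj0⟩ := α.2 ⟨i.1, by omega⟩ hi
        have hjlt : j.1 < n := by have := i.2; simp at hj1 ⊢; omega
        refine ⟨⟨j.1, hjlt⟩, by simp at hj1 ⊢; omega, ?_⟩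
        have hje : (⟨j.1, by omega⟩ : Fin (n+2)) = j := Fin.ext rfl
        simpa [hje] using hj0⟩
    else
      Sum.inl (⟨(α.1 (Fin.last (n+1)) : ℕ),
          by have := (α.1 (Fin.last (n+1))).2; omega⟩,
        ⟨fun i => α.1 ⟨i.1, by omega⟩, by
          intro i hi
          obtain ⟨j, hj1, hj0⟩ := α.2 ⟨i.1, by omega⟩ hi
          have hjlt : j.1 < n+1 := by have := i.2; simp at hj1 ⊢; omega
          refine ⟨⟨j.1, hjlt⟩, by simp at hj1 ⊢; omega, ?_⟩
          have hje : (⟨j.1, by omega⟩ : Fin (n+2)) = j := Fin.ext rfl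
          simpa [hje] using hj0⟩)
  invFun x :=
    match x with
    | Sum.inl (c, β) =>
      ⟨fun i => if h : i.1 < n+1 then β.1 ⟨i.1, h⟩ else ⟨c.1, by have := c.2; omega⟩, by
        intro i hi
        by_cases h : i.1 < n+1
        · simp only [dif_pos h] at hi
          obtain ⟨j, hj1, hj0⟩ := β.2 ⟨i.1, h⟩ hi
          refine ⟨⟨j.1, by omega⟩, by simpa using hj1, ?_⟩
          simp only [dif_pos (show j.1 < n+1 from j.2)]
          have hje : (⟨j.1, j.2⟩ : Fin (n+1)) = j := Fin.ext rfl
          simpa [hje] using hj0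
        · simp only [dif_neg h] at hi
          exact absurd hi (by have := c.2; simp; omega)⟩
    | Sum.inr β =>
      ⟨fun i => if h : i.1 < n then β.1 ⟨i.1, h⟩
          else if i.1 = n then ⟨0, by omega⟩ else ⟨a, by omega⟩, by
        intro i hi
        by_cases h : i.1 < n
        · simp only [dif_pos h] at hi
          obtain ⟨j, hj1, hj0⟩ := β.2 ⟨i.1, h⟩ hi
          refine ⟨⟨j.1, by omega⟩, by simpa using hj1, ?_⟩
          simp only [dif_pos (show j.1 < n from j.2)]
          have hje : (⟨j.1, j.2⟩ : Fin n) = j := Fin.ext rfl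
          simpa [hje] using hj0
        · simp only [dif_neg h] at hi
          by_cases h2 : i.1 = n
          · rw [if_pos h2] at hi
            exact absurd hi (by simp; omega)
          · rw [if_neg h2] at hi
            have hin : i.1 = n + 1 := by have := i.2; omega
            refine ⟨⟨n, by omega⟩, by simp [hin], ?_⟩
            simp only [dif_neg (show ¬(n < n) by omega), if_pos rfl]
            simp⟩
  left_inv α := by
    by_cases h : (α.1 (Fin.last (n+1)) : ℕ) = a
    · simp only [dif_pos h]
      apply Subtype.ext
      funext i
      apply Fin.ext
      by_cases h1 : i.1 < n
      · simp only [dif_pos h1]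
      · by_cases h2 : i.1 = n
        · simp only [dif_neg h1, if_pos h2]
          obtain ⟨j, hj1, hj0⟩ := α.2 (Fin.last (n+1)) h
          have hji : j = i := by apply Fin.ext; simp at hj1; omega
          rw [← hji]
          simpa using hj0.symm
        · simp only [dif_neg h1, if_neg h2]
          have : i = Fin.last (n+1) := by apply Fin.ext; have := i.2; simp; omega
          rw [this]
          simpa using h.symm
    · simp only [dif_neg h]
      apply Subtype.ext
      funext i
      apply Fin.ext
      by_cases h1 : i.1 < n+1
      · simp only [dif_pos h1]
      · simp only [dif_neg h1]
        have : i = Fin.last (n+1) := by apply Fin.ext; have := i.2; simp; omega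
        rw [this]
  right_inv x := by
    match x with
    | Sum.inl (c, β) =>
      have hlast : ((if h : (Fin.last (n+1)).1 < n+1 then β.1 ⟨(Fin.last (n+1)).1, h⟩
          else ⟨c.1, by have := c.2; omega⟩ : Fin (a+1)) : ℕ) = c.1 := by
        rw [dif_neg (by simp)]
      simp only [dif_neg (show ¬((if h : (Fin.last (n+1)).1 < n+1 then β.1 ⟨(Fin.last (n+1)).1, h⟩
          else ⟨c.1, by have := c.2; omega⟩ : Fin (a+1)) : ℕ) = a by rw [hlast]; have := c.2; omega)]
      congr 1
      refine Prod.ext ?_ ?_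
      · apply Fin.ext
        simpa using hlast
      · apply Subtype.ext
        funext i
        simp only [dif_pos (show (i.1 : ℕ) < n+1 from i.2)]
    | Sum.inr β =>
      have hlast : ((if h : (Fin.last (n+1)).1 < n then β.1 ⟨(Fin.last (n+1)).1, h⟩
          else if (Fin.last (n+1)).1 = n then ⟨0, by omega⟩ else ⟨a, by omega⟩ : Fin (a+1)) : ℕ) = a := by
        rw [dif_neg (by simp), if_neg (by simp)]
      simp only [dif_pos hlast]
      congr 1
      apply Subtype.ext
      funext i
      simp only [dif_pos (show (i.1 : ℕ) < n from i.2)]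


private lemma card_zero (a : ℕ) : Fintype.card (MetallicVertex a 0) = 1 := by
  rw [Fintype.card_eq_one_iff]
  refine ⟨⟨fun i => i.elim0, fun i => i.elim0⟩, ?_⟩
  intro y
  apply Subtype.ext
  funext i
  exact i.elim0

private def oneEquiv (a : ℕ) (ha : 1 ≤ a) : MetallicVertex a 1 ≃ Fin a where
  toFun α := ⟨(α.1 0 : ℕ), by
    have h1 := (α.1 0).2
    rcases Nat.lt_or_ge (α.1 0 : ℕ) a with h | h
    · exact h
    · have he : (α.1 0 : ℕ) = a := by omega
      obtain ⟨j, hj1, _⟩ := α.2 0 he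
      exact absurd hj1 (by have := j.2; omega)⟩
  invFun c := ⟨fun _ => ⟨c.1, by have := c.2; omega⟩, by
    intro i hi
    exact absurd hi (by have := c.2; simp; omega)⟩
  left_inv α := by
    apply Subtype.ext
    funext i
    apply Fin.ext
    have : i = 0 := Subsingleton.elim i 0
    rw [this]
  right_inv c := by apply Fin.ext; rfl

private lemma card_one (a : ℕ) (ha : 1 ≤ a) : Fintype.card (MetallicVertex a 1) = a := by
  rw [Fintype.card_congr (oneEquiv a ha), Fintype.card_fin]

private lemma card_step (a n : ℕ) (ha : 1 ≤ a) :
    Fintype.card (MetallicVertex a (n+2)) =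
      a * Fintype.card (MetallicVertex a (n+1)) + Fintype.card (MetallicVertex a n) := by
  rw [Fintype.card_congr (stepEquiv a n ha), Fintype.card_sum, Fintype.card_prod,
    Fintype.card_fin]

private lemma card_eq_Scount (a : ℕ) (ha : 1 ≤ a) :
    ∀ n, Fintype.card (MetallicVertex a n) = Scount a n := by
  intro n
  induction n using Nat.strong_induction_on with
  | _ n ih =>
    match n with
    | 0 =>
      rw [card_zero]
      simp [Scount]
    | 1 =>
      rw [card_one a ha]
      simp [Scount, Finset.sum_range_succ]
    | (m+2) =>
      rw [card_step a m ha, ih (m+1) (by omega), ih m (by omega), Scount_rec]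

/-- the number of vertices of `Π^a_n` equals
`Σ_{k=0}^{⌊n/2⌋} C(n−k, k) · a^{n−2k}`. -/
theorem metallic_card_formula (a n : ℕ) (ha : 1 ≤ a) :
    Fintype.card (MetallicVertex a n) =
      ∑ k ∈ Finset.range (n / 2 + 1), Nat.choose (n - k) k * a ^ (n - 2 * k) := by
  rw [sum_eq_Scount]
  exact card_eq_Scount a ha n
end

section
/- (Canonical decomposition) Let a ≥ 1 and n ≥ 2. The vertex set of the metallic cube Π^a_n is the disjoint union of the sets A_j = {jα : α a vertex of Π^a_{n−1}} for j = 0,1,…,a−1 and B = {0aβ : β a vertex of Π^a_{n−2}}; each A_j induces a subgraph of Π^a_n isomorphic to Π^a_{n−1} (via deleting the first letter), B induces a subgraph isomorphic to Π^a_{n−2} (via deleting the first two letters), and the union A_0 ∪ ⋯ ∪ A_{a−1} induces a subgraph isomorphic to the Cartesian product P_a □ Π^a_{n−1}, where P_a is the path on a vertices. -/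
/-! ### Auxiliary lemmas -/


lemma MetallicOK.head_ne {a n : ℕ} {v : Fin n → Fin (a+1)} (hv : MetallicOK a n v)
    (i : Fin n) (hi : (i : ℕ) = 0) : (v i : ℕ) ≠ a := by
  intro h
  obtain ⟨j, hj, -⟩ := hv i h
  omega

lemma MetallicOK.head_zero {a m : ℕ} {v : Fin (m+2) → Fin (a+1)} (hv : MetallicOK a (m+2) v)
    (h1 : (v ⟨1, by omega⟩ : ℕ) = a) : (v ⟨0, by omega⟩ : ℕ) = 0 := by
  obtain ⟨j, hj, hj0⟩ := hv ⟨1, by omega⟩ h1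
  have : j = ⟨0, by omega⟩ := by ext; simpa using hj
  rwa [this] at hj0

lemma ok_tail {a m : ℕ} {v : Fin (m+2) → Fin (a+1)} (hv : MetallicOK a (m+2) v)
    (h1 : (v ⟨1, by omega⟩ : ℕ) ≠ a) :
    MetallicOK a (m+1) (fun i : Fin (m+1) => v ⟨(i : ℕ) + 1, by have := i.isLt; omega⟩) := by
  intro i hi
  obtain ⟨j, hj, hj0⟩ := hv ⟨(i : ℕ) + 1, by have := i.isLt; omega⟩ hi
  simp only [Fin.val_mk] at hj
  rcases Nat.eq_zero_or_pos i.val with h0 | hpos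
  · exfalso
    apply h1
    have : (⟨(i : ℕ) + 1, by have := i.isLt; omega⟩ : Fin (m+2)) = ⟨1, by omega⟩ := by
      ext; simp [h0]
    rw [← this]; exact hi
  · refine ⟨⟨i.val - 1, by have := i.isLt; omega⟩, by simp; omega, ?_⟩
    have hje : (⟨(i : ℕ) - 1 + 1, by have := i.isLt; omega⟩ : Fin (m+2)) = j := by
      ext; simp; omega
    show (v ⟨(i : ℕ) - 1 + 1, by have := i.isLt; omega⟩ : ℕ) = 0
    rw [hje]
    exact hj0

lemma ok_consA {a m : ℕ} {β : Fin (m+1) → Fin (a+1)} (hβ : MetallicOK a (m+1) β)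
    {c : Fin (a+1)} (hc : (c : ℕ) ≠ a) :
    MetallicOK a (m+2) (Fin.cons c β) := by
  intro i hi
  induction i using Fin.cases with
  | zero => exact absurd hi hc
  | succ k =>
    obtain ⟨j, hj, hj0⟩ := hβ k hi
    exact ⟨j.succ, by simpa using hj, hj0⟩

lemma ok_tail2 {a m : ℕ} (ha : 1 ≤ a) {v : Fin (m+2) → Fin (a+1)} (hv : MetallicOK a (m+2) v)
    (h1 : (v ⟨1, by omega⟩ : ℕ) = a) :
    MetallicOK a m (fun i : Fin m => v ⟨(i : ℕ) + 2, by have := i.isLt; omega⟩) := by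
  intro i hi
  obtain ⟨j, hj, hj0⟩ := hv ⟨(i : ℕ) + 2, by have := i.isLt; omega⟩ hi
  simp only [Fin.val_mk] at hj
  rcases Nat.eq_zero_or_pos i.val with h0 | hpos
  · exfalso
    have hj1 : j = (⟨1, by omega⟩ : Fin (m+2)) := by ext; simp; omega
    rw [hj1, h1] at hj0
    omega
  · refine ⟨⟨i.val - 1, by have := i.isLt; omega⟩, by simp; omega, ?_⟩
    have hje : (⟨(i : ℕ) - 1 + 2, by have := i.isLt; omega⟩ : Fin (m+2)) = j := by
      ext; simp; omega
    show (v ⟨(i : ℕ) - 1 + 2, by have := i.isLt; omega⟩ : ℕ) = 0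
    rw [hje]
    exact hj0

lemma ok_cons2 {a m : ℕ} (ha : 1 ≤ a) {γ : Fin m → Fin (a+1)} (hγ : MetallicOK a m γ) :
    MetallicOK a (m+2)
      (Fin.cons ⟨0, by omega⟩ (Fin.cons ⟨a, by omega⟩ γ)) := by
  intro i hi
  induction i using Fin.cases with
  | zero => simp at hi; omega
  | succ k =>
    induction k using Fin.cases with
    | zero => exact ⟨⟨0, Nat.succ_pos _⟩, by simp, rfl⟩
    | succ l =>
      obtain ⟨j, hj, hj0⟩ := hγ l (by simpa using hi)
      refine ⟨j.succ.succ, by simpa using hj, ?_⟩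
      simpa using hj0

lemma dist_one_iff (x y : ℕ) : Nat.dist x y = 1 ↔ (x + 1 = y ∨ y + 1 = x) := by
  simp [Nat.dist]; omega

lemma sum_split1 {m : ℕ} (f : Fin (m+1) → ℕ) :
    (∑ i : Fin (m+1), f i)
      = f ⟨0, by omega⟩ + ∑ i : Fin m, f ⟨(i : ℕ) + 1, by have := i.isLt; omega⟩ := by
  rw [Fin.sum_univ_succ]; rfl

lemma sum_split2 {m : ℕ} (f : Fin (m+2) → ℕ) :
    (∑ i : Fin (m+2), f i)
      = f ⟨0, by omega⟩ + f ⟨1, by omega⟩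
        + ∑ i : Fin m, f ⟨(i : ℕ) + 2, by have := i.isLt; omega⟩ := by
  rw [Fin.sum_univ_succ, Fin.sum_univ_succ, ← add_assoc]; rfl

/-- canonical decomposition: for `n ≥ 2` the vertex set of `Π^a_n` is the
disjoint union of the sets `A_j` (vertices starting with the letter `j ≤ a−1`, not with the
block `0a`) and `B` (vertices starting with the block `0a`); each `A_j` induces a subgraph
isomorphic to `Π^a_{n−1}` via deleting the first letter, `B` induces a subgraph isomorphic
to `Π^a_{n−2}` via deleting the first two letters, and `A_0 ∪ ⋯ ∪ A_{a−1}` induces a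
subgraph isomorphic to `P_a □ Π^a_{n−1}`. -/
theorem metallic_canonical_decomposition (a n : ℕ) (ha : 1 ≤ a) (hn : 2 ≤ n)
    (A : Fin a → Set (MetallicVertex a n))
    (hA : ∀ (j : Fin a) (v : MetallicVertex a n),
      v ∈ A j ↔ ((v.1 ⟨0, by omega⟩ : ℕ) = (j : ℕ) ∧ (v.1 ⟨1, by omega⟩ : ℕ) ≠ a))
    (B : Set (MetallicVertex a n))
    (hB : ∀ v : MetallicVertex a n, v ∈ B ↔ (v.1 ⟨1, by omega⟩ : ℕ) = a) :
    (∀ v : MetallicVertex a n,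
      (v ∈ B ∧ ∀ j : Fin a, v ∉ A j) ∨ (v ∉ B ∧ ∃! j : Fin a, v ∈ A j)) ∧
    (∀ j : Fin a,
      ∃ e : (metallicCube a n).induce (A j) ≃g metallicCube a (n - 1),
        ∀ (v : A j) (i : Fin (n - 1)),
          ((e v).1 i : ℕ) = (v.1.1 ⟨(i : ℕ) + 1, by have := i.isLt; omega⟩ : ℕ)) ∧
    (∃ e : (metallicCube a n).induce B ≃g metallicCube a (n - 2),
      ∀ (v : B) (i : Fin (n - 2)),
        ((e v).1 i : ℕ) = (v.1.1 ⟨(i : ℕ) + 2, by have := i.isLt; omega⟩ : ℕ)) ∧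
    (∃ e : (metallicCube a n).induce (⋃ j : Fin a, A j) ≃g
        (SimpleGraph.pathGraph a).boxProd (metallicCube a (n - 1)),
      ∀ v : (⋃ j : Fin a, A j : Set (MetallicVertex a n)),
        (((e v).1 : ℕ) = (v.1.1 ⟨0, by omega⟩ : ℕ)) ∧
        ∀ i : Fin (n - 1),
          (((e v).2.1 i : ℕ)) = (v.1.1 ⟨(i : ℕ) + 1, by have := i.isLt; omega⟩ : ℕ)) := by
  obtain ⟨m, rfl⟩ : ∃ m, n = m + 2 := ⟨n - 2, by omega⟩
  refine ⟨?_, ?_, ?_, ?_⟩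
  · -- partition
    intro v
    by_cases hb : (v.1 ⟨1, by omega⟩ : ℕ) = a
    · exact Or.inl ⟨(hB v).mpr hb, fun j hj => ((hA j v).mp hj).2 hb⟩
    · refine Or.inr ⟨fun h => hb ((hB v).mp h), ?_⟩
      have hlt : (v.1 ⟨0, by omega⟩ : ℕ) < a := by
        have h1 := v.2.head_ne ⟨0, by omega⟩ rfl
        have h2 := (v.1 ⟨0, by omega⟩).isLt
        omega
      refine ⟨⟨(v.1 ⟨0, by omega⟩ : ℕ), hlt⟩, (hA _ v).mpr ⟨rfl, hb⟩, ?_⟩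
      intro j hj
      have := ((hA j v).mp hj).1
      ext
      simpa using this.symm
  · -- A j ≃ Π^a_{n-1}
    intro j
    show ∃ e : (metallicCube a (m+2)).induce (A j) ≃g metallicCube a (m+1),
      ∀ (v : A j) (i : Fin (m+1)),
        ((e v).1 i : ℕ) = (v.1.1 ⟨(i : ℕ) + 1, by have := i.isLt; omega⟩ : ℕ)
    refine ⟨⟨⟨fun v => ⟨fun i : Fin (m+1) => v.1.1 ⟨(i : ℕ) + 1, by have := i.isLt; omega⟩,
        ok_tail v.1.2 ((hA j v.1).mp v.2).2⟩,
      fun β => ⟨⟨Fin.cons ⟨(j : ℕ), by omega⟩ β.1,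
          ok_consA β.2 (by simp; have := j.isLt; omega)⟩,
        (hA j _).mpr ⟨rfl, β.2.head_ne ⟨0, by omega⟩ rfl⟩⟩, ?_, ?_⟩, ?_⟩, ?_⟩
    · intro v
      apply Subtype.ext; apply Subtype.ext
      funext i
      induction i using Fin.cases with
      | zero =>
        simp only [Fin.cons_zero]
        ext
        exact (((hA j v.1).mp v.2).1).symm
      | succ k => rfl
    · intro β
      apply Subtype.ext
      funext i
      induction i using Fin.cases with
      | zero => rfl
      | succ k => rfl
    · intro u v
      have key : (∑ i : Fin (m+2), Nat.dist (u.1.1 i : ℕ) (v.1.1 i : ℕ))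
          = ∑ i : Fin (m+1), Nat.dist
              (u.1.1 ⟨(i : ℕ) + 1, by have := i.isLt; omega⟩ : ℕ)
              (v.1.1 ⟨(i : ℕ) + 1, by have := i.isLt; omega⟩ : ℕ) := by
        rw [sum_split1 (fun i => Nat.dist (u.1.1 i : ℕ) (v.1.1 i : ℕ)),
          ((hA j u.1).mp u.2).1, ((hA j v.1).mp v.2).1, Nat.dist_self, zero_add]
      constructor
      · intro h
        exact key.trans h
      · intro h
        exact key.symm.trans h
    · intro v i
      rfl
  · -- B ≃ Π^a_{n-2}
    show ∃ e : (metallicCube a (m+2)).induce B ≃g metallicCube a m,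
      ∀ (v : B) (i : Fin m),
        ((e v).1 i : ℕ) = (v.1.1 ⟨(i : ℕ) + 2, by have := i.isLt; omega⟩ : ℕ)
    refine ⟨⟨⟨fun v => ⟨fun i : Fin m => v.1.1 ⟨(i : ℕ) + 2, by have := i.isLt; omega⟩,
        ok_tail2 ha v.1.2 ((hB v.1).mp v.2)⟩,
      fun γ => ⟨⟨Fin.cons ⟨0, by omega⟩ (Fin.cons ⟨a, by omega⟩ γ.1), ok_cons2 ha γ.2⟩,
        (hB _).mpr rfl⟩, ?_, ?_⟩, ?_⟩, ?_⟩
    · intro v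
      apply Subtype.ext; apply Subtype.ext
      funext i
      induction i using Fin.cases with
      | zero =>
        simp only [Fin.cons_zero]
        ext
        exact (v.1.2.head_zero ((hB v.1).mp v.2)).symm
      | succ k =>
        induction k using Fin.cases with
        | zero =>
          simp only [Fin.cons_succ, Fin.cons_zero]
          ext
          exact ((hB v.1).mp v.2).symm
        | succ l => rfl
    · intro γ
      apply Subtype.ext
      funext i
      rfl
    · intro u v
      have key : (∑ i : Fin (m+2), Nat.dist (u.1.1 i : ℕ) (v.1.1 i : ℕ))
          = ∑ i : Fin m, Nat.dist
              (u.1.1 ⟨(i : ℕ) + 2, by have := i.isLt; omega⟩ : ℕ)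
              (v.1.1 ⟨(i : ℕ) + 2, by have := i.isLt; omega⟩ : ℕ) := by
        rw [sum_split2 (fun i => Nat.dist (u.1.1 i : ℕ) (v.1.1 i : ℕ)),
          u.1.2.head_zero ((hB u.1).mp u.2), v.1.2.head_zero ((hB v.1).mp v.2),
          (hB u.1).mp u.2, (hB v.1).mp v.2, Nat.dist_self, Nat.dist_self, zero_add, zero_add]
      constructor
      · intro h
        exact key.trans h
      · intro h
        exact key.symm.trans h
    · intro v i
      rfl
  · -- union ≃ P_a □ Π^a_{n-1}
    have hmem : ∀ v : MetallicVertex a (m+2), v ∈ (⋃ j : Fin a, A j) ↔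
        (v.1 ⟨1, by omega⟩ : ℕ) ≠ a := by
      intro v
      rw [Set.mem_iUnion]
      constructor
      · rintro ⟨j, hj⟩
        exact ((hA j v).mp hj).2
      · intro h
        have hlt : (v.1 ⟨0, by omega⟩ : ℕ) < a := by
          have h1 := v.2.head_ne ⟨0, by omega⟩ rfl
          have h2 := (v.1 ⟨0, by omega⟩).isLt
          omega
        exact ⟨⟨_, hlt⟩, (hA _ v).mpr ⟨rfl, h⟩⟩
    have hlt : ∀ v : (⋃ j : Fin a, A j : Set (MetallicVertex a (m+2))),
        (v.1.1 ⟨0, by omega⟩ : ℕ) < a := by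
      intro v
      have h1 := v.1.2.head_ne ⟨0, by omega⟩ rfl
      have h2 := (v.1.1 ⟨0, by omega⟩).isLt
      omega
    show ∃ e : (metallicCube a (m+2)).induce (⋃ j : Fin a, A j) ≃g
        (SimpleGraph.pathGraph a).boxProd (metallicCube a (m+1)),
      ∀ v : (⋃ j : Fin a, A j : Set (MetallicVertex a (m+2))),
        (((e v).1 : ℕ) = (v.1.1 ⟨0, by omega⟩ : ℕ)) ∧
        ∀ i : Fin (m+1),
          (((e v).2.1 i : ℕ)) = (v.1.1 ⟨(i : ℕ) + 1, by have := i.isLt; omega⟩ : ℕ)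
    refine ⟨⟨⟨fun v => (⟨(v.1.1 ⟨0, by omega⟩ : ℕ), hlt v⟩,
        ⟨fun i : Fin (m+1) => v.1.1 ⟨(i : ℕ) + 1, by have := i.isLt; omega⟩,
          ok_tail v.1.2 ((hmem v.1).mp v.2)⟩),
      fun p => ⟨⟨Fin.cons ⟨(p.1 : ℕ), by have := p.1.isLt; omega⟩ p.2.1,
          ok_consA p.2.2 (by simp; have := p.1.isLt; omega)⟩,
        (hmem _).mpr (p.2.2.head_ne ⟨0, by omega⟩ rfl)⟩, ?_, ?_⟩, ?_⟩, ?_⟩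
    · intro v
      apply Subtype.ext; apply Subtype.ext
      funext i
      induction i using Fin.cases with
      | zero =>
        simp only [Fin.cons_zero]
        ext
        rfl
      | succ k => rfl
    · intro p
      refine Prod.ext ?_ ?_
      · ext
        rfl
      · apply Subtype.ext
        funext i
        rfl
    · intro u v
      refine Iff.trans SimpleGraph.boxProd_adj ?_
      show ((SimpleGraph.pathGraph a).Adj ⟨(u.1.1 ⟨0, by omega⟩ : ℕ), hlt u⟩
              ⟨(v.1.1 ⟨0, by omega⟩ : ℕ), hlt v⟩
            ∧ (⟨fun i : Fin (m+1) => u.1.1 ⟨(i : ℕ) + 1, by have := i.isLt; omega⟩,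
                ok_tail u.1.2 ((hmem u.1).mp u.2)⟩ : MetallicVertex a (m+1))
              = ⟨fun i : Fin (m+1) => v.1.1 ⟨(i : ℕ) + 1, by have := i.isLt; omega⟩,
                ok_tail v.1.2 ((hmem v.1).mp v.2)⟩)
          ∨ ((∑ i : Fin (m+1), Nat.dist
                (u.1.1 ⟨(i : ℕ) + 1, by have := i.isLt; omega⟩ : ℕ)
                (v.1.1 ⟨(i : ℕ) + 1, by have := i.isLt; omega⟩ : ℕ)) = 1
              ∧ (⟨(u.1.1 ⟨0, by omega⟩ : ℕ), hlt u⟩ : Fin a)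
                = ⟨(v.1.1 ⟨0, by omega⟩ : ℕ), hlt v⟩)
          ↔ (∑ i : Fin (m+2), Nat.dist (u.1.1 i : ℕ) (v.1.1 i : ℕ)) = 1
      have key : (∑ i : Fin (m+2), Nat.dist (u.1.1 i : ℕ) (v.1.1 i : ℕ))
          = Nat.dist (u.1.1 ⟨0, by omega⟩ : ℕ) (v.1.1 ⟨0, by omega⟩ : ℕ)
            + ∑ i : Fin (m+1), Nat.dist
              (u.1.1 ⟨(i : ℕ) + 1, by have := i.isLt; omega⟩ : ℕ)
              (v.1.1 ⟨(i : ℕ) + 1, by have := i.isLt; omega⟩ : ℕ) :=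
        sum_split1 (fun i => Nat.dist (u.1.1 i : ℕ) (v.1.1 i : ℕ))
      have htail : (⟨fun i : Fin (m+1) => u.1.1 ⟨(i : ℕ) + 1, by have := i.isLt; omega⟩,
            ok_tail u.1.2 ((hmem u.1).mp u.2)⟩ : MetallicVertex a (m+1))
          = ⟨fun i : Fin (m+1) => v.1.1 ⟨(i : ℕ) + 1, by have := i.isLt; omega⟩,
            ok_tail v.1.2 ((hmem v.1).mp v.2)⟩ ↔
          ∀ i : Fin (m+1), (u.1.1 ⟨(i : ℕ) + 1, by have := i.isLt; omega⟩ : ℕ)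
            = (v.1.1 ⟨(i : ℕ) + 1, by have := i.isLt; omega⟩ : ℕ) := by
        rw [Subtype.mk.injEq]
        constructor
        · intro h i
          exact congrArg Fin.val (congrFun h i)
        · intro h
          funext i
          exact Fin.val_injective (h i)
      rw [key]
      constructor
      · rintro (⟨hadj, heq⟩ | ⟨hS, heq⟩)
        · have hS : (∑ i : Fin (m+1), Nat.dist
              (u.1.1 ⟨(i : ℕ) + 1, by have := i.isLt; omega⟩ : ℕ)
              (v.1.1 ⟨(i : ℕ) + 1, by have := i.isLt; omega⟩ : ℕ)) = 0 :=
            Finset.sum_eq_zero fun i _ => by rw [htail.mp heq i, Nat.dist_self]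
          have hd : Nat.dist (u.1.1 ⟨0, by omega⟩ : ℕ) (v.1.1 ⟨0, by omega⟩ : ℕ) = 1 := by
            rw [dist_one_iff]
            have h' := SimpleGraph.pathGraph_adj.mp hadj
            exact h'
          omega
        · have hd : Nat.dist (u.1.1 ⟨0, by omega⟩ : ℕ) (v.1.1 ⟨0, by omega⟩ : ℕ) = 0 := by
            have h' := congrArg Fin.val heq
            have hh : (u.1.1 ⟨0, by omega⟩ : ℕ) = (v.1.1 ⟨0, by omega⟩ : ℕ) := h'
            rw [hh, Nat.dist_self]
          omega
      · intro h
        rcases Nat.lt_or_ge (Nat.dist (u.1.1 ⟨0, by omega⟩ : ℕ) (v.1.1 ⟨0, by omega⟩ : ℕ)) 1 with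
          h0 | h0
        · have hd0 : (u.1.1 ⟨0, by omega⟩ : ℕ) = (v.1.1 ⟨0, by omega⟩ : ℕ) :=
            Nat.eq_of_dist_eq_zero (by omega)
          exact Or.inr ⟨by omega, Fin.val_injective hd0⟩
        · have hd1 : Nat.dist (u.1.1 ⟨0, by omega⟩ : ℕ) (v.1.1 ⟨0, by omega⟩ : ℕ) = 1 := by
            omega
          refine Or.inl ⟨SimpleGraph.pathGraph_adj.mpr ((dist_one_iff _ _).mp hd1), ?_⟩
          rw [htail]
          intro i
          have hS : (∑ i : Fin (m+1), Nat.dist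
              (u.1.1 ⟨(i : ℕ) + 1, by have := i.isLt; omega⟩ : ℕ)
              (v.1.1 ⟨(i : ℕ) + 1, by have := i.isLt; omega⟩ : ℕ)) = 0 := by omega
          have := (Finset.sum_eq_zero_iff).mp hS i (Finset.mem_univ i)
          exact Nat.eq_of_dist_eq_zero this
    · intro v
      exact ⟨rfl, fun i => rfl⟩
end

section
/- Let a ≥ 1 and n ≥ 0. For each placement of k pairwise non-overlapping blocks 0a at fixed positions in a string of length n (0 ≤ k ≤ ⌊n/2⌋), the set of vertices of Π^a_n whose 0a-blocks occur exactly at those positions induces a subgraph isomorphic to the grid P_a^{n−2k} (the (n−2k)-fold Cartesian power of the path P_a on a vertices). There are C(n−k,k) such placements for each k, these vertex classes partition V(Π^a_n), and the total number of classes is the Fibonacci number F_{n+1}. In particular Π^a_n decomposes into F_{n+1} pairwise vertex-disjoint induced grids. -/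
/-- The grid `P_a^m`: the `m`-fold Cartesian power of the path on `a` vertices,
realized on strings of length `m` over `{0,…,a−1}` with adjacency `Σ_i |f_i − g_i| = 1`. -/
def gridGraph (a m : ℕ) : SimpleGraph (Fin m → Fin a) where
  Adj f g := (∑ i : Fin m, Nat.dist (f i : ℕ) (g i : ℕ)) = 1
  symm := by
    constructor
    intro f g h
    simpa [Nat.dist_comm] using h
  loopless := by
    constructor
    intro f h
    simp [Nat.dist_self] at h

/-- A placement of pairwise non-overlapping `0a`-blocks, recorded by the set `S` of
positions carrying the letter `a`: each such position is positive (the preceding position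
carries the `0` of the block) and two distinct block positions are at distance `≥ 2`. -/
def ValidPlacement (n : ℕ) (S : Finset (Fin n)) : Prop :=
  (∀ i ∈ S, 0 < (i : ℕ)) ∧
    ∀ i ∈ S, ∀ j ∈ S, i ≠ j → 2 ≤ Nat.dist (i : ℕ) (j : ℕ)

instance (n : ℕ) : DecidablePred (ValidPlacement n) := fun S => by
  unfold ValidPlacement; infer_instance


namespace MetallicAux
open Finset

/-- no two consecutive elements -/
def Spread (s : Finset ℕ) : Prop := ∀ x ∈ s, x + 1 ∉ s

instance : DecidablePred Spread := fun s => by unfold Spread; infer_instance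

def goodSets (n : ℕ) : Finset (Finset ℕ) := (Finset.Ico 1 n).powerset.filter Spread

def goodSetsK (n k : ℕ) : Finset (Finset ℕ) :=
  (Finset.Ico 1 n).powerset.filter (fun s => Spread s ∧ s.card = k)

lemma spread_iff (s : Finset ℕ) :
    Spread s ↔ ∀ x ∈ s, ∀ y ∈ s, x ≠ y → 2 ≤ Nat.dist x y := by
  constructor
  · intro h x hx y hy hxy
    by_contra hd
    have h1 : Nat.dist x y < 2 := by omega
    have h2 : y = x + 1 ∨ x = y + 1 := by
      simp [Nat.dist] at h1; omega
    rcases h2 with rfl | rfl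
    · exact h x hx hy
    · exact h y hy hx
  · intro h x hx hx1
    have := h x hx (x+1) hx1 (by omega)
    simp [Nat.dist] at this

lemma goodSets_zero : goodSets 0 = {∅} := by decide
lemma goodSets_one : goodSets 1 = {∅} := by decide

lemma mem_goodSets {n : ℕ} {s : Finset ℕ} :
    s ∈ goodSets n ↔ s ⊆ Finset.Ico 1 n ∧ Spread s := by
  simp [goodSets]

lemma filter_not_mem_goodSets (n : ℕ) :
    (goodSets (n+2)).filter (fun s => n+1 ∉ s) = goodSets (n+1) := by
  ext s
  simp only [mem_filter, mem_goodSets]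
  constructor
  · rintro ⟨⟨hsub, hsp⟩, hn⟩
    refine ⟨fun x hx => ?_, hsp⟩
    have := hsub hx
    simp only [mem_Ico] at this ⊢
    have : x ≠ n + 1 := fun h => hn (h ▸ hx)
    omega
  · rintro ⟨hsub, hsp⟩
    have hsub' : s ⊆ Finset.Ico 1 (n+2) := hsub.trans (by
      intro x; simp only [mem_Ico]; omega)
    refine ⟨⟨hsub', hsp⟩, fun h => ?_⟩
    have := hsub h; simp only [mem_Ico] at this; omega

lemma filter_mem_goodSets_card (n : ℕ) :
    ((goodSets (n+2)).filter (fun s => n+1 ∈ s)).card = (goodSets n).card := by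
  refine Finset.card_bij' (fun s _ => s.erase (n+1)) (fun t _ => insert (n+1) t) ?_ ?_ ?_ ?_
  · rintro s hs
    simp only [mem_filter, mem_goodSets] at hs
    obtain ⟨⟨hsub, hsp⟩, hn⟩ := hs
    rw [mem_goodSets]
    constructor
    · intro x hx
      rw [mem_erase] at hx
      have := hsub hx.2
      simp only [mem_Ico] at this ⊢
      have hxn : x ≠ n := by
        rintro rfl
        exact hsp x hx.2 (by simpa using hn)
      have := hx.1
      omega
    · intro x hx hx1
      exact hsp x (mem_erase.mp hx).2 (mem_erase.mp hx1).2
  · rintro t ht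
    rw [mem_goodSets] at ht
    obtain ⟨hsub, hsp⟩ := ht
    simp only [mem_filter, mem_goodSets]
    have hlt : ∀ x ∈ t, x < n := fun x hx => (mem_Ico.mp (hsub hx)).2
    refine ⟨⟨?_, ?_⟩, mem_insert_self _ _⟩
    · intro x hx
      rcases mem_insert.mp hx with rfl | hx
      · simp only [mem_Ico]; omega
      · have := hsub hx; simp only [mem_Ico] at this ⊢; omega
    · intro x hx hx1
      rcases mem_insert.mp hx with rfl | hx
      · rcases mem_insert.mp hx1 with h | h
        · omega
        · have := hlt _ h; omega
      · rcases mem_insert.mp hx1 with h | h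
        · have := hlt _ hx; omega
        · exact hsp x hx h
  · rintro s hs
    simp only [mem_filter] at hs
    exact Finset.insert_erase hs.2
  · rintro t ht
    rw [mem_goodSets] at ht
    apply Finset.erase_insert
    intro h
    have := (mem_Ico.mp (ht.1 h)).2; omega

lemma goodSets_rec (n : ℕ) :
    (goodSets (n+2)).card = (goodSets (n+1)).card + (goodSets n).card := by
  have hsplit := Finset.card_filter_add_card_filter_not
    (s := goodSets (n+2)) (p := fun s => n+1 ∈ s)
  rw [← filter_mem_goodSets_card n, ← filter_not_mem_goodSets n]
  omega

lemma goodSets_card (n : ℕ) : (goodSets n).card = Nat.fib (n+1) := by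
  induction n using Nat.strong_induction_on with
  | _ n ih =>
    match n with
    | 0 => simp [goodSets_zero]
    | 1 => simp [goodSets_one]
    | (m+2) =>
      rw [goodSets_rec, ih (m+1) (by omega), ih m (by omega)]
      calc Nat.fib (m+1+1) + Nat.fib (m+1)
          = Nat.fib (m+1) + Nat.fib (m+1+1) := Nat.add_comm _ _
        _ = Nat.fib (m+1+2) := (Nat.fib_add_two).symm
        _ = Nat.fib (m+2+1) := rfl

lemma mem_goodSetsK {n k : ℕ} {s : Finset ℕ} :
    s ∈ goodSetsK n k ↔ s ⊆ Finset.Ico 1 n ∧ Spread s ∧ s.card = k := by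
  simp [goodSetsK, and_assoc]

lemma goodSetsK_zero (n : ℕ) : (goodSetsK n 0).card = 1 := by
  have : goodSetsK n 0 = {∅} := by
    ext s
    simp only [mem_goodSetsK, Finset.mem_singleton, Finset.card_eq_zero]
    constructor
    · rintro ⟨-, -, rfl⟩; rfl
    · rintro rfl
      exact ⟨by simp, fun x hx => by simp at hx, rfl⟩
  simp [this]

lemma goodSetsK_small (n k : ℕ) (hn : n ≤ 1) : (goodSetsK n (k+1)).card = 0 := by
  rw [Finset.card_eq_zero]
  ext s
  simp only [mem_goodSetsK, Finset.notMem_empty, iff_false]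
  rintro ⟨hsub, -, hcard⟩
  have : s ⊆ Finset.Ico 1 1 := hsub.trans (by intro x; simp only [mem_Ico]; omega)
  simp only [Finset.Ico_self, Finset.subset_empty] at this
  subst this
  simp at hcard

lemma filter_not_mem_goodSetsK (n k : ℕ) :
    (goodSetsK (n+2) k).filter (fun s => n+1 ∉ s) = goodSetsK (n+1) k := by
  ext s
  simp only [mem_filter, mem_goodSetsK]
  constructor
  · rintro ⟨⟨hsub, hsp, hc⟩, hn⟩
    refine ⟨fun x hx => ?_, hsp, hc⟩
    have := hsub hx
    simp only [mem_Ico] at this ⊢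
    have : x ≠ n + 1 := fun h => hn (h ▸ hx)
    omega
  · rintro ⟨hsub, hsp, hc⟩
    refine ⟨⟨hsub.trans (by intro x; simp only [mem_Ico]; omega), hsp, hc⟩, fun h => ?_⟩
    have := hsub h; simp only [mem_Ico] at this; omega

lemma filter_mem_goodSetsK_card (n k : ℕ) :
    ((goodSetsK (n+2) (k+1)).filter (fun s => n+1 ∈ s)).card = (goodSetsK n k).card := by
  refine Finset.card_bij' (fun s _ => s.erase (n+1)) (fun t _ => insert (n+1) t) ?_ ?_ ?_ ?_
  · rintro s hs
    simp only [mem_filter, mem_goodSetsK] at hs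
    obtain ⟨⟨hsub, hsp, hc⟩, hn⟩ := hs
    rw [mem_goodSetsK]
    refine ⟨?_, ?_, ?_⟩
    · intro x hx
      rw [mem_erase] at hx
      have := hsub hx.2
      simp only [mem_Ico] at this ⊢
      have hxn : x ≠ n := by
        rintro rfl
        exact hsp x hx.2 (by simpa using hn)
      have := hx.1
      omega
    · intro x hx hx1
      exact hsp x (mem_erase.mp hx).2 (mem_erase.mp hx1).2
    · rw [Finset.card_erase_of_mem hn, hc]; omega
  · rintro t ht
    rw [mem_goodSetsK] at ht
    obtain ⟨hsub, hsp, hc⟩ := ht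
    simp only [mem_filter, mem_goodSetsK]
    have hlt : ∀ x ∈ t, x < n := fun x hx => (mem_Ico.mp (hsub hx)).2
    have hnot : n + 1 ∉ t := fun h => by have := hlt _ h; omega
    refine ⟨⟨?_, ?_, ?_⟩, mem_insert_self _ _⟩
    · intro x hx
      rcases mem_insert.mp hx with rfl | hx
      · simp only [mem_Ico]; omega
      · have := hsub hx; simp only [mem_Ico] at this ⊢; omega
    · intro x hx hx1
      rcases mem_insert.mp hx with rfl | hx
      · rcases mem_insert.mp hx1 with h | h
        · omega
        · have := hlt _ h; omega
      · rcases mem_insert.mp hx1 with h | h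
        · have := hlt _ hx; omega
        · exact hsp x hx h
    · rw [Finset.card_insert_of_notMem hnot, hc]
  · rintro s hs
    simp only [mem_filter] at hs
    exact Finset.insert_erase hs.2
  · rintro t ht
    rw [mem_goodSetsK] at ht
    apply Finset.erase_insert
    intro h
    have := (mem_Ico.mp (ht.1 h)).2; omega

lemma goodSetsK_rec (n k : ℕ) :
    (goodSetsK (n+2) (k+1)).card = (goodSetsK (n+1) (k+1)).card + (goodSetsK n k).card := by
  have hsplit := Finset.card_filter_add_card_filter_not
    (s := goodSetsK (n+2) (k+1)) (p := fun s => n+1 ∈ s)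
  rw [← filter_mem_goodSetsK_card n k, ← filter_not_mem_goodSetsK n (k+1)]
  omega

lemma goodSetsK_card (n k : ℕ) : (goodSetsK n k).card = Nat.choose (n - k) k := by
  induction n using Nat.strong_induction_on generalizing k with
  | _ n ih =>
    match n, k with
    | n, 0 => simp [goodSetsK_zero]
    | 0, (k+1) => rw [goodSetsK_small 0 k (by omega)]; simp
    | 1, (k+1) =>
        rw [goodSetsK_small 1 k (by omega)]
        rw [Nat.choose_eq_zero_of_lt (by omega)]
    | (m+2), (k+1) =>
        rw [goodSetsK_rec, ih (m+1) (by omega) (k+1), ih m (by omega) k]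
        rcases le_or_gt (k+1) (m+1) with h | h
        · have h1 : m + 2 - (k+1) = (m - k) + 1 := by omega
          have h2 : m + 1 - (k+1) = m - k := by omega
          rw [h1, h2, Nat.choose_succ_succ']
          omega
        · rw [Nat.choose_eq_zero_of_lt (by omega),
            Nat.choose_eq_zero_of_lt (by omega),
            Nat.choose_eq_zero_of_lt (by omega)]

lemma map_attachFin (n : ℕ) (t : Finset ℕ) (h : ∀ m ∈ t, m < n) :
    (t.attachFin h).map Fin.valEmbedding = t := by
  ext m
  simp only [Finset.mem_map, Finset.mem_attachFin, Fin.valEmbedding_apply]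
  constructor
  · rintro ⟨i, hi, rfl⟩; exact hi
  · intro hm; exact ⟨⟨m, h m hm⟩, hm, rfl⟩

lemma card_filter_fin (n : ℕ) (q : Finset ℕ → Prop) [DecidablePred q]
    (hq : ∀ s, q s → s ⊆ Finset.Ico 1 n) :
    (Finset.univ.filter fun S : Finset (Fin n) => q (S.map Fin.valEmbedding)).card
      = ((Finset.Ico 1 n).powerset.filter q).card := by
  refine Finset.card_bij' (fun S _ => S.map Fin.valEmbedding)
    (fun t ht => t.attachFin
      (fun m hm => (Finset.mem_Ico.mp (hq t (Finset.mem_filter.mp ht).2 hm)).2))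
    ?_ ?_ ?_ ?_
  · intro S hS
    have hS' : q (S.map Fin.valEmbedding) := (Finset.mem_filter.mp hS).2
    exact Finset.mem_filter.mpr ⟨Finset.mem_powerset.mpr (hq _ hS'), hS'⟩
  · intro t ht
    refine Finset.mem_filter.mpr ⟨Finset.mem_univ _, ?_⟩
    rw [map_attachFin]
    exact (Finset.mem_filter.mp ht).2
  · intro S hS
    ext i
    simp only [Finset.mem_attachFin, Finset.mem_map, Fin.valEmbedding_apply]
    constructor
    · rintro ⟨j, hj, hji⟩
      rwa [show j = i from Fin.val_injective hji] at hj
    · intro hi; exact ⟨i, hi, rfl⟩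
  · intro t ht
    exact map_attachFin n t _

lemma valid_iff (n : ℕ) (S : Finset (Fin n)) :
    ValidPlacement n S ↔
      (S.map Fin.valEmbedding ⊆ Finset.Ico 1 n ∧ Spread (S.map Fin.valEmbedding)) := by
  rw [show (Spread (S.map Fin.valEmbedding)) ↔ _ from spread_iff _]
  constructor
  · rintro ⟨h1, h2⟩
    constructor
    · intro m hm
      simp only [Finset.mem_map, Fin.valEmbedding_apply] at hm
      obtain ⟨i, hi, rfl⟩ := hm
      exact Finset.mem_Ico.mpr ⟨h1 i hi, i.isLt⟩
    · intro x hx y hy hxy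
      simp only [Finset.mem_map, Fin.valEmbedding_apply] at hx hy
      obtain ⟨i, hi, rfl⟩ := hx
      obtain ⟨j, hj, rfl⟩ := hy
      exact h2 i hi j hj (fun h => hxy (by rw [h]))
  · rintro ⟨h1, h2⟩
    constructor
    · intro i hi
      exact (Finset.mem_Ico.mp (h1 (Finset.mem_map_of_mem _ hi))).1
    · intro i hi j hj hij
      exact h2 _ (Finset.mem_map_of_mem _ hi) _ (Finset.mem_map_of_mem _ hj)
        (fun h => hij (Fin.val_injective h))

lemma count_valid (n : ℕ) :
    (Finset.univ.filter fun S : Finset (Fin n) => ValidPlacement n S).card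
      = Nat.fib (n+1) := by
  rw [← goodSets_card]
  have h1 : (Finset.univ.filter fun S : Finset (Fin n) => ValidPlacement n S)
      = Finset.univ.filter fun S : Finset (Fin n) =>
          (S.map Fin.valEmbedding ⊆ Finset.Ico 1 n ∧ Spread (S.map Fin.valEmbedding)) := by
    apply Finset.filter_congr
    intro S _
    exact valid_iff n S
  rw [h1]
  have h2 := card_filter_fin n (fun t => t ⊆ Finset.Ico 1 n ∧ Spread t)
    (fun s hs => hs.1)
  have h3 : ((Finset.Ico 1 n).powerset.filter
      (fun t => t ⊆ Finset.Ico 1 n ∧ Spread t)) = goodSets n := by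
    ext t
    simp only [goodSets, Finset.mem_filter, Finset.mem_powerset]
    tauto
  exact h2.trans (by rw [h3])

lemma count_validK (n k : ℕ) :
    (Finset.univ.filter fun S : Finset (Fin n) =>
      ValidPlacement n S ∧ S.card = k).card = Nat.choose (n - k) k := by
  rw [← goodSetsK_card]
  have h1 : (Finset.univ.filter fun S : Finset (Fin n) =>
        ValidPlacement n S ∧ S.card = k)
      = Finset.univ.filter fun S : Finset (Fin n) =>
          ((S.map Fin.valEmbedding ⊆ Finset.Ico 1 n ∧ Spread (S.map Fin.valEmbedding))
            ∧ (S.map Fin.valEmbedding).card = k) := by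
    apply Finset.filter_congr
    intro S _
    rw [Finset.card_map]
    exact and_congr_left' (valid_iff n S)
  rw [h1]
  have h2 := card_filter_fin n
    (fun t => (t ⊆ Finset.Ico 1 n ∧ Spread t) ∧ t.card = k) (fun s hs => hs.1.1)
  have h3 : ((Finset.Ico 1 n).powerset.filter
      (fun t => (t ⊆ Finset.Ico 1 n ∧ Spread t) ∧ t.card = k)) = goodSetsK n k := by
    ext t
    simp only [goodSetsK, Finset.mem_filter, Finset.mem_powerset]
    tauto
  exact h2.trans (by rw [h3])

lemma exists_unique_placement (a n : ℕ) (ha : 1 ≤ a) (v : MetallicVertex a n) :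
    ∃! S : Finset (Fin n),
      ValidPlacement n S ∧ ∀ i : Fin n, (v.1 i : ℕ) = a ↔ i ∈ S := by
  classical
  refine ⟨Finset.univ.filter (fun i => (v.1 i : ℕ) = a), ⟨⟨?_, ?_⟩, ?_⟩, ?_⟩
  · intro i hi
    obtain ⟨j, hj1, _⟩ := v.2 i (Finset.mem_filter.mp hi).2
    omega
  · intro i hi j hj hij
    have hia : (v.1 i : ℕ) = a := (Finset.mem_filter.mp hi).2
    have hja : (v.1 j : ℕ) = a := (Finset.mem_filter.mp hj).2
    by_contra hd
    have hne : (i : ℕ) ≠ (j : ℕ) := fun h => hij (Fin.val_injective h)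
    have h1 : (j : ℕ) + 1 = (i : ℕ) ∨ (i : ℕ) + 1 = (j : ℕ) := by
      simp only [Nat.dist] at hd; omega
    rcases h1 with h1 | h1
    · obtain ⟨j', hj'1, hj'0⟩ := v.2 i hia
      have : j' = j := Fin.val_injective (by omega)
      rw [this, hja] at hj'0; omega
    · obtain ⟨j', hj'1, hj'0⟩ := v.2 j hja
      have : j' = i := Fin.val_injective (by omega)
      rw [this, hia] at hj'0; omega
  · intro i
    simp
  · rintro S ⟨-, hiff⟩
    ext i
    simp only [Finset.mem_filter, Finset.mem_univ, true_and]
    exact (hiff i).symm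

lemma grid_iso (a n : ℕ) (ha : 1 ≤ a) (S : Finset (Fin n)) (hS : ValidPlacement n S) :
    Nonempty ((metallicCube a n).induce {v | ∀ i : Fin n, (v.1 i : ℕ) = a ↔ i ∈ S}
      ≃g gridGraph a (n - 2 * S.card)) := by
  classical
  obtain ⟨hpos, hdist⟩ := hS
  set m := n - 2 * S.card with hm
  -- predecessor map
  have hplt : ∀ i : Fin n, (i : ℕ) - 1 < n := fun i => by have := i.isLt; omega
  set pd : Fin n → Fin n := fun i => ⟨(i : ℕ) - 1, hplt i⟩ with hpd
  set P : Finset (Fin n) := S.image pd with hP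
  set T : Finset (Fin n) := (S ∪ P)ᶜ with hT
  have hPmem : ∀ {i : Fin n}, i ∈ P → ∃ j ∈ S, (i : ℕ) + 1 = (j : ℕ) := by
    intro i hi
    obtain ⟨j, hj, rfl⟩ := Finset.mem_image.mp hi
    exact ⟨j, hj, by have := hpos j hj; simp [hpd]; omega⟩
  have hSP : Disjoint S P := by
    rw [Finset.disjoint_left]
    intro i hiS hiP
    obtain ⟨j, hjS, hij⟩ := hPmem hiP
    have hne : i ≠ j := fun h => by rw [h] at hij; omega
    have := hdist i hiS j hjS hne
    simp only [Nat.dist] at this; omega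
  have hPcard : P.card = S.card := by
    rw [hP]
    apply Finset.card_image_of_injOn
    intro i hi j hj hij
    have hi1 := hpos i hi
    have hj1 := hpos j hj
    have : (i : ℕ) - 1 = (j : ℕ) - 1 := congrArg Fin.val hij
    exact Fin.val_injective (by omega)
  have hTcard : T.card = m := by
    rw [hT, Finset.card_compl, Finset.card_union_of_disjoint hSP, hPcard,
      Fintype.card_fin]
    omega
  set e : Fin m ≃o {x // x ∈ T} := T.orderIsoOfFin hTcard with he
  have heT : ∀ j : Fin m, ((e j : Fin n)) ∈ T := fun j => (e j).2
  have hTnotS : ∀ {i : Fin n}, i ∈ T → i ∉ S := by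
    intro i hi hiS
    simp only [hT, Finset.mem_compl, Finset.mem_union] at hi
    exact hi (Or.inl hiS)
  have hTnotP : ∀ {i : Fin n}, i ∈ T → i ∉ P := by
    intro i hi hiP
    simp only [hT, Finset.mem_compl, Finset.mem_union] at hi
    exact hi (Or.inr hiP)
  -- values off S in a class vertex
  have hlta : ∀ (w : MetallicVertex a n),
      (∀ i : Fin n, (w.1 i : ℕ) = a ↔ i ∈ S) → ∀ i : Fin n, i ∉ S → (w.1 i : ℕ) < a := by
    intro w hw i hiS
    have h1 : (w.1 i : ℕ) ≠ a := fun h => hiS ((hw i).mp h)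
    have h2 := (w.1 i).isLt
    omega
  have hzero : ∀ (w : MetallicVertex a n),
      (∀ i : Fin n, (w.1 i : ℕ) = a ↔ i ∈ S) → ∀ i : Fin n, i ∈ P → (w.1 i : ℕ) = 0 := by
    intro w hw i hiP
    obtain ⟨j, hjS, hij⟩ := hPmem hiP
    obtain ⟨j', hj'1, hj'0⟩ := w.2 j ((hw j).mpr hjS)
    have : j' = i := Fin.val_injective (by omega)
    rwa [this] at hj'0
  have hTPS : ∀ i : Fin n, i ∉ T → i ∉ S → i ∈ P := by
    intro i hiT hiS
    simp only [hT, Finset.mem_compl, Finset.mem_union, not_not] at hiT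
    tauto
  -- forward map
  set Cl : Set (MetallicVertex a n) := {v | ∀ i : Fin n, (v.1 i : ℕ) = a ↔ i ∈ S} with hCl
  set F : Cl → (Fin m → Fin a) :=
    fun w j => ⟨(w.1.1 (e j) : ℕ), hlta w.1 w.2 (e j) (hTnotS (heT j))⟩ with hF
  -- backward map
  set bk : (Fin m → Fin a) → (Fin n → Fin (a + 1)) := fun f i =>
    if h : i ∈ T then ⟨(f (e.symm ⟨i, h⟩) : ℕ), by have := (f (e.symm ⟨i, h⟩)).isLt; omega⟩
    else if i ∈ S then ⟨a, Nat.lt_succ_self a⟩ else ⟨0, by omega⟩ with hbk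
  have hbkT : ∀ (f) (i : Fin n) (h : i ∈ T), (bk f i : ℕ) = (f (e.symm ⟨i, h⟩) : ℕ) := by
    intro f i h; simp [hbk, h]
  have hbkS : ∀ (f) (i : Fin n), i ∈ S → (bk f i : ℕ) = a := by
    intro f i h
    have hiT : i ∉ T := fun h' => hTnotS h' h
    simp [hbk, hiT, h]
  have hbkP : ∀ (f) (i : Fin n), i ∉ T → i ∉ S → (bk f i : ℕ) = 0 := by
    intro f i h1 h2
    simp [hbk, h1, h2]
  have hbka : ∀ (f) (i : Fin n), (bk f i : ℕ) = a ↔ i ∈ S := by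
    intro f i
    constructor
    · intro hia
      by_contra hiS
      by_cases hiT : i ∈ T
      · rw [hbkT f i hiT] at hia
        have := (f (e.symm ⟨i, hiT⟩)).isLt; omega
      · rw [hbkP f i hiT hiS] at hia; omega
    · intro h; exact hbkS f i h
  have hbkOK : ∀ f, MetallicOK a n (bk f) := by
    intro f i hia
    have hiS : i ∈ S := (hbka f i).mp hia
    have hipos := hpos i hiS
    have hpdP : pd i ∈ P := Finset.mem_image_of_mem pd hiS
    have h1 : pd i ∉ T := fun h => hTnotP h hpdP
    have h2 : pd i ∉ S := fun h => (Finset.disjoint_left.mp hSP h) hpdP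
    exact ⟨pd i, by simp [hpd]; omega, hbkP f (pd i) h1 h2⟩
  -- the sum identity
  have hsum : ∀ u v : Cl,
      (∑ i : Fin n, Nat.dist (u.1.1 i : ℕ) (v.1.1 i : ℕ))
        = ∑ j : Fin m, Nat.dist (u.1.1 (e j) : ℕ) (v.1.1 (e j) : ℕ) := by
    intro u v
    have h1 : (∑ i ∈ T, Nat.dist (u.1.1 i : ℕ) (v.1.1 i : ℕ))
        = ∑ i : Fin n, Nat.dist (u.1.1 i : ℕ) (v.1.1 i : ℕ) := by
      apply Finset.sum_subset (Finset.subset_univ T)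
      intro i _ hiT
      by_cases hiS : i ∈ S
      · rw [(u.2 i).mpr hiS, (v.2 i).mpr hiS, Nat.dist_self]
      · have hiP := hTPS i hiT hiS
        rw [hzero u.1 u.2 i hiP, hzero v.1 v.2 i hiP, Nat.dist_self]
    rw [← h1]
    rw [← Finset.sum_coe_sort T (fun i => Nat.dist (u.1.1 i : ℕ) (v.1.1 i : ℕ))]
    exact (Equiv.sum_comp e.toEquiv
      (fun x : {x // x ∈ T} => Nat.dist (u.1.1 x : ℕ) (v.1.1 x : ℕ))).symm
  -- assemble
  refine ⟨⟨⟨F, ?_, ?_, ?_⟩, ?_⟩⟩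
  · -- inverse function
    intro f
    exact ⟨⟨bk f, hbkOK f⟩, fun i => hbka f i⟩
  · -- left inverse
    intro w
    apply Subtype.ext
    apply Subtype.ext
    funext i
    apply Fin.val_injective
    by_cases hiT : i ∈ T
    · rw [hbkT (F w) i hiT]
      show ((F w) (e.symm ⟨i, hiT⟩) : ℕ) = _
      simp only [hF]
      have h5 : e (e.symm ⟨i, hiT⟩) = ⟨i, hiT⟩ := e.apply_symm_apply _
      rw [h5]
    · by_cases hiS : i ∈ S
      · rw [hbkS (F w) i hiS, (w.2 i).mpr hiS]
      · rw [hbkP (F w) i hiT hiS, hzero w.1 w.2 i (hTPS i hiT hiS)]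
  · -- right inverse
    intro f
    funext j
    apply Fin.val_injective
    show (bk f (e j) : ℕ) = (f j : ℕ)
    rw [hbkT f (e j) (heT j)]
    congr 2
    have : (⟨(e j : Fin n), heT j⟩ : {x // x ∈ T}) = e j := Subtype.ext rfl
    rw [this, e.symm_apply_apply]
  · -- adjacency
    intro u v
    show (∑ j : Fin m, Nat.dist ((F u) j : ℕ) ((F v) j : ℕ)) = 1 ↔ _
    have : (∑ j : Fin m, Nat.dist ((F u) j : ℕ) ((F v) j : ℕ))
        = ∑ j : Fin m, Nat.dist (u.1.1 (e j) : ℕ) (v.1.1 (e j) : ℕ) := rfl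
    rw [this, ← hsum u v]
    exact Iff.rfl

end MetallicAux

/-- the vertex classes of `Π^a_n` given by the exact positions of the
`0a`-blocks induce grids `P_a^{n−2k}`; for each `k ≤ ⌊n/2⌋` there are `C(n−k,k)`
placements of `k` blocks, the classes partition the vertex set, and the total number of
classes is the Fibonacci number `F_{n+1}`. -/
theorem metallic_grid_decomposition (a n : ℕ) (ha : 1 ≤ a) :
    (∀ S : Finset (Fin n), ValidPlacement n S →
      Nonempty ((metallicCube a n).induce {v | ∀ i : Fin n, (v.1 i : ℕ) = a ↔ i ∈ S}
        ≃g gridGraph a (n - 2 * S.card))) ∧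
    (∀ k : ℕ, k ≤ n / 2 →
      (Finset.univ.filter fun S : Finset (Fin n) =>
        ValidPlacement n S ∧ S.card = k).card = Nat.choose (n - k) k) ∧
    (∀ v : MetallicVertex a n, ∃! S : Finset (Fin n),
      ValidPlacement n S ∧ ∀ i : Fin n, (v.1 i : ℕ) = a ↔ i ∈ S) ∧
    (Finset.univ.filter fun S : Finset (Fin n) =>
      ValidPlacement n S).card = Nat.fib (n + 1) :=
  ⟨fun S hS => MetallicAux.grid_iso a n ha S hS,
    fun k _ => MetallicAux.count_validK n k,
    fun v => MetallicAux.exists_unique_placement a n ha v,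
    MetallicAux.count_valid n⟩
end

section
/- Let a ≥ 1 and n ≥ 1, and let ρ map each vertex α_1⋯α_n of Π^a_n to the binary string b_1⋯b_n where b_i = 1 if α_i = a and b_i = 0 otherwise. Then the quotient graph Π^a_n/ρ — whose vertices are the images ρ(v) for v ∈ V(Π^a_n), with two distinct images w_1, w_2 adjacent if and only if some vertex in ρ^{−1}(w_1) is adjacent in Π^a_n to some vertex in ρ^{−1}(w_2) — is isomorphic to the Fibonacci cube Γ_{n−1}. -/
/-- Binary strings of length `m` with no two consecutive 1s. -/
def FibOK (m : ℕ) (b : Fin m → Bool) : Prop :=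
  ∀ i j : Fin m, (j : ℕ) + 1 = (i : ℕ) → ¬(b i = true ∧ b j = true)

instance (m : ℕ) : DecidablePred (FibOK m) := fun b => by
  unfold FibOK; infer_instance

abbrev FibVertex (m : ℕ) : Type := {b : Fin m → Bool // FibOK m b}

/-- The Fibonacci cube `Γ_m`: two strings are adjacent iff they differ in exactly
one position. -/
def fibCube (m : ℕ) : SimpleGraph (FibVertex m) where
  Adj u v := (Finset.univ.filter fun i => u.1 i ≠ v.1 i).card = 1
  symm := by
    constructor
    intro u v h
    simpa [ne_comm] using h
  loopless := by
    constructor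
    intro u h
    simp at h

/-- The map `ρ` sending a vertex of `Π^a_n` to the binary string marking the
positions of the letter `a`. -/
def rho (a n : ℕ) (v : MetallicVertex a n) : Fin n → Bool :=
  fun i => decide ((v.1 i : ℕ) = a)

/-- The quotient graph `Π^a_n/ρ`: vertices are the images of `ρ`, and two distinct
images are adjacent iff some preimage of one is adjacent to some preimage of the other. -/
def metallicQuotient (a n : ℕ) :
    SimpleGraph {w : Fin n → Bool // ∃ v : MetallicVertex a n, rho a n v = w} where
  Adj w₁ w₂ := w₁ ≠ w₂ ∧ ∃ u v : MetallicVertex a n,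
    rho a n u = w₁.1 ∧ rho a n v = w₂.1 ∧ (metallicCube a n).Adj u v
  symm := by
    constructor
    rintro w₁ w₂ ⟨hne, u, v, hu, hv, hadj⟩
    exact ⟨hne.symm, v, u, hv, hu, hadj.symm⟩
  loopless := by
    constructor
    rintro w ⟨hne, -⟩
    exact hne rfl

namespace MetallicAux

/-- Characterization of the image of `rho`. -/
def GoodW (n : ℕ) (w : Fin n → Bool) : Prop :=
  FibOK n w ∧ ∀ j : Fin n, (j : ℕ) = 0 → w j = false

lemma goodW_of_rho {a n : ℕ} (ha : 1 ≤ a) (v : MetallicVertex a n) :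
    GoodW n (rho a n v) := by
  constructor
  · intro i j hji h
    obtain ⟨hi, hj⟩ := h
    simp only [rho, decide_eq_true_eq] at hi hj
    obtain ⟨j', hj', hz⟩ := v.2 i hi
    have hesteq : j' = j := Fin.ext (by omega)
    subst hesteq
    omega
  · intro j hj
    simp only [rho, decide_eq_false_iff_not]
    intro hw
    obtain ⟨j', hj', _⟩ := v.2 j hw
    omega

def lift (a n : ℕ) (w : Fin n → Bool) : Fin n → Fin (a + 1) :=
  fun i => if w i then ⟨a, Nat.lt_succ_self a⟩ else 0

lemma lift_ok {a n : ℕ} (ha : 1 ≤ a) {w : Fin n → Bool} (hg : GoodW n w) :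
    MetallicOK a n (lift a n w) := by
  intro i hi
  by_cases h : w i = true
  · have hi0 : (i : ℕ) ≠ 0 := fun h0 => by simp [hg.2 i h0] at h
    have hlt : (i : ℕ) - 1 < n := by have := i.isLt; omega
    refine ⟨⟨(i : ℕ) - 1, hlt⟩, show (i:ℕ) - 1 + 1 = (i:ℕ) by omega, ?_⟩
    have hwj : w ⟨(i : ℕ) - 1, hlt⟩ = false := by
      by_contra hc
      exact hg.1 i ⟨(i : ℕ) - 1, hlt⟩ (by simp; omega) ⟨h, by simpa using hc⟩
    simp [lift, hwj]
  · simp only [lift, if_neg h] at hi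
    simp at hi
    omega

lemma rho_lift {a n : ℕ} (ha : 1 ≤ a) {w : Fin n → Bool} (hg : GoodW n w) :
    rho a n ⟨lift a n w, lift_ok ha hg⟩ = w := by
  funext i
  simp only [rho, lift]
  by_cases h : w i = true <;> simp [h] <;> omega

lemma adj_unique {a n : ℕ} {u v : MetallicVertex a n} (h : (metallicCube a n).Adj u v) :
    ∃ i : Fin n, Nat.dist (u.1 i : ℕ) (v.1 i : ℕ) = 1 ∧ ∀ j, j ≠ i → u.1 j = v.1 j := by
  have h' : (∑ i : Fin n, Nat.dist (u.1 i : ℕ) (v.1 i : ℕ)) = 1 := h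
  obtain ⟨i, -, hi⟩ := Finset.exists_ne_zero_of_sum_ne_zero (s := Finset.univ)
    (f := fun i : Fin n => Nat.dist (u.1 i : ℕ) (v.1 i : ℕ)) (by rw [h']; exact one_ne_zero)
  rw [← Finset.add_sum_erase _ _ (Finset.mem_univ i)] at h'
  have h0 : ∑ j ∈ Finset.univ.erase i, Nat.dist (u.1 j : ℕ) (v.1 j : ℕ) = 0 := by omega
  refine ⟨i, by omega, fun j hj => ?_⟩
  rw [Finset.sum_eq_zero_iff] at h0
  have hd := h0 j (Finset.mem_erase.mpr ⟨hj, Finset.mem_univ j⟩)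
  exact Fin.ext (Nat.eq_of_dist_eq_zero hd)

lemma exists_adj {a n : ℕ} (ha : 1 ≤ a) (w₁ w₂ : Fin n → Bool)
    (hg₁ : GoodW n w₁) (hg₂ : GoodW n w₂)
    (i : Fin n) (hi1 : w₁ i = true) (hi2 : w₂ i = false)
    (hj : ∀ j, j ≠ i → w₁ j = w₂ j) :
    ∃ u v : MetallicVertex a n, rho a n u = w₁ ∧ rho a n v = w₂ ∧
      (metallicCube a n).Adj u v := by
  set vf : Fin n → Fin (a + 1) :=
    fun j => if j = i then ⟨a - 1, by omega⟩ else lift a n w₂ j with hvf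
  have hvok : MetallicOK a n vf := by
    intro j hja
    by_cases hji : j = i
    · simp only [hvf, if_pos hji] at hja
      exact absurd (hja : a - 1 = a) (by omega)
    · simp only [hvf, if_neg hji] at hja
      obtain ⟨j', hj', hz⟩ := lift_ok ha hg₂ j hja
      refine ⟨j', hj', ?_⟩
      have hj'i : j' ≠ i := by
        intro he
        subst he
        -- then j = j' + 1 and w₁ j = w₂ j = true, w₁ j' = true : contradiction with FibOK w₁
        have hw2j : w₂ j = true := by
          by_contra hc
          simp only [lift, if_neg hc] at hja
          simp only [Fin.val_zero] at hja; omega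
        have hw1j : w₁ j = true := by rw [hj j hji]; exact hw2j
        exact hg₁.1 j j' hj' ⟨hw1j, hi1⟩
      simp only [hvf, if_neg hj'i]
      exact hz
  refine ⟨⟨lift a n w₁, lift_ok ha hg₁⟩, ⟨vf, hvok⟩, rho_lift ha hg₁, ?_, ?_⟩
  · funext j
    by_cases hji : j = i
    · subst hji
      simp only [rho, hvf, if_pos rfl, hi2]
      show decide (a - 1 = a) = false
      simp; omega
    · have : rho a n ⟨lift a n w₂, lift_ok ha hg₂⟩ j = w₂ j := by rw [rho_lift ha hg₂]
      simpa only [rho, hvf, if_neg hji] using this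
  · show (∑ k : Fin n, Nat.dist ((lift a n w₁) k : ℕ) (vf k : ℕ)) = 1
    rw [Finset.sum_eq_single_of_mem i (Finset.mem_univ i)]
    · simp only [lift, if_pos hi1, hvf, if_pos rfl]
      show Nat.dist a (a - 1) = 1
      unfold Nat.dist; omega
    · intro j _ hji
      have : (lift a n w₁) j = vf j := by
        simp only [hvf, if_neg hji, lift, hj j hji]
      rw [this, Nat.dist_self]


def upFun (n : ℕ) (b : Fin (n - 1) → Bool) : Fin n → Bool :=
  fun i => if h : (i : ℕ) = 0 then false
    else b ⟨(i : ℕ) - 1, by have := i.isLt; omega⟩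

lemma goodW_up (n : ℕ) (b : FibVertex (n - 1)) : GoodW n (upFun n b.1) := by
  constructor
  · intro i j hji h
    obtain ⟨hi, hj⟩ := h
    have hi0 : (i : ℕ) ≠ 0 := by omega
    rw [upFun, dif_neg hi0] at hi
    by_cases hj0 : (j : ℕ) = 0
    · rw [upFun, dif_pos hj0] at hj
      exact Bool.false_ne_true hj
    · rw [upFun, dif_neg hj0] at hj
      have hlt : (j : ℕ) - 1 < n - 1 := by have := i.isLt; omega
      exact b.2 ⟨(i : ℕ) - 1, by have := i.isLt; omega⟩ ⟨(j : ℕ) - 1, hlt⟩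
        (by simp; omega) ⟨hi, hj⟩
  · intro j hj
    rw [upFun, dif_pos hj]

lemma up_exists {a n : ℕ} (ha : 1 ≤ a) (b : FibVertex (n - 1)) :
    ∃ v : MetallicVertex a n, rho a n v = upFun n b.1 :=
  ⟨⟨lift a n (upFun n b.1), lift_ok ha (goodW_up n b)⟩, rho_lift ha (goodW_up n b)⟩

lemma tail_fibOK {a n : ℕ} (ha : 1 ≤ a)
    (w : {w : Fin n → Bool // ∃ v : MetallicVertex a n, rho a n v = w}) :
    FibOK (n - 1) (fun k : Fin (n - 1) => w.1 ⟨(k : ℕ) + 1, by have := k.isLt; omega⟩) := by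
  obtain ⟨v, hv⟩ := w.2
  have hg : GoodW n w.1 := hv ▸ goodW_of_rho ha v
  intro i j hji h
  exact hg.1 ⟨(i : ℕ) + 1, by have := i.isLt; omega⟩ ⟨(j : ℕ) + 1, by have := j.isLt; omega⟩
    (by simp; omega) h

end MetallicAux

open MetallicAux in
/-- the quotient graph `Π^a_n/ρ` is isomorphic to the Fibonacci cube
`Γ_{n−1}`. -/
theorem metallic_quotient_iso_fibCube (a n : ℕ) (ha : 1 ≤ a) (hn : 1 ≤ n) :
    Nonempty (metallicQuotient a n ≃g fibCube (n - 1)) := by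
  have hgood : ∀ w : {w : Fin n → Bool // ∃ v : MetallicVertex a n, rho a n v = w},
      GoodW n w.1 := by
    rintro ⟨w, v, hv⟩
    exact hv ▸ goodW_of_rho ha v
  refine ⟨⟨⟨fun w => ⟨fun k => w.1 ⟨(k : ℕ) + 1, by have := k.isLt; omega⟩, tail_fibOK ha w⟩,
      fun b => ⟨upFun n b.1, up_exists ha b⟩, ?_, ?_⟩, ?_⟩⟩
  · -- left inverse
    intro w
    apply Subtype.ext
    funext i
    by_cases h0 : (i : ℕ) = 0
    · simp only [upFun]
      rw [dif_pos h0]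
      exact ((hgood w).2 i h0).symm
    · simp only [upFun]
      rw [dif_neg h0]
      exact congrArg w.1 (Fin.ext (by simp; omega))
  · -- right inverse
    intro b
    apply Subtype.ext
    funext k
    show upFun n b.1 ⟨(k : ℕ) + 1, by have := k.isLt; omega⟩ = b.1 k
    have hk : ((⟨(k : ℕ) + 1, by have := k.isLt; omega⟩ : Fin n) : ℕ) ≠ 0 := by simp
    simp only [upFun]
    rw [dif_neg hk]
    exact congrArg b.1 (Fin.ext (by simp))
  · -- map_rel_iff
    intro w₁ w₂
    show (Finset.univ.filter fun k : Fin (n - 1) =>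
        w₁.1 ⟨(k : ℕ) + 1, by have := k.isLt; omega⟩ ≠
        w₂.1 ⟨(k : ℕ) + 1, by have := k.isLt; omega⟩).card = 1 ↔ _
    constructor
    · intro h
      obtain ⟨k, hk⟩ := Finset.card_eq_one.mp h
      set i : Fin n := ⟨(k : ℕ) + 1, by have := k.isLt; omega⟩ with hidef
      have hmemiff : ∀ k' : Fin (n - 1),
          (w₁.1 ⟨(k' : ℕ) + 1, by have := k'.isLt; omega⟩ ≠
           w₂.1 ⟨(k' : ℕ) + 1, by have := k'.isLt; omega⟩) ↔ k' = k := by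
        intro k'
        constructor
        · intro hne
          have : k' ∈ Finset.univ.filter fun k : Fin (n - 1) =>
              w₁.1 ⟨(k : ℕ) + 1, by have := k.isLt; omega⟩ ≠
              w₂.1 ⟨(k : ℕ) + 1, by have := k.isLt; omega⟩ :=
            Finset.mem_filter.mpr ⟨Finset.mem_univ _, hne⟩
          rw [hk, Finset.mem_singleton] at this
          exact this
        · rintro rfl
          have hmem : k' ∈ ({k'} : Finset (Fin (n - 1))) := Finset.mem_singleton_self k'
          rw [← hk, Finset.mem_filter] at hmem
          exact hmem.2
      have hdiff : w₁.1 i ≠ w₂.1 i := (hmemiff k).mpr rfl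
      have hagree : ∀ j : Fin n, j ≠ i → w₁.1 j = w₂.1 j := by
        intro j hji
        by_cases hj0 : (j : ℕ) = 0
        · rw [(hgood w₁).2 j hj0, (hgood w₂).2 j hj0]
        · have hlt : (j : ℕ) - 1 < n - 1 := by have := j.isLt; omega
          by_contra hne
          have hkeq : (⟨(j : ℕ) - 1, hlt⟩ : Fin (n - 1)) = k := by
            apply (hmemiff ⟨(j : ℕ) - 1, hlt⟩).mp
            have : (⟨(j : ℕ) - 1 + 1, by have := j.isLt; omega⟩ : Fin n) = j :=
              Fin.ext (by simp; omega)
            rw [this]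
            exact hne
          apply hji
          apply Fin.ext
          have : ((⟨(j : ℕ) - 1, hlt⟩ : Fin (n - 1)) : ℕ) = (k : ℕ) := by rw [hkeq]
          simp at this
          simp [hidef]
          omega
      have hne12 : w₁ ≠ w₂ := fun he => hdiff (by rw [he])
      refine ⟨hne12, ?_⟩
      cases hb1 : w₁.1 i with
      | true =>
        have hb2 : w₂.1 i = false := by
          cases hb2 : w₂.1 i
          · rfl
          · exact absurd (hb1.trans hb2.symm) hdiff
        exact exists_adj ha w₁.1 w₂.1 (hgood w₁) (hgood w₂) i hb1 hb2 hagree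
      | false =>
        have hb2 : w₂.1 i = true := by
          cases hb2 : w₂.1 i
          · exact absurd (hb1.trans hb2.symm) hdiff
          · rfl
        obtain ⟨u, v, hu, hv, hadj⟩ := exists_adj ha w₂.1 w₁.1 (hgood w₂) (hgood w₁) i hb2 hb1
          (fun j hj => (hagree j hj).symm)
        exact ⟨v, u, hv, hu, hadj.symm⟩
    · rintro ⟨hne, u, v, hu, hv, hadj⟩
      obtain ⟨i, hdist, hrest⟩ := adj_unique hadj
      have hagree : ∀ j : Fin n, j ≠ i → w₁.1 j = w₂.1 j := by
        intro j hji
        rw [← hu, ← hv]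
        simp only [rho, hrest j hji]
      have hdiff : w₁.1 i ≠ w₂.1 i := by
        intro he
        apply hne
        apply Subtype.ext
        funext j
        by_cases hji : j = i
        · rw [hji]; exact he
        · exact hagree j hji
      have hi0 : (i : ℕ) ≠ 0 := by
        intro h0
        rw [(hgood w₁).2 i h0, (hgood w₂).2 i h0] at hdiff
        exact hdiff rfl
      have hlt : (i : ℕ) - 1 < n - 1 := by have := i.isLt; omega
      rw [Finset.card_eq_one]
      refine ⟨⟨(i : ℕ) - 1, hlt⟩, ?_⟩
      ext k
      simp only [Finset.mem_filter, Finset.mem_univ, true_and, Finset.mem_singleton]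
      constructor
      · intro hne'
        by_contra hkne
        apply hne'
        apply hagree
        intro he
        apply hkne
        apply Fin.ext
        have : ((⟨(k : ℕ) + 1, by have := k.isLt; omega⟩ : Fin n) : ℕ) = (i : ℕ) := by rw [he]
        simp at this ⊢
        omega
      · rintro rfl
        have : (⟨(i : ℕ) - 1 + 1, by have := i.isLt; omega⟩ : Fin n) = i :=
          Fin.ext (by simp; omega)
        simpa [this] using hdiff
end

section
/- Every metallic cube is isomorphic to an induced subgraph of a Fibonacci cube, and hence of a hypercube. Specifically: for a ≥ 3 and n ≥ 1, Π^a_n is isomorphic to an induced subgraph of the Fibonacci cube Γ_{(2a−2)n − 1}; for a = 2 and n ≥ 1, Π^2_n is isomorphic to an induced subgraph of Γ_{3n−1}; and Π^1_n is isomorphic to Γ_{n−1}. -/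
namespace MetallicAux


def codeBit (c k : ℕ) : Bool :=
  if c = 0 then k == 1 else decide (k % 2 = 0 ∧ k + 4 ≤ 2 * c)

lemma codeBit_high {a c k : ℕ} (hc : c ≤ a) (hk2 : 2 ≤ k) (hka : 2*a - 3 ≤ k) :
    codeBit c k = false := by
  unfold codeBit
  split
  · simp only [beq_eq_false_iff_ne, ne_eq]; omega
  · simp only [decide_eq_false_iff_not, not_and]; omega

lemma codeBit_not_consec (c k : ℕ) :
    ¬(codeBit c k = true ∧ codeBit c (k+1) = true) := by
  unfold codeBit
  split
  · simp only [beq_iff_eq]; omega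
  · simp only [decide_eq_true_eq, not_and]; omega

def δ (c d k : ℕ) : ℕ := if codeBit c k = codeBit d k then 0 else 1

lemma δ_comm (c d k : ℕ) : δ c d k = δ d c k := by
  unfold δ; split <;> split <;> simp_all

lemma δ_step {c d k : ℕ} (hc : c ≤ d) (hd : 1 ≤ d) :
    δ c (d+1) k = δ c d k + (if k = 2*d - 2 then 1 else 0) := by
  rcases eq_or_ne k (2*d-2) with rfl | hk
  · have h1 : codeBit d (2*d-2) = false := by
      unfold codeBit; split
      · omega
      · simp only [decide_eq_false_iff_not, not_and]; omega
    have h2 : codeBit (d+1) (2*d-2) = true := by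
      unfold codeBit; split
      · omega
      · simp only [decide_eq_true_eq]; omega
    have h3 : codeBit c (2*d-2) = false := by
      unfold codeBit; split
      · simp only [beq_eq_false_iff_ne, ne_eq]; omega
      · simp only [decide_eq_false_iff_not, not_and]; omega
    simp [δ, h1, h2, h3]
  · have : codeBit (d+1) k = codeBit d k := by
      unfold codeBit
      rw [if_neg (by omega : ¬ (d+1 = 0)), if_neg (by omega : ¬ (d = 0))]
      rcases Nat.even_or_odd k with ⟨t, rfl⟩ | ⟨t, rfl⟩
      · by_cases h : t + t + 4 ≤ 2*d
        · have h' : t + t + 4 ≤ 2*(d+1) := by omega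
          simp [h, h']
        · have h' : ¬ (t + t + 4 ≤ 2*(d+1)) := by omega
          simp [h, h']
      · simp only [decide_eq_decide]; omega
    simp [δ, this, hk]

lemma δ_zero_one (k : ℕ) : δ 0 1 k = if k = 1 then 1 else 0 := by
  have h0 : codeBit 0 k = (k == 1) := by simp [codeBit]
  have h1 : codeBit 1 k = false := by
    simp only [codeBit, if_neg (by omega : ¬ (1 = 0)), decide_eq_false_iff_not, not_and]
    omega
  rcases eq_or_ne k 1 with rfl | hk
  · simp [δ, h0, h1]
  · simp [δ, h0, h1, hk]

lemma block_sum {a c d L : ℕ} (ha : 2 ≤ a) (hL : max 2 (2*a-3) + 1 ≤ L)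
    (hd : d ≤ a) (hcd : c ≤ d) :
    ∑ k ∈ Finset.range L, δ c d k = d - c := by
  have hL1 : 2*a - 3 + 1 ≤ L := by omega
  have hL2 : 3 ≤ L := by omega
  clear hL
  induction d, hcd using Nat.le_induction with
  | base => simp [δ]
  | succ d hcd ih =>
    rcases Nat.eq_zero_or_pos d with rfl | hd1
    · have hc0 : c = 0 := by omega
      subst hc0
      rw [Finset.sum_congr rfl (fun k _ => δ_zero_one k)]
      rw [Finset.sum_ite_eq' (Finset.range L) 1 (fun _ => 1)]
      simp only [Finset.mem_range]
      rw [if_pos (by omega)]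
    · have hsum : ∑ k ∈ Finset.range L, δ c (d+1) k
          = (∑ k ∈ Finset.range L, δ c d k) + ∑ k ∈ Finset.range L,
            (if k = 2*d - 2 then 1 else 0) := by
        rw [← Finset.sum_add_distrib]
        exact Finset.sum_congr rfl fun k _ => δ_step hcd hd1
      rw [hsum, ih (by omega)]
      rw [Finset.sum_ite_eq' (Finset.range L) (2*d-2) (fun _ => 1)]
      simp only [Finset.mem_range]
      rw [if_pos (by omega)]
      omega

lemma block_dist {a c d L : ℕ} (ha : 2 ≤ a) (hL : max 2 (2*a-3) + 1 ≤ L)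
    (hc : c ≤ a) (hd : d ≤ a) :
    ∑ k ∈ Finset.range L, δ c d k = Nat.dist c d := by
  rcases le_total c d with h | h
  · rw [block_sum ha hL hd h, Nat.dist_eq_sub_of_le h]
  · rw [Finset.sum_congr rfl (fun k _ => δ_comm c d k), block_sum ha hL hc h,
      Nat.dist_eq_sub_of_le_right h]

lemma global_sum {a L : ℕ} (ha : 2 ≤ a) (hL : max 2 (2*a-3) + 1 ≤ L)
    (n : ℕ) (A B : ℕ → ℕ) (hA : ∀ i, A i ≤ a) (hB : ∀ i, B i ≤ a) :
    ∑ t ∈ Finset.range (L * n), δ (A (t / L)) (B (t / L)) (t % L)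
      = ∑ i ∈ Finset.range n, Nat.dist (A i) (B i) := by
  have hL0 : 0 < L := by omega
  induction n with
  | zero => simp
  | succ n ih =>
    have h1 : L * (n+1) = L * n + L := by ring
    have h2 : ∑ j ∈ Finset.range L,
        δ (A ((L*n+j) / L)) (B ((L*n+j) / L)) ((L*n+j) % L) = Nat.dist (A n) (B n) := by
      rw [← block_dist (c := A n) (d := B n) ha hL (hA n) (hB n)]
      refine Finset.sum_congr rfl fun j hj => ?_
      rw [Finset.mem_range] at hj
      have hdiv : (L * n + j) / L = n := by
        rw [Nat.mul_add_div hL0, Nat.div_eq_of_lt hj]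
        omega
      have hmod : (L * n + j) % L = j := by
        rw [Nat.mul_add_mod, Nat.mod_eq_of_lt hj]
      rw [hdiv, hmod]

    rw [h1, Finset.sum_range_add, h2, ih, Finset.sum_range_succ]

lemma succ_div_mod {L j : ℕ} (h : j % L + 1 < L) :
    (j+1) / L = j / L ∧ (j+1) % L = j % L + 1 := by
  have hL0 : 0 < L := by omega
  have hdm := Nat.div_add_mod j L
  constructor
  · rw [show j + 1 = L * (j / L) + (j % L + 1) by omega,
      Nat.mul_add_div hL0, Nat.div_eq_of_lt h]
    omega
  · rw [show j + 1 = L * (j / L) + (j % L + 1) by omega,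
      Nat.mul_add_mod, Nat.mod_eq_of_lt h]

/-- The digit string of a metallic vertex, as a total function `ℕ → ℕ`. -/
def digits {a n : ℕ} (α : MetallicVertex a n) (i : ℕ) : ℕ :=
  if h : i < n then (α.1 ⟨i, h⟩ : ℕ) else 0

lemma digits_le {a n : ℕ} (α : MetallicVertex a n) (i : ℕ) : digits α i ≤ a := by
  unfold digits
  split
  · exact Nat.lt_succ_iff.mp (α.1 _).2
  · exact Nat.zero_le a

/-- The global bit string of a metallic vertex (block length `L`). -/
def G (L : ℕ) {a n : ℕ} (α : MetallicVertex a n) (t : ℕ) : Bool :=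
  codeBit (digits α (t / L)) (t % L)

lemma fibok {a n L m : ℕ} (ha : 2 ≤ a) (hL : max 2 (2*a-3) + 1 ≤ L)
    (α : MetallicVertex a n) :
    FibOK m (fun t : Fin m => G L α t) := by
  intro i j hji ⟨hi, hj⟩
  have hL1 : 2*a - 3 + 1 ≤ L := by omega
  have hL2 : 3 ≤ L := by omega
  simp only [G] at hi hj
  have hjm : (j : ℕ) % L < L := Nat.mod_lt _ (by omega)
  by_cases hk : (j : ℕ) % L = L - 1
  · rw [hk, codeBit_high (digits_le α _) (by omega) (by omega)] at hj
    exact Bool.false_ne_true hj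
  · obtain ⟨h1, h2⟩ := succ_div_mod (L := L) (j := (j:ℕ)) (by omega)
    rw [← hji, h1, h2] at hi
    exact codeBit_not_consec _ _ ⟨hj, hi⟩

lemma ham {a n L m : ℕ} (ha : 2 ≤ a) (hL : max 2 (2*a-3) + 1 ≤ L) (hn : 1 ≤ n)
    (hm : m + 1 = L * n) (α β : MetallicVertex a n) :
    (Finset.univ.filter fun t : Fin m => G L α (t:ℕ) ≠ G L β (t:ℕ)).card
      = ∑ i : Fin n, Nat.dist (α.1 i : ℕ) (β.1 i : ℕ) := by
  have hL2 : 3 ≤ L := by omega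
  obtain ⟨n', rfl⟩ : ∃ n', n = n' + 1 := ⟨n - 1, by omega⟩
  have hm' : m = L * n' + (L - 1) := by
    rw [Nat.mul_add, Nat.mul_one] at hm
    omega
  rw [Finset.card_filter]
  have e1 : ∑ t : Fin m, (if G L α (t:ℕ) ≠ G L β (t:ℕ) then 1 else 0)
      = ∑ t ∈ Finset.range m, (if G L α t ≠ G L β t then 1 else 0) :=
    Fin.sum_univ_eq_sum_range (fun t : ℕ => if G L α t ≠ G L β t then 1 else 0) m
  have e2 : ∀ t : ℕ, (if G L α t ≠ G L β t then 1 else 0)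
      = δ (digits α (t / L)) (digits β (t / L)) (t % L) := by
    intro t
    simp only [G, δ]
    by_cases h : codeBit (digits α (t / L)) (t % L) = codeBit (digits β (t / L)) (t % L) <;>
      simp [h]
  have e3 : δ (digits α (m / L)) (digits β (m / L)) (m % L) = 0 := by
    have hmod : m % L = L - 1 := by
      rw [hm', Nat.mul_add_mod, Nat.mod_eq_of_lt (by omega)]
    rw [δ, hmod, codeBit_high (digits_le α _) (by omega) (by omega),
      codeBit_high (digits_le β _) (by omega) (by omega), if_pos rfl]
  have e4 : ∑ t ∈ Finset.range m, (if G L α t ≠ G L β t then 1 else 0)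
      = ∑ t ∈ Finset.range (L * (n'+1)), δ (digits α (t / L)) (digits β (t / L)) (t % L) := by
    rw [← hm, Finset.sum_range_succ, e3, add_zero]
    exact Finset.sum_congr rfl fun t _ => e2 t
  rw [e1, e4, global_sum ha hL (n'+1) _ _ (digits_le α) (digits_le β)]
  rw [← Fin.sum_univ_eq_sum_range (fun i => Nat.dist (digits α i) (digits β i)) (n'+1)]
  refine Finset.sum_congr rfl fun i _ => ?_
  simp [digits, i.isLt]


lemma embed_ge_two {a n m : ℕ} (ha : 2 ≤ a) (hn : 1 ≤ n)
    (hm : m + 1 = (max 2 (2*a-3) + 1) * n) :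
    Nonempty (metallicCube a n ↪g fibCube m) := by
  have hL : max 2 (2*a-3) + 1 ≤ max 2 (2*a-3) + 1 := le_rfl
  set L := max 2 (2*a-3) + 1 with hLdef
  refine ⟨{ toFun := fun α => ⟨fun t => G L α (t:ℕ), fibok ha hL α⟩,
            inj' := ?_, map_rel_iff' := ?_ }⟩
  · intro α β h
    have h0 : ∀ t : Fin m, G L α (t:ℕ) = G L β (t:ℕ) := fun t =>
      congrFun (congrArg Subtype.val h) t
    have hcard : (Finset.univ.filter fun t : Fin m =>
        G L α (t:ℕ) ≠ G L β (t:ℕ)).card = 0 := by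
      rw [Finset.card_eq_zero, Finset.filter_eq_empty_iff]
      intro t _
      simp [h0 t]
    have hsum : ∑ i : Fin n, Nat.dist (α.1 i : ℕ) (β.1 i : ℕ) = 0 := by
      rw [← ham ha hL hn hm α β, hcard]
    apply Subtype.ext; funext i
    exact Fin.ext (Nat.eq_of_dist_eq_zero
      (Finset.sum_eq_zero_iff.mp hsum i (Finset.mem_univ i)))
  · intro α β
    show (Finset.univ.filter fun t : Fin m =>
        G L α (t:ℕ) ≠ G L β (t:ℕ)).card = 1 ↔ _
    rw [ham ha hL hn hm α β]
    exact Iff.rfl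

end MetallicAux

section AOne

open MetallicAux

lemma metallic_one_first_digit {m : ℕ} (α : MetallicVertex 1 (m+1))
    (i : Fin (m+1)) (hi : (i : ℕ) = 0) : (α.1 i : ℕ) = 0 := by
  have hlt : (α.1 i : ℕ) < 2 := (α.1 i).2
  by_contra h
  have h1 : (α.1 i : ℕ) = 1 := by omega
  obtain ⟨j, hj, -⟩ := α.2 i h1
  omega

lemma one_fwd_fibok {m : ℕ} (α : MetallicVertex 1 (m+1)) :
    FibOK m (fun k : Fin m => decide ((α.1 k.succ : ℕ) = 1)) := by
  intro i j hji ⟨hi, hj⟩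
  rw [decide_eq_true_eq] at hi hj
  obtain ⟨j', hj'1, hj'2⟩ := α.2 i.succ hi
  have : j' = j.succ := by
    apply Fin.ext
    simp only [Fin.val_succ] at hj'1 ⊢
    omega
  rw [this] at hj'2
  omega

def oneBwdFun {m : ℕ} (b : FibVertex m) (i : Fin (m+1)) : Fin 2 :=
  if h : (i : ℕ) = 0 then 0
  else if b.1 ⟨(i : ℕ) - 1, by omega⟩ then 1 else 0

lemma oneBwd_ok {m : ℕ} (b : FibVertex m) : MetallicOK 1 (m+1) (oneBwdFun b) := by
  intro i hi
  unfold oneBwdFun at hi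
  by_cases h0 : (i : ℕ) = 0
  · rw [dif_pos h0] at hi; simp at hi
  · rw [dif_neg h0] at hi
    have hb : b.1 ⟨(i : ℕ) - 1, by omega⟩ = true := by
      by_contra h
      rw [if_neg h] at hi; simp at hi
    refine ⟨⟨(i : ℕ) - 1, by omega⟩, by simp; omega, ?_⟩
    unfold oneBwdFun
    by_cases h1 : ((⟨(i : ℕ) - 1, by omega⟩ : Fin (m+1)) : ℕ) = 0
    · rw [dif_pos h1]; rfl
    · rw [dif_neg h1]
      simp only at h1
      have hb2 : b.1 ⟨(i : ℕ) - 1 - 1, by omega⟩ = false := by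
        by_contra h
        rw [Bool.not_eq_false] at h
        exact b.2 ⟨(i : ℕ) - 1, by omega⟩ ⟨(i : ℕ) - 1 - 1, by omega⟩
          (by simp; omega) ⟨hb, h⟩
      rw [if_neg (by rw [hb2]; exact Bool.false_ne_true)]
      rfl

lemma one_iso {m : ℕ} : Nonempty (metallicCube 1 (m+1) ≃g fibCube m) := by
  have key : ∀ (α β : MetallicVertex 1 (m+1)),
      (Finset.univ.filter fun k : Fin m =>
          (decide ((α.1 k.succ : ℕ) = 1)) ≠ (decide ((β.1 k.succ : ℕ) = 1))).card
        = ∑ i : Fin (m+1), Nat.dist (α.1 i : ℕ) (β.1 i : ℕ) := by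
    intro α β
    rw [Finset.card_filter, Fin.sum_univ_succ]
    rw [metallic_one_first_digit α 0 rfl, metallic_one_first_digit β 0 rfl]
    simp only [Nat.dist_self, zero_add]
    refine (Finset.sum_congr rfl fun k _ => ?_).symm
    have hα : (α.1 k.succ : ℕ) < 2 := (α.1 k.succ).2
    have hβ : (β.1 k.succ : ℕ) < 2 := (β.1 k.succ).2
    rcases (by omega : (α.1 k.succ : ℕ) = 0 ∨ (α.1 k.succ : ℕ) = 1) with h1 | h1 <;>
      rcases (by omega : (β.1 k.succ : ℕ) = 0 ∨ (β.1 k.succ : ℕ) = 1) with h2 | h2 <;>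
        simp [h1, h2, Nat.dist]
  refine ⟨{ toFun := fun α => ⟨fun k => decide ((α.1 k.succ : ℕ) = 1), one_fwd_fibok α⟩,
            invFun := fun b => ⟨oneBwdFun b, oneBwd_ok b⟩,
            left_inv := ?_, right_inv := ?_, map_rel_iff' := ?_ }⟩
  · intro α
    apply Subtype.ext; funext i
    show oneBwdFun _ i = α.1 i
    unfold oneBwdFun
    by_cases h0 : (i : ℕ) = 0
    · rw [dif_pos h0]
      exact (Fin.ext (metallic_one_first_digit α i h0)).symm
    · rw [dif_neg h0]
      have hs : (⟨(i:ℕ) - 1, by omega⟩ : Fin m).succ = i := by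
        apply Fin.ext; simp [Fin.val_succ]; omega
      show (if decide ((α.1 (⟨(i:ℕ) - 1, by omega⟩ : Fin m).succ : ℕ) = 1) = true
          then (1 : Fin 2) else 0) = α.1 i
      rw [hs]
      have hα : (α.1 i : ℕ) < 2 := (α.1 i).2
      rcases (by omega : (α.1 i : ℕ) = 0 ∨ (α.1 i : ℕ) = 1) with h1 | h1 <;>
        [skip; skip] <;>
      · apply Fin.ext
        simp [h1]
  · intro b
    apply Subtype.ext; funext k
    show decide ((oneBwdFun b k.succ : ℕ) = 1) = b.1 k
    unfold oneBwdFun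
    have h0 : ¬ ((k.succ : Fin (m+1)) : ℕ) = 0 := by simp [Fin.val_succ]
    rw [dif_neg h0]
    have hidx : (⟨((k.succ : Fin (m+1)) : ℕ) - 1, by omega⟩ : Fin m) = k := by
      apply Fin.ext; simp [Fin.val_succ]
    rw [hidx]
    cases h : b.1 k <;> simp [h]
  · intro α β
    show (Finset.univ.filter fun k : Fin m =>
        (decide ((α.1 k.succ : ℕ) = 1)) ≠ (decide ((β.1 k.succ : ℕ) = 1))).card = 1 ↔ _
    rw [key α β]
    exact Iff.rfl

end AOne



/-- every metallic cube is isomorphic to an induced subgraph of a Fibonacci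
cube (hence of a hypercube): `Π^a_n ↪ Γ_{(2a−2)n−1}` for `a ≥ 3`, `Π^2_n ↪ Γ_{3n−1}`,
and `Π^1_n ≅ Γ_{n−1}`. -/
theorem metallic_embeds_in_fibCube (a n : ℕ) (ha : 1 ≤ a) (hn : 1 ≤ n) :
    (3 ≤ a → Nonempty (metallicCube a n ↪g fibCube ((2 * a - 2) * n - 1))) ∧
    (a = 2 → Nonempty (metallicCube 2 n ↪g fibCube (3 * n - 1))) ∧
    (a = 1 → Nonempty (metallicCube 1 n ≃g fibCube (n - 1))) := by
  have hmax : ∀ b : ℕ, 3 ≤ b → max 2 (2*b-3) + 1 = 2*b - 2 := by intro b hb; omega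
  refine ⟨?_, ?_, ?_⟩
  · intro h3
    have hpos : 1 ≤ (2*a-2) * n := Nat.mul_pos (by omega) (by omega)
    exact MetallicAux.embed_ge_two (by omega) hn
      (by rw [hmax a h3]; exact Nat.sub_add_cancel hpos)
  · intro h2
    subst h2
    exact MetallicAux.embed_ge_two (by omega) hn
      (by rw [show max 2 (2*2-3) + 1 = 3 by norm_num]; omega)
  · intro h1
    subst h1
    obtain ⟨m, rfl⟩ : ∃ m, n = m + 1 := ⟨n - 1, by omega⟩
    exact one_iso
end

section
/- For every integer a ≥ 1 and n ≥ 0, the metallic cube Π^a_n is a median graph: for any three vertices u, v, w there exists a unique vertex m such that d(u,m) + d(m,v) = d(u,v), d(v,m) + d(m,w) = d(v,w) and d(u,m) + d(m,w) = d(u,w), where d denotes graph distance in Π^a_n. -/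
namespace MetallicAux

open Finset

variable {a n : ℕ}

/-- The ℓ¹ distance between two vertices. -/
def D (u v : MetallicVertex a n) : ℕ := ∑ i : Fin n, Nat.dist (u.1 i : ℕ) (v.1 i : ℕ)

lemma D_self (u : MetallicVertex a n) : D u u = 0 := by
  simp [D, Nat.dist_self]

lemma D_triangle (u v w : MetallicVertex a n) : D u w ≤ D u v + D v w := by
  rw [D, D, D, ← Finset.sum_add_distrib]
  exact Finset.sum_le_sum fun i _ => Nat.dist.triangle_inequality _ _ _

lemma eq_of_D_eq_zero {u v : MetallicVertex a n} (h : D u v = 0) : u = v := by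
  apply Subtype.ext; funext i
  have := Finset.sum_eq_zero_iff.mp h i (Finset.mem_univ i)
  exact Fin.ext (Nat.eq_of_dist_eq_zero this)

lemma D_le_walk_length {u v : MetallicVertex a n} (p : (metallicCube a n).Walk u v) :
    D u v ≤ p.length := by
  induction p with
  | nil => simp [D_self]
  | @cons u x v h p ih =>
    have h1 : D u x = 1 := h
    calc D u v ≤ D u x + D x v := D_triangle u x v
      _ ≤ 1 + p.length := by omega
      _ = (SimpleGraph.Walk.cons h p).length := by simp [SimpleGraph.Walk.length_cons]; omega

lemma sum_split (h : Fin n → ℕ) (i : Fin n) :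
    ∑ j : Fin n, h j = h i + ∑ j ∈ Finset.univ.erase i, h j :=
  (Finset.add_sum_erase _ _ (Finset.mem_univ i)).symm

/-- One step towards `v`. -/
lemma step {u v : MetallicVertex a n} (hne : u ≠ v) :
    ∃ u' : MetallicVertex a n, (metallicCube a n).Adj u u' ∧ D u' v + 1 = D u v := by
  have hex : ∃ i : Fin n, (u.1 i : ℕ) ≠ (v.1 i : ℕ) := by
    by_contra h
    push_neg at h
    exact hne (Subtype.ext (funext fun i => Fin.ext (h i)))
  -- the new value at the chosen coordinate
  by_cases hgt : ∃ i : Fin n, (v.1 i : ℕ) < (u.1 i : ℕ)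
  · obtain ⟨i, hi⟩ := hgt
    have hlt : (u.1 i : ℕ) - 1 < a + 1 := by have := (u.1 i).isLt; omega
    set f : Fin n → Fin (a + 1) := fun j => if j = i then ⟨(u.1 i : ℕ) - 1, hlt⟩ else u.1 j with hf
    have hok : MetallicOK a n f := by
      intro k hk
      by_cases hki : k = i
      · subst hki
        simp only [hf, if_pos rfl] at hk
        have := (u.1 k).isLt
        omega
      · simp only [hf, if_neg hki] at hk
        obtain ⟨j, hj1, hj2⟩ := u.2 k hk
        refine ⟨j, hj1, ?_⟩
        have hji : j ≠ i := by
          intro h; subst h; omega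
        simp only [hf, if_neg hji]
        exact hj2
    refine ⟨⟨f, hok⟩, ?_, ?_⟩
    · show (∑ j : Fin n, Nat.dist (u.1 j : ℕ) (f j : ℕ)) = 1
      rw [sum_split (fun j => Nat.dist (u.1 j : ℕ) (f j : ℕ)) i]
      have : ∑ j ∈ Finset.univ.erase i, Nat.dist (u.1 j : ℕ) (f j : ℕ) = 0 := by
        apply Finset.sum_eq_zero
        intro j hj
        have hji : j ≠ i := Finset.ne_of_mem_erase hj
        simp [hf, if_neg hji, Nat.dist_self]
      simp only [hf, if_pos rfl] at *
      rw [this]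
      simp [Nat.dist]
      omega
    · show (∑ j : Fin n, Nat.dist (f j : ℕ) (v.1 j : ℕ)) + 1 = D u v
      rw [D, sum_split (fun j => Nat.dist (f j : ℕ) (v.1 j : ℕ)) i,
        sum_split (fun j => Nat.dist (u.1 j : ℕ) (v.1 j : ℕ)) i]
      have he : ∑ j ∈ Finset.univ.erase i, Nat.dist (f j : ℕ) (v.1 j : ℕ)
          = ∑ j ∈ Finset.univ.erase i, Nat.dist (u.1 j : ℕ) (v.1 j : ℕ) := by
        apply Finset.sum_congr rfl
        intro j hj
        have hji : j ≠ i := Finset.ne_of_mem_erase hj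
        simp [hf, if_neg hji]
      rw [he]
      simp only [hf, if_pos rfl]
      simp [Nat.dist]
      omega
  · push_neg at hgt
    obtain ⟨i, hi⟩ := hex
    have hi' : (u.1 i : ℕ) < (v.1 i : ℕ) := lt_of_le_of_ne (hgt i) hi
    have hlt : (u.1 i : ℕ) + 1 < a + 1 := by have := (v.1 i).isLt; omega
    set f : Fin n → Fin (a + 1) := fun j => if j = i then ⟨(u.1 i : ℕ) + 1, hlt⟩ else u.1 j with hf
    have hok : MetallicOK a n f := by
      intro k hk
      by_cases hki : k = i
      · subst hki
        simp only [hf, if_pos rfl] at hk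
        -- u_i + 1 = a, so v_i = a (since u_i < v_i ≤ a)
        have hva : (v.1 k : ℕ) = a := by have := (v.1 k).isLt; omega
        obtain ⟨j, hj1, hj2⟩ := v.2 k hva
        refine ⟨j, hj1, ?_⟩
        have hji : j ≠ k := by intro h; subst h; omega
        simp only [hf, if_neg hji]
        have := hgt j
        omega
      · simp only [hf, if_neg hki] at hk
        obtain ⟨j, hj1, hj2⟩ := u.2 k hk
        refine ⟨j, hj1, ?_⟩
        by_cases hji : j = i
        · -- then u_i = 0; also v_k = a, so its predecessor (= j = i) has v_i = 0,
          -- contradicting u_i < v_i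
          exfalso
          subst hji
          have hvk : (v.1 k : ℕ) = a := by have := (v.1 k).isLt; have := hgt k; omega
          obtain ⟨j', hj1', hj2'⟩ := v.2 k hvk
          have : j' = j := Fin.ext (by omega)
          subst this
          omega
        · simp only [hf, if_neg hji]
          exact hj2
    refine ⟨⟨f, hok⟩, ?_, ?_⟩
    · show (∑ j : Fin n, Nat.dist (u.1 j : ℕ) (f j : ℕ)) = 1
      rw [sum_split (fun j => Nat.dist (u.1 j : ℕ) (f j : ℕ)) i]
      have : ∑ j ∈ Finset.univ.erase i, Nat.dist (u.1 j : ℕ) (f j : ℕ) = 0 := by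
        apply Finset.sum_eq_zero
        intro j hj
        have hji : j ≠ i := Finset.ne_of_mem_erase hj
        simp [hf, if_neg hji, Nat.dist_self]
      rw [this]
      simp only [hf, if_pos rfl]
      simp [Nat.dist]
    · show (∑ j : Fin n, Nat.dist (f j : ℕ) (v.1 j : ℕ)) + 1 = D u v
      rw [D, sum_split (fun j => Nat.dist (f j : ℕ) (v.1 j : ℕ)) i,
        sum_split (fun j => Nat.dist (u.1 j : ℕ) (v.1 j : ℕ)) i]
      have he : ∑ j ∈ Finset.univ.erase i, Nat.dist (f j : ℕ) (v.1 j : ℕ)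
          = ∑ j ∈ Finset.univ.erase i, Nat.dist (u.1 j : ℕ) (v.1 j : ℕ) := by
        apply Finset.sum_congr rfl
        intro j hj
        have hji : j ≠ i := Finset.ne_of_mem_erase hj
        simp [hf, if_neg hji]
      rw [he]
      simp only [hf, if_pos rfl]
      simp [Nat.dist]
      omega

/-- The graph distance in the metallic cube equals the ℓ¹ distance. -/
lemma dist_eq_D (u v : MetallicVertex a n) :
    (metallicCube a n).Reachable u v ∧ (metallicCube a n).dist u v = D u v := by
  generalize hk : D u v = k
  induction k using Nat.strong_induction_on generalizing u v with
  | _ k ih =>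
    by_cases huv : u = v
    · subst huv
      simp [D_self] at hk
      subst hk
      exact ⟨SimpleGraph.Reachable.refl u, by simp [D_self]⟩
    · obtain ⟨u', hadj, hd⟩ := step huv
      have hklt : D u' v < k := by omega
      obtain ⟨hr, hdist⟩ := ih (D u' v) hklt u' v rfl
      have hruv : (metallicCube a n).Reachable u v := (hadj.reachable).trans hr
      refine ⟨hruv, le_antisymm ?_ ?_⟩
      · obtain ⟨p, hp⟩ := hr.exists_walk_length_eq_dist
        have := (metallicCube a n).dist_le (SimpleGraph.Walk.cons hadj p)
        rw [SimpleGraph.Walk.length_cons, hp, hdist] at this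
        omega
      · obtain ⟨q, hq⟩ := hruv.exists_walk_length_eq_dist
        have := D_le_walk_length q
        omega

/-- Median of three naturals. -/
def med (x y z : ℕ) : ℕ := min (max x y) (min (max y z) (max z x))

lemma sum_eq_pointwise {f g : Fin n → ℕ} (hle : ∀ i, f i ≤ g i)
    (h : ∑ i : Fin n, g i = ∑ i : Fin n, f i) : ∀ i, g i = f i := by
  intro i
  by_contra hne
  have hlt : f i < g i := lt_of_le_of_ne (hle i) (Ne.symm hne)
  have := Finset.sum_lt_sum (fun j _ => hle j) ⟨i, Finset.mem_univ i, hlt⟩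
  omega

end MetallicAux

open MetallicAux in
/-- every metallic cube is a median graph. -/
theorem metallic_median (a n : ℕ) (ha : 1 ≤ a) :
    ∀ u v w : MetallicVertex a n,
      ∃! m : MetallicVertex a n,
        (metallicCube a n).dist u m + (metallicCube a n).dist m v =
            (metallicCube a n).dist u v ∧
        (metallicCube a n).dist v m + (metallicCube a n).dist m w =
            (metallicCube a n).dist v w ∧
        (metallicCube a n).dist u m + (metallicCube a n).dist m w =
            (metallicCube a n).dist u w := by
  intro u v w
  have hmlt : ∀ i : Fin n, med (u.1 i : ℕ) (v.1 i : ℕ) (w.1 i : ℕ) < a + 1 := by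
    intro i
    have h1 := (u.1 i).isLt
    have h2 := (v.1 i).isLt
    have h3 := (w.1 i).isLt
    unfold med
    omega
  set f : Fin n → Fin (a + 1) :=
    fun i => ⟨med (u.1 i : ℕ) (v.1 i : ℕ) (w.1 i : ℕ), hmlt i⟩ with hf
  have hok : MetallicOK a n f := by
    intro k hk
    simp only [hf] at hk
    have h1 := (u.1 k).isLt
    have h2 := (v.1 k).isLt
    have h3 := (w.1 k).isLt
    -- at least two of the three coordinates are equal to a
    have h2a : ((u.1 k : ℕ) = a ∧ (v.1 k : ℕ) = a) ∨ ((v.1 k : ℕ) = a ∧ (w.1 k : ℕ) = a)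
        ∨ ((u.1 k : ℕ) = a ∧ (w.1 k : ℕ) = a) := by
      unfold med at hk
      omega
    -- get a common predecessor with value 0 in two of the strings
    have key : ∀ (x y : MetallicVertex a n), (x.1 k : ℕ) = a → (y.1 k : ℕ) = a →
        ∃ j : Fin n, (j : ℕ) + 1 = (k : ℕ) ∧ (x.1 j : ℕ) = 0 ∧ (y.1 j : ℕ) = 0 := by
      intro x y hx hy
      obtain ⟨j, hj1, hj2⟩ := x.2 k hx
      obtain ⟨j', hj1', hj2'⟩ := y.2 k hy
      have hjj : j' = j := Fin.ext (by omega)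
      rw [hjj] at hj2'
      exact ⟨j, hj1, hj2, hj2'⟩
    rcases h2a with ⟨hx, hy⟩ | ⟨hx, hy⟩ | ⟨hx, hy⟩
    · obtain ⟨j, hj1, hx0, hy0⟩ := key u v hx hy
      refine ⟨j, hj1, ?_⟩
      simp only [hf]
      unfold med
      omega
    · obtain ⟨j, hj1, hx0, hy0⟩ := key v w hx hy
      refine ⟨j, hj1, ?_⟩
      simp only [hf]
      unfold med
      omega
    · obtain ⟨j, hj1, hx0, hy0⟩ := key u w hx hy
      refine ⟨j, hj1, ?_⟩
      simp only [hf]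
      unfold med
      omega
  set m : MetallicVertex a n := ⟨f, hok⟩ with hm
  have hdist : ∀ x y : MetallicVertex a n, (metallicCube a n).dist x y = D x y :=
    fun x y => (dist_eq_D x y).2
  have hDsum : ∀ x y : MetallicVertex a n,
      D x m + D m y = ∑ i : Fin n,
        (Nat.dist (x.1 i : ℕ) (f i : ℕ) + Nat.dist (f i : ℕ) (y.1 i : ℕ)) := by
    intro x y
    rw [D, D, ← Finset.sum_add_distrib]
  have hmed_btw : ∀ (x y z : ℕ), Nat.dist x (med x y z) + Nat.dist (med x y z) y
      = Nat.dist x y := by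
    intro x y z
    simp only [Nat.dist, med]
    omega
  refine ⟨m, ⟨?_, ?_, ?_⟩, ?_⟩
  · rw [hdist, hdist, hdist, hDsum, D]
    exact Finset.sum_congr rfl fun i _ => hmed_btw _ _ _
  · rw [hdist, hdist, hdist, hDsum, D]
    refine Finset.sum_congr rfl fun i _ => ?_
    have := hmed_btw (v.1 i : ℕ) (w.1 i : ℕ) (u.1 i : ℕ)
    simp only [hf]
    simp only [Nat.dist, med] at *
    omega
  · rw [hdist, hdist, hdist, hDsum, D]
    refine Finset.sum_congr rfl fun i _ => ?_
    have := hmed_btw (u.1 i : ℕ) (w.1 i : ℕ) (v.1 i : ℕ)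
    simp only [hf]
    simp only [Nat.dist, med] at *
    omega
  · rintro t ⟨h1, h2, h3⟩
    simp only [hdist] at h1 h2 h3
    -- pointwise betweenness
    have pw : ∀ (x y : MetallicVertex a n),
        D x t + D t y = D x y →
        ∀ i : Fin n, Nat.dist (x.1 i : ℕ) (t.1 i : ℕ) + Nat.dist (t.1 i : ℕ) (y.1 i : ℕ)
          = Nat.dist (x.1 i : ℕ) (y.1 i : ℕ) := by
      intro x y hxy i
      have hsum : ∑ i : Fin n,
          (Nat.dist (x.1 i : ℕ) (t.1 i : ℕ) + Nat.dist (t.1 i : ℕ) (y.1 i : ℕ))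
          = ∑ i : Fin n, Nat.dist (x.1 i : ℕ) (y.1 i : ℕ) := by
        rw [Finset.sum_add_distrib]
        exact hxy
      exact sum_eq_pointwise
        (fun j => Nat.dist.triangle_inequality (x.1 j : ℕ) (t.1 j : ℕ) (y.1 j : ℕ)) hsum i
    have p1 := pw u v h1
    have p2 := pw v w h2
    have p3 := pw u w h3
    apply Subtype.ext
    funext i
    apply Fin.ext
    have q1 := p1 i
    have q2 := p2 i
    have q3 := p3 i
    show (t.1 i : ℕ) = (f i : ℕ)
    simp only [hf]
    simp only [Nat.dist] at q1 q2 q3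
    unfold med
    omega
end

section
/- Let e^a_n denote the number of edges and s^a_n the number of vertices of the metallic cube Π^a_n. Then e^a_0 = 0, e^a_1 = a − 1, and for every n ≥ 2, e^a_n = a·e^a_{n−1} + e^a_{n−2} + s^a_n − s^a_{n−1}. -/
namespace MetAux


/-- Like `MetallicOK` but the letter `a` is also allowed at the front. -/
def Ok2 (a n : ℕ) (α : Fin n → Fin (a + 1)) : Prop :=
  ∀ i : Fin n, (α i : ℕ) = a →
    (i : ℕ) = 0 ∨ ∃ j : Fin n, (j : ℕ) + 1 = (i : ℕ) ∧ (α j : ℕ) = 0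

instance (a n : ℕ) : DecidablePred (Ok2 a n) := fun α => by
  unfold Ok2; infer_instance

lemma metallic_ok2 {a n : ℕ} {α : Fin n → Fin (a+1)} (h : MetallicOK a n α) : Ok2 a n α :=
  fun i hi => Or.inr (h i hi)

/-- the context-dependent condition on the tail, head `c`. -/
def Ctx (a n : ℕ) (c : Fin (a+1)) (α : Fin n → Fin (a+1)) : Prop :=
  ((c : ℕ) = 0 → Ok2 a n α) ∧ ((c : ℕ) ≠ 0 → MetallicOK a n α)

instance (a n : ℕ) (c : Fin (a+1)) : DecidablePred (Ctx a n c) := fun α => by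
  unfold Ctx; infer_instance

lemma ok2_cons {a n : ℕ} (c : Fin (a+1)) (α : Fin n → Fin (a+1)) :
    Ok2 a (n+1) (Fin.cons c α) ↔ Ctx a n c α := by
  constructor
  · intro h
    constructor
    · intro hc0 k hk
      have hks := h k.succ (by simpa [Fin.cons_succ] using hk)
      rcases hks with h0 | ⟨j, hj1, hj2⟩
      · exact absurd h0 (by simp [Fin.val_succ])
      · rcases Fin.eq_zero_or_eq_succ j with rfl | ⟨l, rfl⟩
        · left
          simp [Fin.val_succ] at hj1
          omega
        · right
          refine ⟨l, ?_, by simpa [Fin.cons_succ] using hj2⟩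
          simp [Fin.val_succ] at hj1 ⊢
          omega
    · intro hc0 k hk
      have hks := h k.succ (by simpa [Fin.cons_succ] using hk)
      rcases hks with h0 | ⟨j, hj1, hj2⟩
      · exact absurd h0 (by simp [Fin.val_succ])
      · rcases Fin.eq_zero_or_eq_succ j with rfl | ⟨l, rfl⟩
        · exact absurd (by simpa using hj2) hc0
        · refine ⟨l, ?_, by simpa [Fin.cons_succ] using hj2⟩
          simp [Fin.val_succ] at hj1 ⊢
          omega
  · rintro ⟨h0, h1⟩ i hi
    rcases Fin.eq_zero_or_eq_succ i with rfl | ⟨k, rfl⟩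
    · left; rfl
    · have hk : (α k : ℕ) = a := by simpa [Fin.cons_succ] using hi
      right
      by_cases hc : (c : ℕ) = 0
      · rcases h0 hc k hk with hk0 | ⟨j, hj1, hj2⟩
        · exact ⟨0, by simp [Fin.val_succ, hk0], by simpa using hc⟩
        · exact ⟨j.succ, by simp [Fin.val_succ]; omega, by simpa [Fin.cons_succ] using hj2⟩
      · rcases h1 hc k hk with ⟨j, hj1, hj2⟩
        exact ⟨j.succ, by simp [Fin.val_succ]; omega, by simpa [Fin.cons_succ] using hj2⟩

lemma metallic_iff_ok2 {a n : ℕ} (β : Fin (n+1) → Fin (a+1)) :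
    MetallicOK a (n+1) β ↔ (β 0 : ℕ) ≠ a ∧ Ok2 a (n+1) β := by
  constructor
  · intro h
    refine ⟨fun h0 => ?_, metallic_ok2 h⟩
    rcases h 0 h0 with ⟨j, hj, -⟩
    simp at hj
  · rintro ⟨h0, h⟩ i hi
    rcases h i hi with hi0 | hj
    · have : i = 0 := Fin.ext hi0
      subst this
      exact absurd hi h0
    · exact hj

lemma metallic_cons {a n : ℕ} (c : Fin (a+1)) (α : Fin n → Fin (a+1)) :
    MetallicOK a (n+1) (Fin.cons c α) ↔ ((c : ℕ) ≠ a ∧ Ctx a n c α) := by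
  rw [metallic_iff_ok2, ok2_cons]
  simp [Fin.cons_zero]


variable {X : Type*} [Fintype X] [DecidableEq X] {n : ℕ}

/-- Decompose a subtype of length-`(n+1)` tuples fiberwise over the head. -/
lemma card_head (P : (Fin (n+1) → X) → Prop) [DecidablePred P]
    (Q : X → (Fin n → X) → Prop) [∀ c, DecidablePred (Q c)]
    (h : ∀ c α, P (Fin.cons c α) ↔ Q c α) :
    Fintype.card {β // P β} = ∑ c : X, Fintype.card {α // Q c α} := by
  rw [← Fintype.card_sigma]
  apply Fintype.card_congr
  refine Equiv.trans ?_ (Equiv.subtypeProdEquivSigmaSubtype Q)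
  exact {
    toFun := fun β => ⟨(β.1 0, Fin.tail β.1), by
      have := β.2
      rw [← Fin.cons_self_tail β.1] at this
      exact (h _ _).mp this⟩
    invFun := fun p => ⟨Fin.cons p.1.1 p.1.2, (h _ _).mpr p.2⟩
    left_inv := fun β => Subtype.ext (Fin.cons_self_tail β.1)
    right_inv := fun p => Subtype.ext (by
      ext : 1
      · simp
      · simp [Fin.tail_cons]) }

/-- Pair version. -/
lemma card_head2 (P : ((Fin (n+1) → X) × (Fin (n+1) → X)) → Prop) [DecidablePred P]
    (Q : X × X → ((Fin n → X) × (Fin n → X)) → Prop) [∀ c, DecidablePred (Q c)]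
    (h : ∀ c d α β, P (Fin.cons c α, Fin.cons d β) ↔ Q (c, d) (α, β)) :
    Fintype.card {p // P p} = ∑ cd : X × X, Fintype.card {q // Q cd q} := by
  rw [← Fintype.card_sigma]
  apply Fintype.card_congr
  refine Equiv.trans ?_ (Equiv.subtypeProdEquivSigmaSubtype (fun cd q => Q cd q))
  exact {
    toFun := fun p => ⟨((p.1.1 0, p.1.2 0), (Fin.tail p.1.1, Fin.tail p.1.2)), by
      refine (h _ _ _ _).mp ?_
      have := p.2
      rwa [show (Fin.cons (p.1.1 0) (Fin.tail p.1.1), Fin.cons (p.1.2 0) (Fin.tail p.1.2))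
          = p.1 by ext : 1 <;> exact Fin.cons_self_tail _]⟩
    invFun := fun q => ⟨(Fin.cons q.1.1.1 q.1.2.1, Fin.cons q.1.1.2 q.1.2.2),
      (h _ _ _ _).mpr (by simpa using q.2)⟩
    left_inv := fun p => Subtype.ext (by
      ext : 1 <;> exact Fin.cons_self_tail _)
    right_inv := fun q => Subtype.ext (by
      ext : 2 <;> simp [Fin.tail_cons]) }


lemma sum_dist_eq_zero_iff {n m : ℕ} (α β : Fin n → Fin (m+1)) :
    (∑ i : Fin n, Nat.dist (α i : ℕ) (β i : ℕ)) = 0 ↔ α = β := by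
  rw [Finset.sum_eq_zero_iff]
  constructor
  · intro h
    funext i
    exact Fin.ext (Nat.eq_of_dist_eq_zero (h i (Finset.mem_univ i)))
  · rintro rfl i -
    exact Nat.dist_self _

lemma adj_cons {a n : ℕ} (c d : Fin (a+1)) (α β : Fin n → Fin (a+1)) :
    (∑ i : Fin (n+1), Nat.dist ((Fin.cons c α : Fin (n+1) → Fin (a+1)) i : ℕ) ((Fin.cons d β : Fin (n+1) → Fin (a+1)) i : ℕ)) = 1 ↔
      ((Nat.dist (c : ℕ) (d : ℕ) = 1 ∧ α = β) ∨
        (c = d ∧ (∑ i : Fin n, Nat.dist (α i : ℕ) (β i : ℕ)) = 1)) := by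
  rw [Fin.sum_univ_succ]
  simp only [Fin.cons_zero, Fin.cons_succ]
  have h0 : (∑ i : Fin n, Nat.dist (α i : ℕ) (β i : ℕ)) = 0 ↔ α = β :=
    sum_dist_eq_zero_iff α β
  have hcd : Nat.dist (c : ℕ) (d : ℕ) = 0 ↔ c = d := by
    constructor
    · intro h; exact Fin.ext (Nat.eq_of_dist_eq_zero h)
    · rintro rfl; exact Nat.dist_self _
  constructor
  · intro h
    rcases Nat.add_eq_one_iff.mp h with ⟨h1, h2⟩ | ⟨h1, h2⟩
    · exact Or.inr ⟨hcd.mp h1, h2⟩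
    · exact Or.inl ⟨h1, h0.mp h2⟩
  · rintro (⟨h1, h2⟩ | ⟨h1, h2⟩)
    · rw [h0.mpr h2, h1]
    · rw [hcd.mpr h1]; omega

/-- `∑_{i < k} (if i = 0 then y else z) = y + (k-1)z` for `k ≥ 1`. -/
lemma sum_range_ite (y z : ℕ) : ∀ k : ℕ, 1 ≤ k →
    (∑ i ∈ Finset.range k, (if i = 0 then y else z)) = y + (k - 1) * z := by
  intro k
  induction k with
  | zero => intro h; exact absurd h (by omega)
  | succ k ih =>
    intro _
    rcases Nat.eq_zero_or_pos k with rfl | hk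
    · simp
    · rw [Finset.sum_range_succ, ih hk, if_neg (by omega)]
      have : ∃ m, k = m + 1 := ⟨k - 1, by omega⟩
      rcases this with ⟨m, rfl⟩
      simp [Nat.add_sub_cancel]
      ring

lemma sum_fin_ite' {a : ℕ} (y z : ℕ) :
    (∑ c : Fin (a+1), (if (c : ℕ) = 0 then y else z)) = y + a * z := by
  rw [Fin.sum_univ_eq_sum_range (fun i => if i = 0 then y else z) (a+1),
    sum_range_ite y z (a+1) (by omega)]
  simp

lemma sum_fin_ite {a : ℕ} (ha : 1 ≤ a) (x y z : ℕ) :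
    (∑ c : Fin (a+1), (if (c : ℕ) = a then x else if (c : ℕ) = 0 then y else z))
      = x + y + (a - 1) * z := by
  rw [Fin.sum_univ_eq_sum_range (fun i => if i = a then x else if i = 0 then y else z) (a+1),
    Finset.sum_range_succ]
  rw [if_pos rfl]
  rw [Finset.sum_congr rfl (fun i hi => by
    rw [if_neg (by simp at hi; omega)])]
  rw [sum_range_ite y z a ha]
  ring


lemma card_dist_pairs (m k : ℕ) (hk : k ≤ m + 1) :
    ((Finset.univ : Finset (Fin (m+1) × Fin (m+1))).filter fun p =>
      Nat.dist (p.1 : ℕ) (p.2 : ℕ) = 1 ∧ (p.1 : ℕ) < k ∧ (p.2 : ℕ) < k).card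
      = 2 * (k - 1) := by
  have hcard : ((Finset.range (k-1)) ×ˢ (Finset.range 2)).card = 2 * (k - 1) := by
    rw [Finset.card_product, Finset.card_range, Finset.card_range]; ring
  rw [← hcard]
  refine Finset.card_bij'
    (i := fun p _ => (min (p.1 : ℕ) (p.2 : ℕ), if (p.1 : ℕ) < (p.2 : ℕ) then 1 else 0))
    (j := fun q hq =>
      have h1 : q.1 < k - 1 := by
        simpa using (Finset.mem_product.mp hq).1
      have h2 : q.2 < 2 := by
        simpa using (Finset.mem_product.mp hq).2
      ((⟨q.1 + (1 - q.2), by omega⟩ : Fin (m+1)), (⟨q.1 + q.2, by omega⟩ : Fin (m+1))))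
    ?_ ?_ ?_ ?_
  · intro p hp
    rw [Finset.mem_filter] at hp
    simp only [Finset.mem_filter, Finset.mem_univ, true_and, Nat.dist] at hp
    simp only [Finset.mem_product, Finset.mem_range]
    constructor
    · omega
    · split <;> omega
  · intro q hq
    have h1 : q.1 < k - 1 := by simpa using (Finset.mem_product.mp hq).1
    have h2 : q.2 < 2 := by simpa using (Finset.mem_product.mp hq).2
    rw [Finset.mem_filter]
    simp only [Finset.mem_filter, Finset.mem_univ, true_and, Nat.dist]
    omega
  · intro p hp
    rw [Finset.mem_filter] at hp
    simp only [Finset.mem_filter, Finset.mem_univ, true_and, Nat.dist] at hp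
    ext : 1 <;> simp only <;> split <;> (apply Fin.ext; simp; omega)
  · intro q hq
    have h1 : q.1 < k - 1 := by simpa using (Finset.mem_product.mp hq).1
    have h2 : q.2 < 2 := by simpa using (Finset.mem_product.mp hq).2
    ext : 1 <;> simp only
    · omega
    · split <;> omega

-- chunk 5: definitions and small helper lemmas
section Counts

variable {a n : ℕ}

def adjp (a n : ℕ) (p : (Fin n → Fin (a+1)) × (Fin n → Fin (a+1))) : Prop :=
  (∑ i : Fin n, Nat.dist (p.1 i : ℕ) (p.2 i : ℕ)) = 1

instance : DecidablePred (adjp a n) := fun p => by unfold adjp; infer_instance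

def sV (a n : ℕ) : ℕ := Fintype.card {α : Fin n → Fin (a+1) // MetallicOK a n α}
def wV (a n : ℕ) : ℕ := Fintype.card {α : Fin n → Fin (a+1) // Ok2 a n α}
def DV (a n : ℕ) : ℕ := Fintype.card
  {p : (Fin n → Fin (a+1)) × (Fin n → Fin (a+1)) //
    MetallicOK a n p.1 ∧ MetallicOK a n p.2 ∧ adjp a n p}
def BV (a n : ℕ) : ℕ := Fintype.card
  {p : (Fin n → Fin (a+1)) × (Fin n → Fin (a+1)) //
    Ok2 a n p.1 ∧ Ok2 a n p.2 ∧ adjp a n p}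

lemma ctx_iff_metallic {c : Fin (a+1)} (hc : (c : ℕ) ≠ 0) (α : Fin n → Fin (a+1)) :
    Ctx a n c α ↔ MetallicOK a n α :=
  ⟨fun h => h.2 hc, fun h => ⟨fun h0 => absurd h0 hc, fun _ => h⟩⟩

lemma ctx_iff_ok2 {c : Fin (a+1)} (hc : (c : ℕ) = 0) (α : Fin n → Fin (a+1)) :
    Ctx a n c α ↔ Ok2 a n α :=
  ⟨fun h => h.1 hc, fun h => ⟨fun _ => h, fun h0 => absurd hc h0⟩⟩

lemma ctx_merge {c d : Fin (a+1)} (hcd : (c : ℕ) ≠ (d : ℕ)) (α : Fin n → Fin (a+1)) :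
    (Ctx a n c α ∧ Ctx a n d α) ↔ MetallicOK a n α := by
  constructor
  · rintro ⟨h1, h2⟩
    by_cases hc : (c : ℕ) = 0
    · exact h2.2 (by omega)
    · exact h1.2 hc
  · intro h
    exact ⟨⟨fun _ => metallic_ok2 h, fun _ => h⟩, ⟨fun _ => metallic_ok2 h, fun _ => h⟩⟩

lemma card_diag_pairs {T : Type*} [Fintype T] [DecidableEq T] (M : T → Prop) [DecidablePred M] :
    Fintype.card {q : T × T // M q.1 ∧ q.1 = q.2} = Fintype.card {x : T // M x} := by
  apply Fintype.card_congr
  exact {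
    toFun := fun q => ⟨q.1.1, q.2.1⟩
    invFun := fun x => ⟨(x.1, x.1), x.2, rfl⟩
    left_inv := fun q => by
      obtain ⟨⟨u, v⟩, hM, h⟩ := q
      simp only at h
      subst h
      rfl
    right_inv := fun x => rfl }

end Counts
-- chunk 6 : vertex recurrences
lemma E1 {a n : ℕ} (ha : 1 ≤ a) : sV a (n+1) = wV a n + (a-1) * sV a n := by
  rw [sV, card_head (MetallicOK a (n+1)) (fun c α => (c : ℕ) ≠ a ∧ Ctx a n c α)
    metallic_cons]
  have hfib : ∀ c : Fin (a+1), Fintype.card {α // (c : ℕ) ≠ a ∧ Ctx a n c α}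
      = if (c : ℕ) = a then 0 else if (c : ℕ) = 0 then wV a n else sV a n := by
    intro c
    by_cases hca : (c : ℕ) = a
    · rw [if_pos hca]
      exact Fintype.card_eq_zero_iff.mpr ⟨fun x => x.2.1 hca⟩
    · rw [if_neg hca]
      by_cases hc0 : (c : ℕ) = 0
      · rw [if_pos hc0, wV]
        exact Fintype.card_congr (Equiv.subtypeEquivRight fun α => by
          rw [ctx_iff_ok2 hc0]; exact and_iff_right hca)
      · rw [if_neg hc0, sV]
        exact Fintype.card_congr (Equiv.subtypeEquivRight fun α => by
          rw [ctx_iff_metallic hc0]; exact and_iff_right hca)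
  rw [Finset.sum_congr rfl (fun c _ => hfib c), sum_fin_ite ha 0 (wV a n) (sV a n)]
  simp

lemma E2 {a n : ℕ} : wV a (n+1) = wV a n + a * sV a n := by
  rw [wV, card_head (Ok2 a (n+1)) (Ctx a n) ok2_cons]
  have hfib : ∀ c : Fin (a+1), Fintype.card {α // Ctx a n c α}
      = if (c : ℕ) = 0 then wV a n else sV a n := by
    intro c
    by_cases hc0 : (c : ℕ) = 0
    · rw [if_pos hc0, wV]
      exact Fintype.card_congr (Equiv.subtypeEquivRight fun α => ctx_iff_ok2 hc0 α)
    · rw [if_neg hc0, sV]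
      exact Fintype.card_congr (Equiv.subtypeEquivRight fun α => ctx_iff_metallic hc0 α)
  rw [Finset.sum_congr rfl (fun c _ => hfib c), sum_fin_ite' (wV a n) (sV a n)]
-- chunk 7 : edge pair recurrences
lemma E3 {a n : ℕ} (ha : 1 ≤ a) :
    DV a (n+1) = BV a n + (a-1) * DV a n + 2*(a-1) * sV a n := by
  classical
  have h3 : ∀ (c d : Fin (a+1)) (α β : Fin n → Fin (a+1)),
      (MetallicOK a (n+1) (Fin.cons c α) ∧ MetallicOK a (n+1) (Fin.cons d β) ∧
        adjp a (n+1) (Fin.cons c α, Fin.cons d β)) ↔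
      (((c : ℕ) ≠ a ∧ Ctx a n c α) ∧ ((d : ℕ) ≠ a ∧ Ctx a n d β) ∧
        ((Nat.dist (c : ℕ) (d : ℕ) = 1 ∧ α = β) ∨ (c = d ∧ adjp a n (α, β)))) := by
    intro c d α β
    rw [metallic_cons, metallic_cons]
    unfold adjp
    rw [adj_cons]
  rw [DV, card_head2
    (fun p => MetallicOK a (n+1) p.1 ∧ MetallicOK a (n+1) p.2 ∧ adjp a (n+1) p)
    (fun cd q => ((cd.1 : ℕ) ≠ a ∧ Ctx a n cd.1 q.1) ∧ ((cd.2 : ℕ) ≠ a ∧ Ctx a n cd.2 q.2) ∧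
        ((Nat.dist (cd.1 : ℕ) (cd.2 : ℕ) = 1 ∧ q.1 = q.2) ∨ (cd.1 = cd.2 ∧ adjp a n q)))
    (fun c d α β => h3 c d α β)]
  have hfib : ∀ cd : Fin (a+1) × Fin (a+1),
      Fintype.card {q // ((cd.1 : ℕ) ≠ a ∧ Ctx a n cd.1 q.1) ∧
          ((cd.2 : ℕ) ≠ a ∧ Ctx a n cd.2 q.2) ∧
          ((Nat.dist (cd.1 : ℕ) (cd.2 : ℕ) = 1 ∧ q.1 = q.2) ∨ (cd.1 = cd.2 ∧ adjp a n q))}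
        = (if cd.1 = cd.2 then
            (if (cd.1 : ℕ) = a then 0 else if (cd.1 : ℕ) = 0 then BV a n else DV a n) else 0)
          + (if (Nat.dist (cd.1 : ℕ) (cd.2 : ℕ) = 1 ∧ (cd.1 : ℕ) < a ∧ (cd.2 : ℕ) < a)
              then sV a n else 0) := by
    rintro ⟨c, d⟩
    dsimp only
    by_cases hcd : c = d
    · subst hcd
      have hz : ¬(Nat.dist (c : ℕ) (c : ℕ) = 1 ∧ (c : ℕ) < a ∧ (c : ℕ) < a) := by
        simp [Nat.dist_self]
      rw [if_pos rfl, if_neg hz, add_zero]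
      by_cases hca : (c : ℕ) = a
      · rw [if_pos hca]
        exact Fintype.card_eq_zero_iff.mpr ⟨fun q => q.2.1.1 hca⟩
      · rw [if_neg hca]
        by_cases hc0 : (c : ℕ) = 0
        · rw [if_pos hc0, BV]
          refine Fintype.card_congr (Equiv.subtypeEquivRight fun q => ?_)
          constructor
          · rintro ⟨⟨-, h1⟩, ⟨-, h2⟩, (⟨hd, -⟩ | ⟨-, hadj⟩)⟩
            · exact absurd hd (by simp [Nat.dist_self])
            · exact ⟨(ctx_iff_ok2 hc0 _).mp h1, (ctx_iff_ok2 hc0 _).mp h2, hadj⟩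
          · rintro ⟨h1, h2, hadj⟩
            exact ⟨⟨hca, (ctx_iff_ok2 hc0 _).mpr h1⟩, ⟨hca, (ctx_iff_ok2 hc0 _).mpr h2⟩,
              Or.inr ⟨rfl, hadj⟩⟩
        · rw [if_neg hc0, DV]
          refine Fintype.card_congr (Equiv.subtypeEquivRight fun q => ?_)
          constructor
          · rintro ⟨⟨-, h1⟩, ⟨-, h2⟩, (⟨hd, -⟩ | ⟨-, hadj⟩)⟩
            · exact absurd hd (by simp [Nat.dist_self])
            · exact ⟨(ctx_iff_metallic hc0 _).mp h1, (ctx_iff_metallic hc0 _).mp h2, hadj⟩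
          · rintro ⟨h1, h2, hadj⟩
            exact ⟨⟨hca, (ctx_iff_metallic hc0 _).mpr h1⟩, ⟨hca, (ctx_iff_metallic hc0 _).mpr h2⟩,
              Or.inr ⟨rfl, hadj⟩⟩
    · rw [if_neg hcd, zero_add]
      by_cases hgood : Nat.dist (c : ℕ) (d : ℕ) = 1 ∧ (c : ℕ) < a ∧ (d : ℕ) < a
      · rw [if_pos hgood, sV]
        have hvne : (c : ℕ) ≠ (d : ℕ) := fun h => hcd (Fin.ext h)
        rw [← card_diag_pairs (MetallicOK a n)]
        refine Fintype.card_congr (Equiv.subtypeEquivRight fun q => ?_)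
        constructor
        · rintro ⟨⟨-, h1⟩, ⟨-, h2⟩, (⟨-, heq⟩ | ⟨hcc, -⟩)⟩
          · exact ⟨(ctx_merge hvne q.1).mp ⟨h1, by rw [heq]; exact h2⟩, heq⟩
          · exact absurd hcc hcd
        · rintro ⟨hM, heq⟩
          have hc := (ctx_merge hvne q.1).mpr hM
          exact ⟨⟨by omega, hc.1⟩, ⟨by omega, by rw [← heq]; exact hc.2⟩,
            Or.inl ⟨hgood.1, heq⟩⟩
      · rw [if_neg hgood]
        refine Fintype.card_eq_zero_iff.mpr ⟨fun q => ?_⟩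
        obtain ⟨⟨hca, -⟩, ⟨hda, -⟩, h⟩ := q.2
        rcases h with ⟨hdist, -⟩ | ⟨hcc, -⟩
        · have h1 := c.isLt
          have h2 := d.isLt
          exact hgood ⟨hdist, by omega, by omega⟩
        · exact hcd hcc
  rw [Finset.sum_congr rfl (fun cd _ => hfib cd), Finset.sum_add_distrib]
  have hs1 : (∑ cd : Fin (a+1) × Fin (a+1), (if cd.1 = cd.2 then
      (if (cd.1 : ℕ) = a then 0 else if (cd.1 : ℕ) = 0 then BV a n else DV a n) else 0))
      = BV a n + (a-1) * DV a n := by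
    rw [Fintype.sum_prod_type]
    simp only [Finset.sum_ite_eq, Finset.mem_univ, if_true]
    rw [sum_fin_ite ha 0 (BV a n) (DV a n)]
    omega
  have hs2 : (∑ cd : Fin (a+1) × Fin (a+1),
      (if (Nat.dist (cd.1 : ℕ) (cd.2 : ℕ) = 1 ∧ (cd.1 : ℕ) < a ∧ (cd.2 : ℕ) < a)
        then sV a n else 0)) = 2*(a-1) * sV a n := by
    rw [← Finset.sum_filter, Finset.sum_const, card_dist_pairs a a (by omega), smul_eq_mul]
  rw [hs1, hs2]

lemma E4 {a n : ℕ} (ha : 1 ≤ a) :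
    BV a (n+1) = BV a n + a * DV a n + 2*a * sV a n := by
  classical
  have h4 : ∀ (c d : Fin (a+1)) (α β : Fin n → Fin (a+1)),
      (Ok2 a (n+1) (Fin.cons c α) ∧ Ok2 a (n+1) (Fin.cons d β) ∧
        adjp a (n+1) (Fin.cons c α, Fin.cons d β)) ↔
      ((Ctx a n c α) ∧ (Ctx a n d β) ∧
        ((Nat.dist (c : ℕ) (d : ℕ) = 1 ∧ α = β) ∨ (c = d ∧ adjp a n (α, β)))) := by
    intro c d α β
    rw [ok2_cons, ok2_cons]
    unfold adjp
    rw [adj_cons]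
  rw [BV, card_head2
    (fun p => Ok2 a (n+1) p.1 ∧ Ok2 a (n+1) p.2 ∧ adjp a (n+1) p)
    (fun cd q => (Ctx a n cd.1 q.1) ∧ (Ctx a n cd.2 q.2) ∧
        ((Nat.dist (cd.1 : ℕ) (cd.2 : ℕ) = 1 ∧ q.1 = q.2) ∨ (cd.1 = cd.2 ∧ adjp a n q)))
    (fun c d α β => h4 c d α β)]
  have hfib : ∀ cd : Fin (a+1) × Fin (a+1),
      Fintype.card {q // (Ctx a n cd.1 q.1) ∧ (Ctx a n cd.2 q.2) ∧
          ((Nat.dist (cd.1 : ℕ) (cd.2 : ℕ) = 1 ∧ q.1 = q.2) ∨ (cd.1 = cd.2 ∧ adjp a n q))}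
        = (if cd.1 = cd.2 then
            (if (cd.1 : ℕ) = 0 then BV a n else DV a n) else 0)
          + (if Nat.dist (cd.1 : ℕ) (cd.2 : ℕ) = 1 then sV a n else 0) := by
    rintro ⟨c, d⟩
    dsimp only
    by_cases hcd : c = d
    · subst hcd
      have hz : ¬(Nat.dist (c : ℕ) (c : ℕ) = 1) := by simp [Nat.dist_self]
      rw [if_pos rfl, if_neg hz, add_zero]
      by_cases hc0 : (c : ℕ) = 0
      · rw [if_pos hc0, BV]
        refine Fintype.card_congr (Equiv.subtypeEquivRight fun q => ?_)
        constructor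
        · rintro ⟨h1, h2, (⟨hd, -⟩ | ⟨-, hadj⟩)⟩
          · exact absurd hd (by simp [Nat.dist_self])
          · exact ⟨(ctx_iff_ok2 hc0 _).mp h1, (ctx_iff_ok2 hc0 _).mp h2, hadj⟩
        · rintro ⟨h1, h2, hadj⟩
          exact ⟨(ctx_iff_ok2 hc0 _).mpr h1, (ctx_iff_ok2 hc0 _).mpr h2, Or.inr ⟨rfl, hadj⟩⟩
      · rw [if_neg hc0, DV]
        refine Fintype.card_congr (Equiv.subtypeEquivRight fun q => ?_)
        constructor
        · rintro ⟨h1, h2, (⟨hd, -⟩ | ⟨-, hadj⟩)⟩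
          · exact absurd hd (by simp [Nat.dist_self])
          · exact ⟨(ctx_iff_metallic hc0 _).mp h1, (ctx_iff_metallic hc0 _).mp h2, hadj⟩
        · rintro ⟨h1, h2, hadj⟩
          exact ⟨(ctx_iff_metallic hc0 _).mpr h1, (ctx_iff_metallic hc0 _).mpr h2,
            Or.inr ⟨rfl, hadj⟩⟩
    · rw [if_neg hcd, zero_add]
      by_cases hgood : Nat.dist (c : ℕ) (d : ℕ) = 1
      · rw [if_pos hgood, sV]
        have hvne : (c : ℕ) ≠ (d : ℕ) := fun h => hcd (Fin.ext h)
        rw [← card_diag_pairs (MetallicOK a n)]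
        refine Fintype.card_congr (Equiv.subtypeEquivRight fun q => ?_)
        constructor
        · rintro ⟨h1, h2, (⟨-, heq⟩ | ⟨hcc, -⟩)⟩
          · exact ⟨(ctx_merge hvne q.1).mp ⟨h1, by rw [heq]; exact h2⟩, heq⟩
          · exact absurd hcc hcd
        · rintro ⟨hM, heq⟩
          have hc := (ctx_merge hvne q.1).mpr hM
          exact ⟨hc.1, by rw [← heq]; exact hc.2, Or.inl ⟨hgood, heq⟩⟩
      · rw [if_neg hgood]
        refine Fintype.card_eq_zero_iff.mpr ⟨fun q => ?_⟩
        obtain ⟨-, -, h⟩ := q.2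
        rcases h with ⟨hdist, -⟩ | ⟨hcc, -⟩
        · exact hgood hdist
        · exact hcd hcc
  rw [Finset.sum_congr rfl (fun cd _ => hfib cd), Finset.sum_add_distrib]
  have hs1 : (∑ cd : Fin (a+1) × Fin (a+1), (if cd.1 = cd.2 then
      (if (cd.1 : ℕ) = 0 then BV a n else DV a n) else 0))
      = BV a n + a * DV a n := by
    rw [Fintype.sum_prod_type]
    simp only [Finset.sum_ite_eq, Finset.mem_univ, if_true]
    rw [sum_fin_ite' (BV a n) (DV a n)]
  have hs2 : (∑ cd : Fin (a+1) × Fin (a+1),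
      (if Nat.dist (cd.1 : ℕ) (cd.2 : ℕ) = 1 then sV a n else 0)) = 2*a * sV a n := by
    rw [← Finset.sum_filter, Finset.sum_const, smul_eq_mul]
    have : (Finset.univ.filter fun cd : Fin (a+1) × Fin (a+1) =>
        Nat.dist (cd.1 : ℕ) (cd.2 : ℕ) = 1).card = 2 * a := by
      rw [show (Finset.univ.filter fun cd : Fin (a+1) × Fin (a+1) =>
          Nat.dist (cd.1 : ℕ) (cd.2 : ℕ) = 1)
        = (Finset.univ.filter fun cd : Fin (a+1) × Fin (a+1) =>
          Nat.dist (cd.1 : ℕ) (cd.2 : ℕ) = 1 ∧ (cd.1 : ℕ) < a + 1 ∧ (cd.2 : ℕ) < a + 1) from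
        Finset.filter_congr (fun p _ => by simp [p.1.isLt, p.2.isLt])]
      rw [card_dist_pairs a (a+1) (by omega)]
      simp
    rw [this]
  rw [hs1, hs2]
-- chunk 8 : base cases
lemma sV0 {a : ℕ} : sV a 0 = 1 := by
  rw [sV, Fintype.card_eq_one_iff]
  exact ⟨⟨fun i => i.elim0, fun i => i.elim0⟩, fun y => Subtype.ext (funext fun i => i.elim0)⟩

lemma wV0 {a : ℕ} : wV a 0 = 1 := by
  rw [wV, Fintype.card_eq_one_iff]
  exact ⟨⟨fun i => i.elim0, fun i => i.elim0⟩, fun y => Subtype.ext (funext fun i => i.elim0)⟩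

lemma DV0 {a : ℕ} : DV a 0 = 0 := by
  rw [DV, Fintype.card_eq_zero_iff]
  exact ⟨fun q => absurd q.2.2.2 (by simp [adjp])⟩

lemma BV0 {a : ℕ} : BV a 0 = 0 := by
  rw [BV, Fintype.card_eq_zero_iff]
  exact ⟨fun q => absurd q.2.2.2 (by simp [adjp])⟩

lemma sV_card {a n : ℕ} : Fintype.card (MetallicVertex a n) = sV a n := rfl

lemma DV_eq {a n : ℕ} : DV a n = 2 * (metallicCube a n).edgeFinset.card := by
  rw [← SimpleGraph.sum_degrees_eq_twice_card_edges]
  have h1 : DV a n = Fintype.card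
      {p : MetallicVertex a n × MetallicVertex a n // (metallicCube a n).Adj p.1 p.2} := by
    apply Fintype.card_congr
    exact {
      toFun := fun q => ⟨(⟨q.1.1, q.2.1⟩, ⟨q.1.2, q.2.2.1⟩), q.2.2.2⟩
      invFun := fun p => ⟨(p.1.1.1, p.1.2.1), p.1.1.2, p.1.2.2, p.2⟩
      left_inv := fun q => rfl
      right_inv := fun p => rfl }
  rw [h1, Fintype.card_congr (Equiv.subtypeProdEquivSigmaSubtype
    (fun u v : MetallicVertex a n => (metallicCube a n).Adj u v)), Fintype.card_sigma]
  apply Finset.sum_congr rfl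
  intro u _
  rw [← SimpleGraph.card_neighborSet_eq_degree]
  exact Fintype.card_congr (Equiv.subtypeEquivRight (fun v => Iff.rfl))

end MetAux

/-- `e^a_0 = 0`, `e^a_1 = a − 1`, and for `n ≥ 2`,
`e^a_n = a·e^a_{n−1} + e^a_{n−2} + s^a_n − s^a_{n−1}`. -/
theorem metallic_edge_recurrence (a : ℕ) (ha : 1 ≤ a) :
    (metallicCube a 0).edgeFinset.card = 0 ∧
    (metallicCube a 1).edgeFinset.card = a - 1 ∧
    ∀ n : ℕ, 2 ≤ n →
      ((metallicCube a n).edgeFinset.card : ℤ) =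
        a * (metallicCube a (n - 1)).edgeFinset.card +
          (metallicCube a (n - 2)).edgeFinset.card +
          Fintype.card (MetallicVertex a n) -
          Fintype.card (MetallicVertex a (n - 1)) := by
  obtain ⟨b, rfl⟩ : ∃ b, a = b + 1 := ⟨a - 1, by omega⟩
  refine ⟨?_, ?_, ?_⟩
  · have h := MetAux.DV_eq (a := b+1) (n := 0)
    rw [MetAux.DV0] at h
    omega
  · have h1 : MetAux.DV (b+1) 1 = 2 * b := by
      have h := MetAux.E3 (a := b+1) (n := 0) ha
      rw [MetAux.BV0, MetAux.DV0, MetAux.sV0] at h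
      simpa using h
    have h := MetAux.DV_eq (a := b+1) (n := 1)
    rw [h1] at h
    simp only [Nat.add_sub_cancel]
    omega
  · intro n hn
    obtain ⟨m, rfl⟩ : ∃ m, n = m + 2 := ⟨n - 2, by omega⟩
    have hidx1 : m + 2 - 1 = m + 1 := rfl
    have hidx2 : m + 2 - 2 = m := rfl
    rw [hidx1, hidx2, MetAux.sV_card, MetAux.sV_card]
    -- abbreviations
    set s0 := MetAux.sV (b+1) m with hs0
    set s1 := MetAux.sV (b+1) (m+1) with hs1
    set s2 := MetAux.sV (b+1) (m+2) with hs2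
    -- vertex recurrences
    have e1m : s1 = MetAux.wV (b+1) m + b * s0 := by
      simpa using MetAux.E1 (a := b+1) (n := m) ha
    have e2m : MetAux.wV (b+1) (m+1) = MetAux.wV (b+1) m + (b+1) * s0 := by
      simpa using MetAux.E2 (a := b+1) (n := m)
    have e1m1 : s2 = MetAux.wV (b+1) (m+1) + b * s1 := by
      simpa using MetAux.E1 (a := b+1) (n := m+1) ha
    have hsrec : s2 = (b+1) * s1 + s0 := by
      have hr1 : (b+1) * s0 = b * s0 + s0 := by ring
      have hr2 : (b+1) * s1 = b * s1 + s1 := by ring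
      omega
    -- edge pair recurrences
    set D0 := MetAux.DV (b+1) m with hD0
    set D1 := MetAux.DV (b+1) (m+1) with hD1
    set D2 := MetAux.DV (b+1) (m+2) with hD2
    have e3m : D1 = MetAux.BV (b+1) m + b * D0 + 2 * b * s0 := by
      simpa using MetAux.E3 (a := b+1) (n := m) ha
    have e4m : MetAux.BV (b+1) (m+1) = MetAux.BV (b+1) m + (b+1) * D0 + 2 * (b+1) * s0 := by
      simpa using MetAux.E4 (a := b+1) (n := m) ha
    have e3m1 : D2 = MetAux.BV (b+1) (m+1) + b * D1 + 2 * b * s1 := by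
      simpa using MetAux.E3 (a := b+1) (n := m+1) ha
    have hDrec : D2 = (b+1) * D1 + D0 + 2 * b * s1 + 2 * s0 := by
      have hr1 : (b+1) * D0 = b * D0 + D0 := by ring
      have hr2 : (b+1) * D1 = b * D1 + D1 := by ring
      have hr3 : 2 * (b+1) * s0 = 2 * b * s0 + 2 * s0 := by ring
      omega
    -- relate to edge counts
    set E2 := (metallicCube (b+1) (m+2)).edgeFinset.card with hE2
    set E1 := (metallicCube (b+1) (m+1)).edgeFinset.card with hE1
    set E0 := (metallicCube (b+1) m).edgeFinset.card with hE0
    have f2 : D2 = 2 * E2 := MetAux.DV_eq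
    have f1 : D1 = 2 * E1 := MetAux.DV_eq
    have f0 : D0 = 2 * E0 := MetAux.DV_eq
    -- go to ℤ and cancel the factor 2
    refine mul_left_cancel₀ (show (2:ℤ) ≠ 0 by norm_num) ?_
    have hsrecz : (s2 : ℤ) = (b+1) * s1 + s0 := by exact_mod_cast hsrec
    have hDrecz : (D2 : ℤ) = (b+1) * D1 + D0 + 2 * b * s1 + 2 * s0 := by exact_mod_cast hDrec
    have f2z : (D2 : ℤ) = 2 * (E2 : ℤ) := by exact_mod_cast f2
    have f1z : (D1 : ℤ) = 2 * (E1 : ℤ) := by exact_mod_cast f1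
    have f0z : (D0 : ℤ) = 2 * (E0 : ℤ) := by exact_mod_cast f0
    have key1 : ((b : ℤ) + 1) * (D1 : ℤ) = 2 * (((b : ℤ) + 1) * (E1 : ℤ)) := by
      rw [f1z]; ring
    have key2 : ((b : ℤ) + 1) * (s1 : ℤ) = (b : ℤ) * (s1 : ℤ) + (s1 : ℤ) := by ring
    push_cast
    linarith [hsrecz, hDrecz, f2z, f0z, key1, key2]
end

section
/- For every integer a ≥ 1 and n ≥ 1, the number of edges of the metallic cube Π^a_n equals Σ_{k=0}^{n} (−1)^{n+k} · ⌈(n+k)/2⌉ · C(⌊(n+k)/2⌋, k) · a^k. -/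
/-- validity with initial allowance `b` (letter `a` allowed at position 0 iff `b`). -/
def okf (a : ℕ) (b : Bool) {n : ℕ} (α : Fin n → Fin (a + 1)) : Prop :=
  ∀ i : Fin n, (α i : ℕ) = a →
    ((i : ℕ) = 0 ∧ b = true) ∨ ∃ j : Fin n, (j : ℕ) + 1 = (i : ℕ) ∧ (α j : ℕ) = 0

instance (a : ℕ) (b : Bool) (n : ℕ) : DecidablePred (okf a b (n := n)) := fun α => by
  unfold okf; infer_instance

lemma okf_mono {a : ℕ} {b b' : Bool} {n : ℕ} {α : Fin n → Fin (a + 1)}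
    (hb : b = true → b' = true) (h : okf a b α) : okf a b' α := by
  intro i hi
  rcases h i hi with ⟨h1, h2⟩ | h2
  · exact Or.inl ⟨h1, hb h2⟩
  · exact Or.inr h2

lemma okf_and {a : ℕ} {b b' : Bool} {n : ℕ} {α : Fin n → Fin (a + 1)} :
    (okf a b α ∧ okf a b' α) ↔ okf a (b && b') α := by
  constructor
  · rintro ⟨h1, h2⟩ i hi
    rcases h1 i hi with ⟨g1, g2⟩ | g
    · rcases h2 i hi with ⟨f1, f2⟩ | f
      · exact Or.inl ⟨g1, by simp [g2, f2]⟩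
      · exact Or.inr f
    · exact Or.inr g
  · intro h
    exact ⟨okf_mono (by simp +contextual [Bool.and_eq_true]) h,
      okf_mono (by simp +contextual [Bool.and_eq_true]) h⟩

lemma okf_cons {a : ℕ} {b : Bool} {n : ℕ} (x : Fin (a + 1)) (α : Fin n → Fin (a + 1)) :
    okf a b (Fin.cons x α) ↔
      (((x : ℕ) = a → b = true) ∧ okf a (decide ((x : ℕ) = 0)) α) := by
  constructor
  · intro h
    refine ⟨fun hx => ?_, fun i hi => ?_⟩
    · rcases h 0 (by simpa using hx) with ⟨_, hb⟩ | ⟨j, hj, _⟩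
      · exact hb
      · exact absurd hj (by simp)
    · rcases h i.succ (by simpa using hi) with ⟨h0, _⟩ | ⟨j, hj, hj0⟩
      · exact absurd h0 (by simp)
      · -- j : Fin (n+1) with j + 1 = i + 1, so (j : ℕ) = (i : ℕ)
        rcases Fin.eq_zero_or_eq_succ j with rfl | ⟨j', rfl⟩
        · -- j = 0 : then i = 0 and x = 0
          left
          constructor
          · simp at hj; omega
          · simp only [Fin.cons_zero] at hj0
            simp [hj0]
        · right
          refine ⟨j', by simpa using hj, by simpa using hj0⟩
  · rintro ⟨hx, h⟩ i hi
    rcases Fin.eq_zero_or_eq_succ i with rfl | ⟨i', rfl⟩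
    · simp only [Fin.cons_zero] at hi
      exact Or.inl ⟨rfl, hx hi⟩
    · simp only [Fin.cons_succ] at hi
      rcases h i' hi with ⟨h0, hb⟩ | ⟨j, hj, hj0⟩
      · -- i' = 0 and x = 0
        right
        have hx0 : (x : ℕ) = 0 := of_decide_eq_true hb
        exact ⟨0, by simp [Fin.val_succ]; omega, by simpa using hx0⟩
      · right
        refine ⟨j.succ, ?_, by simpa using hj0⟩
        simp only [Fin.val_succ]
        omega

lemma piFinSucc_symm_cons {n : ℕ} {X : Type*} (x : X) (β : Fin n → X) :
    (Fin.consEquiv (fun _ : Fin (n+1) => X)) (x, β) = Fin.cons x β := by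
  rfl

def Vc (a : ℕ) (b : Bool) (n : ℕ) : ℕ :=
  Fintype.card {α : Fin n → Fin (a + 1) // okf a b α}

def Ec (a : ℕ) (b : Bool) (n : ℕ) : ℕ :=
  Fintype.card {p : (Fin n → Fin (a + 1)) × (Fin n → Fin (a + 1)) //
    okf a b p.1 ∧ okf a b p.2 ∧ (∑ i : Fin n, Nat.dist (p.1 i : ℕ) (p.2 i : ℕ)) = 1}

lemma Vc_zero (a : ℕ) (b : Bool) : Vc a b 0 = 1 := by
  rw [Vc]
  have : ∀ α : Fin 0 → Fin (a+1), okf a b α := by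
    intro α i
    exact absurd i.2 (by omega)
  simp [Fintype.card_subtype, Finset.filter_true_of_mem (fun x _ => this x)]

lemma Ec_zero (a : ℕ) (b : Bool) : Ec a b 0 = 0 := by
  rw [Ec]
  simp [Fintype.card_subtype, Finset.filter_false_of_mem]

lemma Vc_eq_sum (a : ℕ) (b : Bool) (n : ℕ) :
    Vc a b n = ∑ α : Fin n → Fin (a + 1), if okf a b α then 1 else 0 := by
  rw [Vc, Fintype.card_subtype, Finset.card_filter]

lemma Ec_eq_sum (a : ℕ) (b : Bool) (n : ℕ) :
    Ec a b n = ∑ u : Fin n → Fin (a + 1), ∑ v : Fin n → Fin (a + 1),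
      if okf a b u ∧ okf a b v ∧ (∑ i : Fin n, Nat.dist (u i : ℕ) (v i : ℕ)) = 1
      then 1 else 0 := by
  rw [Ec, Fintype.card_subtype, Finset.card_filter, Fintype.sum_prod_type]

lemma Vc_succ_sum (a : ℕ) (b : Bool) (n : ℕ) :
    Vc a b (n + 1) = ∑ x : Fin (a + 1),
      if ((x : ℕ) = a → b = true) then Vc a (decide ((x : ℕ) = 0)) n else 0 := by
  rw [Vc_eq_sum, ← Equiv.sum_comp (Fin.consEquiv (fun _ : Fin (n+1) => Fin (a+1))), Fintype.sum_prod_type]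
  refine Fintype.sum_congr _ _ (fun x => ?_)
  by_cases hx : ((x : ℕ) = a → b = true)
  · rw [if_pos hx, Vc_eq_sum]
    refine Fintype.sum_congr _ _ (fun β => ?_)
    have h1 : okf a b ((Fin.consEquiv (fun _ : Fin (n+1) => Fin (a+1))) (x, β)) ↔
        okf a (decide ((x : ℕ) = 0)) β := by
      rw [piFinSucc_symm_cons, okf_cons]
      exact and_iff_right hx
    simp only [h1]
  · rw [if_neg hx]
    refine Finset.sum_eq_zero (fun β _ => ?_)
    have h1 : ¬ okf a b ((Fin.consEquiv (fun _ : Fin (n+1) => Fin (a+1))) (x, β)) := by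
      rw [piFinSucc_symm_cons]
      exact fun h => hx ((okf_cons x β).1 h).1
    rw [if_neg h1]

lemma Vc_succ (a' : ℕ) (b : Bool) (n : ℕ) :
    Vc (a'+1) b (n+1) = Vc (a'+1) true n + a' * Vc (a'+1) false n +
      (if b then Vc (a'+1) false n else 0) := by
  rw [Vc_succ_sum,
    Fin.sum_univ_eq_sum_range
      (fun m => if (m = a'+1 → b = true) then Vc (a'+1) (decide (m = 0)) n else 0) (a'+1+1),
    Finset.sum_range_succ', Finset.sum_range_succ]
  have h0 : (if ((0:ℕ) = a'+1 → b = true) then Vc (a'+1) (decide ((0:ℕ) = 0)) n else 0)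
      = Vc (a'+1) true n := by
    rw [if_pos (by omega)]
    norm_num
  have hlast : (if (a'+1 = a'+1 → b = true) then Vc (a'+1) (decide (a'+1 = 0)) n else 0)
      = (if b then Vc (a'+1) false n else 0) := by
    have : decide (a'+1 = 0) = false := by simp
    rw [this]
    by_cases hb : b = true
    · rw [if_pos (fun _ => hb), if_pos hb]
    · rw [if_neg (by simp [hb]), if_neg (by simp [hb])]
  have hmid : ∀ k ∈ Finset.range a',
      (if (k+1 = a'+1 → b = true) then Vc (a'+1) (decide (k+1 = 0)) n else 0)
        = Vc (a'+1) false n := by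
    intro k hk
    simp only [Finset.mem_range] at hk
    rw [if_pos (by omega)]
    norm_num
  rw [Finset.sum_congr rfl hmid, h0, hlast, Finset.sum_const, smul_eq_mul, Finset.card_range]
  ring

lemma sum_gate (a' : ℕ) (b : Bool) (g : Bool → ℕ) :
    (∑ x : Fin (a'+1+1), if ((x:ℕ) = a'+1 → b = true) then g (decide ((x:ℕ) = 0)) else 0)
      = g true + a' * g false + (if b then g false else 0) := by
  rw [Fin.sum_univ_eq_sum_range
      (fun m => if (m = a'+1 → b = true) then g (decide (m = 0)) else 0) (a'+1+1),
    Finset.sum_range_succ', Finset.sum_range_succ]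
  have h0 : (if ((0:ℕ) = a'+1 → b = true) then g (decide ((0:ℕ) = 0)) else 0) = g true := by
    rw [if_pos (by omega)]; norm_num
  have hlast : (if (a'+1 = a'+1 → b = true) then g (decide (a'+1 = 0)) else 0)
      = (if b then g false else 0) := by
    have : decide (a'+1 = 0) = false := by simp
    rw [this]
    by_cases hb : b = true
    · rw [if_pos (fun _ => hb), if_pos hb]
    · rw [if_neg (by simp [hb]), if_neg (by simp [hb])]
  have hmid : ∀ k ∈ Finset.range a',
      (if (k+1 = a'+1 → b = true) then g (decide (k+1 = 0)) else 0) = g false := by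
    intro k hk
    simp only [Finset.mem_range] at hk
    rw [if_pos (by omega)]
    norm_num
  rw [Finset.sum_congr rfl hmid, h0, hlast, Finset.sum_const, smul_eq_mul, Finset.card_range]
  ring

lemma dist_count (m : ℕ) :
    (∑ x ∈ Finset.range (m+1), ∑ y ∈ Finset.range (m+1),
      if Nat.dist x y = 1 then 1 else 0) = 2 * m := by
  induction m with
  | zero => decide
  | succ m ih =>
    rw [Finset.sum_range_succ]
    have hinner : ∀ x, (∑ y ∈ Finset.range (m+2), if Nat.dist x y = 1 then (1:ℕ) else 0)
        = (∑ y ∈ Finset.range (m+1), if Nat.dist x y = 1 then 1 else 0)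
          + (if Nat.dist x (m+1) = 1 then 1 else 0) := fun x => Finset.sum_range_succ _ _
    rw [Finset.sum_congr rfl (fun x _ => hinner x), Finset.sum_add_distrib, ih]
    have h1 : (∑ x ∈ Finset.range (m+1), if Nat.dist x (m+1) = 1 then (1:ℕ) else 0) = 1 := by
      have : ∀ x ∈ Finset.range (m+1),
          (if Nat.dist x (m+1) = 1 then (1:ℕ) else 0) = (if x = m then 1 else 0) := by
        intro x hx
        simp only [Finset.mem_range] at hx
        have : Nat.dist x (m+1) = 1 ↔ x = m := by
          simp only [Nat.dist]; omega
        simp [this]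
      rw [Finset.sum_congr rfl this, Finset.sum_ite_eq' (Finset.range (m+1)) m (fun _ => 1),
        if_pos (by simp)]
    have h2 : (∑ y ∈ Finset.range (m+2), if Nat.dist (m+1) y = 1 then (1:ℕ) else 0) = 1 := by
      have : ∀ y ∈ Finset.range (m+2),
          (if Nat.dist (m+1) y = 1 then (1:ℕ) else 0) = (if y = m then 1 else 0) := by
        intro y hy
        simp only [Finset.mem_range] at hy
        have : Nat.dist (m+1) y = 1 ↔ y = m := by
          simp only [Nat.dist]; omega
        simp [this]
      rw [Finset.sum_congr rfl this, Finset.sum_ite_eq' (Finset.range (m+2)) m (fun _ => 1),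
        if_pos (by simp)]
    rw [h1, h2]
    ring

lemma dist_count_restr (m : ℕ) :
    (∑ x ∈ Finset.range (m+2), ∑ y ∈ Finset.range (m+2),
      if (Nat.dist x y = 1 ∧ x ≠ m+1 ∧ y ≠ m+1) then 1 else 0) = 2 * m := by
  rw [Finset.sum_range_succ]
  have hz : (∑ y ∈ Finset.range (m+2),
      if (Nat.dist (m+1) y = 1 ∧ m+1 ≠ m+1 ∧ y ≠ m+1) then (1:ℕ) else 0) = 0 := by
    refine Finset.sum_eq_zero (fun y _ => ?_)
    rw [if_neg (by tauto)]
  rw [hz, add_zero]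
  have : ∀ x ∈ Finset.range (m+1),
      (∑ y ∈ Finset.range (m+2), if (Nat.dist x y = 1 ∧ x ≠ m+1 ∧ y ≠ m+1) then (1:ℕ) else 0)
        = ∑ y ∈ Finset.range (m+1), if Nat.dist x y = 1 then 1 else 0 := by
    intro x hx
    simp only [Finset.mem_range] at hx
    rw [Finset.sum_range_succ, if_neg (by tauto), add_zero]
    refine Finset.sum_congr rfl (fun y hy => ?_)
    simp only [Finset.mem_range] at hy
    have hiff : (Nat.dist x y = 1 ∧ x ≠ m+1 ∧ y ≠ m+1) ↔ Nat.dist x y = 1 := by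
      constructor
      · tauto
      · intro h; exact ⟨h, by omega, by omega⟩
    simp [hiff]
  rw [Finset.sum_congr rfl this, dist_count]

lemma sum_dist_eq_zero_iff {n a : ℕ} (u v : Fin n → Fin (a+1)) :
    (∑ i : Fin n, Nat.dist (u i : ℕ) (v i : ℕ)) = 0 ↔ u = v := by
  rw [Finset.sum_eq_zero_iff]
  constructor
  · intro h
    funext i
    exact Fin.ext (Nat.eq_of_dist_eq_zero (h i (Finset.mem_univ i)))
  · rintro rfl i _
    simp [Nat.dist_self]

lemma inner_eval (a n : ℕ) (b : Bool) (x y : Fin (a+1)) :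
    (∑ u : Fin n → Fin (a+1), ∑ v : Fin n → Fin (a+1),
      if (((x:ℕ) = a → b = true) ∧ okf a (decide ((x:ℕ) = 0)) u)
         ∧ ((((y:ℕ) = a → b = true) ∧ okf a (decide ((y:ℕ) = 0)) v)
         ∧ (Nat.dist (x:ℕ) (y:ℕ) + ∑ i : Fin n, Nat.dist (u i : ℕ) (v i : ℕ) = 1))
      then 1 else 0)
    = (if x = y then (if ((x:ℕ) = a → b = true) then Ec a (decide ((x:ℕ) = 0)) n else 0) else 0)
      + (if Nat.dist (x:ℕ) (y:ℕ) = 1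
         then (if (((x:ℕ) = a → b = true) ∧ ((y:ℕ) = a → b = true)) then Vc a false n else 0)
         else 0) := by
  by_cases hxy : x = y
  · subst hxy
    have hd : Nat.dist (x:ℕ) (x:ℕ) = 0 := Nat.dist_self _
    rw [if_pos rfl, hd, if_neg (show ¬(0:ℕ) = 1 by omega), add_zero]
    by_cases hA : ((x:ℕ) = a → b = true)
    · rw [if_pos hA, Ec_eq_sum]
      refine Fintype.sum_congr _ _ fun u => Fintype.sum_congr _ _ fun v => ?_
      refine if_congr ?_ rfl rfl
      simp only [zero_add]
      tauto
    · rw [if_neg hA]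
      refine Finset.sum_eq_zero fun u _ => Finset.sum_eq_zero fun v _ => ?_
      rw [if_neg (by tauto)]
  · rw [if_neg hxy]
    by_cases h1 : Nat.dist (x:ℕ) (y:ℕ) = 1
    · rw [if_pos h1, zero_add]
      have hd0 : Nat.dist (x:ℕ) (y:ℕ) ≠ 0 := fun h => hxy (Fin.ext (Nat.eq_of_dist_eq_zero h))
      have hbody : ∀ u v : Fin n → Fin (a+1),
          (if (((x:ℕ) = a → b = true) ∧ okf a (decide ((x:ℕ) = 0)) u)
             ∧ ((((y:ℕ) = a → b = true) ∧ okf a (decide ((y:ℕ) = 0)) v)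
             ∧ (Nat.dist (x:ℕ) (y:ℕ) + ∑ i : Fin n, Nat.dist (u i : ℕ) (v i : ℕ) = 1))
           then (1:ℕ) else 0)
          = if u = v then
              (if ((((x:ℕ) = a → b = true) ∧ ((y:ℕ) = a → b = true))
                  ∧ (okf a (decide ((x:ℕ) = 0)) u ∧ okf a (decide ((y:ℕ) = 0)) v))
               then 1 else 0) else 0 := by
        intro u v
        rw [← ite_and]
        refine if_congr ?_ rfl rfl
        constructor
        · rintro ⟨⟨hA1, hu⟩, ⟨hA2, hv⟩, h3⟩
          rw [h1] at h3
          have hs : (∑ i : Fin n, Nat.dist (u i : ℕ) (v i : ℕ)) = 0 := by omega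
          exact ⟨(sum_dist_eq_zero_iff u v).1 hs, ⟨hA1, hA2⟩, hu, hv⟩
        · rintro ⟨rfl, ⟨hA1, hA2⟩, hu, hv⟩
          refine ⟨⟨hA1, hu⟩, ⟨hA2, hv⟩, ?_⟩
          rw [h1, (sum_dist_eq_zero_iff u u).2 rfl]
        
      rw [Fintype.sum_congr _ _ fun u => Fintype.sum_congr _ _ fun v => hbody u v]
      have hcollapse : ∀ u : Fin n → Fin (a+1),
          (∑ v : Fin n → Fin (a+1), if u = v then
            (if ((((x:ℕ) = a → b = true) ∧ ((y:ℕ) = a → b = true))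
                ∧ (okf a (decide ((x:ℕ) = 0)) u ∧ okf a (decide ((y:ℕ) = 0)) v))
             then (1:ℕ) else 0) else 0)
          = (if ((((x:ℕ) = a → b = true) ∧ ((y:ℕ) = a → b = true))
                ∧ (okf a (decide ((x:ℕ) = 0)) u ∧ okf a (decide ((y:ℕ) = 0)) u))
             then 1 else 0) := by
        intro u
        rw [Finset.sum_ite_eq]
        exact if_pos (Finset.mem_univ u)
      rw [Fintype.sum_congr _ _ hcollapse]
      have hsb : (decide ((x:ℕ) = 0) && decide ((y:ℕ) = 0)) = false := by
        by_contra h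
        have hx0 : (x:ℕ) = 0 := by
          have := Bool.and_eq_true_iff.1 (eq_true_of_ne_false h)
          exact of_decide_eq_true this.1
        have hy0 : (y:ℕ) = 0 := by
          have := Bool.and_eq_true_iff.1 (eq_true_of_ne_false h)
          exact of_decide_eq_true this.2
        rw [hx0, hy0] at h1
        simp [Nat.dist_self] at h1
      have hok : ∀ u : Fin n → Fin (a+1),
          (okf a (decide ((x:ℕ) = 0)) u ∧ okf a (decide ((y:ℕ) = 0)) u) ↔ okf a false u := by
        intro u
        rw [okf_and, hsb]
      by_cases hC : (((x:ℕ) = a → b = true) ∧ ((y:ℕ) = a → b = true))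
      · rw [if_pos hC, Vc_eq_sum]
        refine Fintype.sum_congr _ _ fun u => ?_
        refine if_congr ?_ rfl rfl
        rw [← hok u]
        tauto
      · rw [if_neg hC]
        refine Finset.sum_eq_zero fun u _ => ?_
        rw [if_neg (by tauto)]
    · rw [if_neg h1, add_zero]
      have hd0 : Nat.dist (x:ℕ) (y:ℕ) ≠ 0 := fun h => hxy (Fin.ext (Nat.eq_of_dist_eq_zero h))
      refine Finset.sum_eq_zero fun u _ => Finset.sum_eq_zero fun v _ => ?_
      refine if_neg ?_
      rintro ⟨_, _, h3⟩
      omega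

lemma sum_dist_cons {a n : ℕ} (x y : Fin (a+1)) (u v : Fin n → Fin (a+1)) :
    (∑ i : Fin (n+1), Nat.dist ((Fin.cons x u : Fin (n+1) → Fin (a+1)) i : ℕ)
        ((Fin.cons y v : Fin (n+1) → Fin (a+1)) i : ℕ))
      = Nat.dist (x:ℕ) (y:ℕ) + ∑ i : Fin n, Nat.dist (u i : ℕ) (v i : ℕ) := by
  rw [Fin.sum_univ_succ]
  simp [Fin.cons_succ]

lemma Ec_succ_sum (a : ℕ) (b : Bool) (n : ℕ) :
    Ec a b (n+1) = ∑ x : Fin (a+1), ∑ y : Fin (a+1),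
      ((if x = y then (if ((x:ℕ) = a → b = true) then Ec a (decide ((x:ℕ) = 0)) n else 0) else 0)
       + (if Nat.dist (x:ℕ) (y:ℕ) = 1
          then (if (((x:ℕ) = a → b = true) ∧ ((y:ℕ) = a → b = true)) then Vc a false n else 0)
          else 0)) := by
  rw [Ec_eq_sum]
  have step1 : ∀ w : Fin (n+1) → Fin (a+1),
      (∑ v : Fin (n+1) → Fin (a+1),
        if okf a b w ∧ okf a b v ∧ (∑ i : Fin (n+1), Nat.dist (w i : ℕ) (v i : ℕ)) = 1
        then (1:ℕ) else 0)
      = ∑ q : Fin (a+1) × (Fin n → Fin (a+1)),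
          (if okf a b w ∧ okf a b ((Fin.consEquiv (fun _ : Fin (n+1) => Fin (a+1))) q)
              ∧ (∑ i : Fin (n+1),
                  Nat.dist (w i : ℕ) (((Fin.consEquiv (fun _ : Fin (n+1) => Fin (a+1))) q) i : ℕ)) = 1
           then 1 else 0) :=
    fun w => (Equiv.sum_comp (Fin.consEquiv (fun _ : Fin (n+1) => Fin (a+1))) _).symm
  rw [Fintype.sum_congr _ _ step1,
    ← Equiv.sum_comp (Fin.consEquiv (fun _ : Fin (n+1) => Fin (a+1)))]
  simp only [Fintype.sum_prod_type, piFinSucc_symm_cons]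
  refine Fintype.sum_congr _ _ fun x => ?_
  rw [Finset.sum_comm]
  refine Fintype.sum_congr _ _ fun y => ?_
  rw [← inner_eval a n b x y]
  refine Fintype.sum_congr _ _ fun u => Fintype.sum_congr _ _ fun v => ?_
  refine if_congr ?_ rfl rfl
  rw [okf_cons, okf_cons, sum_dist_cons]

lemma ite_mul_boole {P : Prop} [Decidable P] (V : ℕ) :
    (if P then V else 0) = (if P then 1 else 0) * V := by
  split_ifs <;> simp

lemma Ec_succ (a' : ℕ) (b : Bool) (n : ℕ) :
    Ec (a'+1) b (n+1) = Ec (a'+1) true n + a' * Ec (a'+1) false n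
      + (if b then Ec (a'+1) false n else 0)
      + (2*a' + (if b then 2 else 0)) * Vc (a'+1) false n := by
  rw [Ec_succ_sum]
  rw [Finset.sum_congr rfl (fun x _ => Finset.sum_add_distrib), Finset.sum_add_distrib]
  have hdiag : (∑ x : Fin (a'+1+1), ∑ y : Fin (a'+1+1),
      if x = y then (if ((x:ℕ) = a'+1 → b = true) then Ec (a'+1) (decide ((x:ℕ) = 0)) n else 0)
      else 0)
      = Ec (a'+1) true n + a' * Ec (a'+1) false n + (if b then Ec (a'+1) false n else 0) := by
    have hx : ∀ x : Fin (a'+1+1), (∑ y : Fin (a'+1+1),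
        if x = y then (if ((x:ℕ) = a'+1 → b = true) then Ec (a'+1) (decide ((x:ℕ) = 0)) n else 0)
        else 0)
        = (if ((x:ℕ) = a'+1 → b = true) then Ec (a'+1) (decide ((x:ℕ) = 0)) n else 0) := by
      intro x
      rw [Finset.sum_ite_eq]
      exact if_pos (Finset.mem_univ x)
    rw [Fintype.sum_congr _ _ hx, sum_gate a' b (fun s => Ec (a'+1) s n)]
  rw [hdiag]
  have hoff : (∑ x : Fin (a'+1+1), ∑ y : Fin (a'+1+1),
      if Nat.dist (x:ℕ) (y:ℕ) = 1
      then (if (((x:ℕ) = a'+1 → b = true) ∧ ((y:ℕ) = a'+1 → b = true)) then Vc (a'+1) false n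
            else 0)
      else 0)
      = (2*a' + (if b then 2 else 0)) * Vc (a'+1) false n := by
    cases b with
    | true =>
      have hbody : ∀ x y : Fin (a'+1+1),
          (if Nat.dist (x:ℕ) (y:ℕ) = 1
           then (if (((x:ℕ) = a'+1 → true = true) ∧ ((y:ℕ) = a'+1 → true = true))
                 then Vc (a'+1) false n else 0)
           else 0)
          = (if Nat.dist (x:ℕ) (y:ℕ) = 1 then 1 else 0) * Vc (a'+1) false n := by
        intro x y
        have hC : (((x:ℕ) = a'+1 → true = true) ∧ (((y:ℕ) = a'+1 → true = true))) :=
          ⟨fun _ => rfl, fun _ => rfl⟩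
        rw [if_pos hC, ite_mul_boole]
      rw [Fintype.sum_congr _ _ (fun x => Fintype.sum_congr _ _ (fun y => hbody x y))]
      simp only [← Finset.sum_mul]
      rw [Fin.sum_univ_eq_sum_range
          (fun mx => ∑ y : Fin (a'+1+1), if Nat.dist mx (y:ℕ) = 1 then (1:ℕ) else 0) (a'+1+1)]
      rw [Finset.sum_congr rfl (fun mx _ => Fin.sum_univ_eq_sum_range
          (fun my => if Nat.dist mx my = 1 then (1:ℕ) else 0) (a'+1+1))]
      rw [dist_count (a'+1)]
      norm_num
      omega
    | false =>
      have hbody : ∀ x y : Fin (a'+1+1),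
          (if Nat.dist (x:ℕ) (y:ℕ) = 1
           then (if (((x:ℕ) = a'+1 → false = true) ∧ ((y:ℕ) = a'+1 → false = true))
                 then Vc (a'+1) false n else 0)
           else 0)
          = (if (Nat.dist (x:ℕ) (y:ℕ) = 1 ∧ (x:ℕ) ≠ a'+1 ∧ (y:ℕ) ≠ a'+1) then 1 else 0)
              * Vc (a'+1) false n := by
        intro x y
        rw [← ite_and, ite_mul_boole]
        congr 1
        refine if_congr ?_ rfl rfl
        constructor
        · rintro ⟨h1, h2, h3⟩
          exact ⟨h1, fun h => by simpa using h2 h, fun h => by simpa using h3 h⟩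
        · rintro ⟨h1, h2, h3⟩
          exact ⟨h1, fun h => absurd h h2, fun h => absurd h h3⟩
      rw [Fintype.sum_congr _ _ (fun x => Fintype.sum_congr _ _ (fun y => hbody x y))]
      simp only [← Finset.sum_mul]
      rw [Fin.sum_univ_eq_sum_range
          (fun mx => ∑ y : Fin (a'+1+1),
            if (Nat.dist mx (y:ℕ) = 1 ∧ mx ≠ a'+1 ∧ (y:ℕ) ≠ a'+1) then (1:ℕ) else 0) (a'+1+1)]
      rw [Finset.sum_congr rfl (fun mx _ => Fin.sum_univ_eq_sum_range
          (fun my => if (Nat.dist mx my = 1 ∧ mx ≠ a'+1 ∧ my ≠ a'+1) then (1:ℕ) else 0) (a'+1+1))]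
      rw [dist_count_restr a']
      norm_num
  rw [hoff]

/-- term of the sum -/
def mterm (a n k : ℕ) : ℤ :=
  (-1 : ℤ) ^ (n + k) * (((n + k + 1) / 2 : ℕ) : ℤ) *
    (Nat.choose ((n + k) / 2) k : ℤ) * (a : ℤ) ^ k

def Rt (a n : ℕ) : ℤ := ∑ k ∈ Finset.range (n + 1), mterm a n k

lemma mterm_zero (a n k : ℕ) (h : n < k) : mterm a n k = 0 := by
  have : (n + k) / 2 < k := by omega
  simp [mterm, Nat.choose_eq_zero_of_lt this]

lemma Rt_ext (a n N : ℕ) (h : n + 1 ≤ N) :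
    Rt a n = ∑ k ∈ Finset.range N, mterm a n k := by
  rw [Rt]
  refine Finset.sum_subset (Finset.range_subset_range.2 h) ?_
  intro k _ hk
  simp only [Finset.mem_range, not_lt] at hk
  exact mterm_zero a n k (by omega)

def pterm (a n k : ℕ) : ℤ := if k = 0 then 0 else (a : ℤ) * mterm a n (k - 1)
def qterm (a n k : ℕ) : ℤ := if k < 2 then 0 else (a : ℤ)^2 * mterm a n (k - 2)

lemma p_sum (a n N : ℕ) (h : n + 2 ≤ N) :
    (a : ℤ) * Rt a n = ∑ k ∈ Finset.range N, pterm a n k := by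
  obtain ⟨M, rfl⟩ : ∃ M, N = M + 1 := ⟨N - 1, by omega⟩
  rw [Finset.sum_range_succ' (pterm a n)]
  simp only [pterm, Nat.add_sub_cancel]
  norm_num
  rw [← Finset.mul_sum, ← Rt_ext a n M (by omega)]

lemma q_sum (a n N : ℕ) (h : n + 3 ≤ N) :
    (a : ℤ)^2 * Rt a n = ∑ k ∈ Finset.range N, qterm a n k := by
  obtain ⟨M, rfl⟩ : ∃ M, N = M + 2 := ⟨N - 2, by omega⟩
  rw [Finset.sum_range_succ' (qterm a n), Finset.sum_range_succ' (fun k => qterm a n (k+1))]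
  have h0 : qterm a n 0 = 0 := by simp [qterm]
  have h1 : qterm a n 1 = 0 := by simp [qterm]
  simp only [h0, h1, add_zero]
  have : ∀ k, qterm a n (k + 1 + 1) = (a:ℤ)^2 * mterm a n k := by
    intro k; simp [qterm]
  simp only [this]
  rw [← Finset.mul_sum, ← Rt_ext a n M (by omega)]

set_option maxHeartbeats 1000000 in
lemma mterm_key (a n k : ℕ) :
    mterm a (n+4) k + qterm a (n+2) k + 2 * pterm a (n+1) k + mterm a n k
      = 2 * pterm a (n+3) k + 2 * mterm a (n+2) k := by
  match k with
  | 0 =>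
    have h0 : pterm a (n+1) 0 = 0 := by simp [pterm]
    have h3 : pterm a (n+3) 0 = 0 := by simp [pterm]
    have hqq : qterm a (n+2) 0 = 0 := by simp [qterm]
    rw [h0, h3, hqq]
    have e1 : (-1:ℤ)^(n+4) = (-1)^n := by rw [pow_add]; norm_num
    have e2 : (-1:ℤ)^(n+2) = (-1)^n := by rw [pow_add]; norm_num
    have hz : ((((n+4+1)/2 : ℕ)) : ℤ) + (((n+1)/2 : ℕ) : ℤ)
        = 2 * (((n+2+1)/2 : ℕ) : ℤ) := by exact_mod_cast (by omega :
          ((n+4+1)/2 : ℕ) + ((n+1)/2 : ℕ) = 2 * ((n+2+1)/2 : ℕ))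
    simp only [mterm, Nat.add_zero, add_zero, Nat.choose_zero_right, pow_zero, e1, e2]
    linear_combination (-1:ℤ)^n * hz
  | 1 =>
    have hq : qterm a (n+2) 1 = 0 := by simp [qterm]
    have hp1 : pterm a (n+1) 1 = (a:ℤ) * mterm a (n+1) 0 := by simp [pterm]
    have hp3 : pterm a (n+3) 1 = (a:ℤ) * mterm a (n+3) 0 := by simp [pterm]
    rw [hq, hp1, hp3]
    rcases Nat.even_or_odd n with ⟨t, ht⟩ | ⟨t, ht⟩
    · have s1 : (-1:ℤ)^(n+4+1) = -1 := Odd.neg_one_pow ⟨t+2, by omega⟩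
      have s2 : (-1:ℤ)^(n+1+0) = -1 := Odd.neg_one_pow ⟨t, by omega⟩
      have s3 : (-1:ℤ)^(n+1) = -1 := Odd.neg_one_pow ⟨t, by omega⟩
      have s4 : (-1:ℤ)^(n+3+0) = -1 := Odd.neg_one_pow ⟨t+1, by omega⟩
      have s5 : (-1:ℤ)^(n+2+1) = -1 := Odd.neg_one_pow ⟨t+1, by omega⟩
      have d1 : (n+4+1+1)/2 = t+3 := by omega
      have d2 : (n+1+0+1)/2 = t+1 := by omega
      have d3 : (n+1)/2 = t := by omega
      have d4 : (n+3+0+1)/2 = t+2 := by omega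
      have d5 : (n+2+1+1)/2 = t+2 := by omega
      have c1 : (n+4+1)/2 = t+2 := by omega
      have c3 : (n+1)/2 = t := by omega
      have c5 : (n+2+1)/2 = t+1 := by omega
      simp only [mterm, s1, s2, s3, s4, s5, d1, d2, d4, d5, c1, c5, d3,
        Nat.choose_zero_right, Nat.choose_one_right, pow_zero, pow_one]
      push_cast
      ring
    · have s1 : (-1:ℤ)^(n+4+1) = 1 := Even.neg_one_pow ⟨t+3, by omega⟩
      have s2 : (-1:ℤ)^(n+1+0) = 1 := Even.neg_one_pow ⟨t+1, by omega⟩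
      have s3 : (-1:ℤ)^(n+1) = 1 := Even.neg_one_pow ⟨t+1, by omega⟩
      have s4 : (-1:ℤ)^(n+3+0) = 1 := Even.neg_one_pow ⟨t+2, by omega⟩
      have s5 : (-1:ℤ)^(n+2+1) = 1 := Even.neg_one_pow ⟨t+2, by omega⟩
      have d1 : (n+4+1+1)/2 = t+3 := by omega
      have d2 : (n+1+0+1)/2 = t+1 := by omega
      have d3 : (n+1)/2 = t+1 := by omega
      have d4 : (n+3+0+1)/2 = t+2 := by omega
      have d5 : (n+2+1+1)/2 = t+2 := by omega
      have c1 : (n+4+1)/2 = t+3 := by omega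
      have c5 : (n+2+1)/2 = t+2 := by omega
      simp only [mterm, s1, s2, s3, s4, s5, d1, d2, d4, d5, c1, c5, d3,
        Nat.choose_zero_right, Nat.choose_one_right, pow_zero, pow_one]
      push_cast
      ring
  | (j+2) =>
    have hq : qterm a (n+2) (j+2) = (a:ℤ)^2 * mterm a (n+2) j := by simp [qterm]
    have hp1 : pterm a (n+1) (j+2) = (a:ℤ) * mterm a (n+1) (j+1) := by simp [pterm]
    have hp3 : pterm a (n+3) (j+2) = (a:ℤ) * mterm a (n+3) (j+1) := by simp [pterm]
    rw [hq, hp1, hp3]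
    rcases Nat.even_or_odd (n+j) with ⟨t, ht⟩ | ⟨t, ht⟩
    · -- n+j = t+t (even)
      have s1 : (-1:ℤ)^(n+4+(j+2)) = 1 := Even.neg_one_pow ⟨t+3, by omega⟩
      have s2 : (-1:ℤ)^(n+2+j) = 1 := Even.neg_one_pow ⟨t+1, by omega⟩
      have s3 : (-1:ℤ)^(n+1+(j+1)) = 1 := Even.neg_one_pow ⟨t+1, by omega⟩
      have s4 : (-1:ℤ)^(n+(j+2)) = 1 := Even.neg_one_pow ⟨t+1, by omega⟩
      have s5 : (-1:ℤ)^(n+3+(j+1)) = 1 := Even.neg_one_pow ⟨t+2, by omega⟩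
      have s6 : (-1:ℤ)^(n+2+(j+2)) = 1 := Even.neg_one_pow ⟨t+2, by omega⟩
      have d1 : (n+4+(j+2)+1)/2 = t+3 := by omega
      have d2 : (n+2+j+1)/2 = t+1 := by omega
      have d3 : (n+1+(j+1)+1)/2 = t+1 := by omega
      have d4 : (n+(j+2)+1)/2 = t+1 := by omega
      have d5 : (n+3+(j+1)+1)/2 = t+2 := by omega
      have d6 : (n+2+(j+2)+1)/2 = t+2 := by omega
      have e1 : (n+4+(j+2))/2 = t+3 := by omega
      have e2 : (n+2+j)/2 = t+1 := by omega
      have e3 : (n+1+(j+1))/2 = t+1 := by omega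
      have e4 : (n+(j+2))/2 = t+1 := by omega
      have e5 : (n+3+(j+1))/2 = t+2 := by omega
      have e6 : (n+2+(j+2))/2 = t+2 := by omega
      simp only [mterm, s1, s2, s3, s4, s5, s6, d1, d2, d3, d4, d5, d6,
        e1, e2, e3, e4, e5, e6]
      have P1 : ((t+2).choose (j+1) : ℤ) = (t+1).choose j + (t+1).choose (j+1) := by
        exact_mod_cast congrArg (fun x : ℕ => (x:ℤ)) (Nat.choose_succ_succ (t+1) j)
      have P2 : ((t+2).choose (j+2) : ℤ) = (t+1).choose (j+1) + (t+1).choose (j+2) := by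
        exact_mod_cast congrArg (fun x : ℕ => (x:ℤ)) (Nat.choose_succ_succ (t+1) (j+1))
      have P3 : ((t+3).choose (j+2) : ℤ) = (t+2).choose (j+1) + (t+2).choose (j+2) := by
        exact_mod_cast congrArg (fun x : ℕ => (x:ℤ)) (Nat.choose_succ_succ (t+2) (j+1))
      push_cast
      linear_combination ((t:ℤ)+3) * (a:ℤ)^(j+2) * P3 - ((t:ℤ)+1) * (a:ℤ)^(j+2) * P1
        - ((t:ℤ)+1) * (a:ℤ)^(j+2) * P2
    · -- n+j = 2t+1 (odd)
      have s1 : (-1:ℤ)^(n+4+(j+2)) = -1 := Odd.neg_one_pow ⟨t+3, by omega⟩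
      have s2 : (-1:ℤ)^(n+2+j) = -1 := Odd.neg_one_pow ⟨t+1, by omega⟩
      have s3 : (-1:ℤ)^(n+1+(j+1)) = -1 := Odd.neg_one_pow ⟨t+1, by omega⟩
      have s4 : (-1:ℤ)^(n+(j+2)) = -1 := Odd.neg_one_pow ⟨t+1, by omega⟩
      have s5 : (-1:ℤ)^(n+3+(j+1)) = -1 := Odd.neg_one_pow ⟨t+2, by omega⟩
      have s6 : (-1:ℤ)^(n+2+(j+2)) = -1 := Odd.neg_one_pow ⟨t+2, by omega⟩
      have d1 : (n+4+(j+2)+1)/2 = t+4 := by omega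
      have d2 : (n+2+j+1)/2 = t+2 := by omega
      have d3 : (n+1+(j+1)+1)/2 = t+2 := by omega
      have d4 : (n+(j+2)+1)/2 = t+2 := by omega
      have d5 : (n+3+(j+1)+1)/2 = t+3 := by omega
      have d6 : (n+2+(j+2)+1)/2 = t+3 := by omega
      have e1 : (n+4+(j+2))/2 = t+3 := by omega
      have e2 : (n+2+j)/2 = t+1 := by omega
      have e3 : (n+1+(j+1))/2 = t+1 := by omega
      have e4 : (n+(j+2))/2 = t+1 := by omega
      have e5 : (n+3+(j+1))/2 = t+2 := by omega
      have e6 : (n+2+(j+2))/2 = t+2 := by omega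
      simp only [mterm, s1, s2, s3, s4, s5, s6, d1, d2, d3, d4, d5, d6,
        e1, e2, e3, e4, e5, e6]
      have P1 : ((t+2).choose (j+1) : ℤ) = (t+1).choose j + (t+1).choose (j+1) := by
        exact_mod_cast congrArg (fun x : ℕ => (x:ℤ)) (Nat.choose_succ_succ (t+1) j)
      have P2 : ((t+2).choose (j+2) : ℤ) = (t+1).choose (j+1) + (t+1).choose (j+2) := by
        exact_mod_cast congrArg (fun x : ℕ => (x:ℤ)) (Nat.choose_succ_succ (t+1) (j+1))
      have P3 : ((t+3).choose (j+2) : ℤ) = (t+2).choose (j+1) + (t+2).choose (j+2) := by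
        exact_mod_cast congrArg (fun x : ℕ => (x:ℤ)) (Nat.choose_succ_succ (t+2) (j+1))
      push_cast
      linear_combination -((t:ℤ)+4) * (a:ℤ)^(j+2) * P3 + ((t:ℤ)+2) * (a:ℤ)^(j+2) * P1
        + ((t:ℤ)+2) * (a:ℤ)^(j+2) * P2

lemma Rt_rec (a n : ℕ) :
    Rt a (n+4) + (a:ℤ)^2 * Rt a (n+2) + 2*((a:ℤ)*Rt a (n+1)) + Rt a n
      = 2*((a:ℤ)*Rt a (n+3)) + 2*Rt a (n+2) := by
  rw [q_sum a (n+2) (n+7) (by omega), p_sum a (n+1) (n+7) (by omega),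
    p_sum a (n+3) (n+7) (by omega),
    Rt_ext a (n+4) (n+7) (by omega), Rt_ext a n (n+7) (by omega),
    Rt_ext a (n+2) (n+7) (by omega)]
  simp only [Finset.mul_sum, ← Finset.sum_add_distrib]
  exact Finset.sum_congr rfl fun k _ => mterm_key a n k

-- specialized step lemmas
lemma Esf (a' n : ℕ) : Ec (a'+1) false (n+1)
    = Ec (a'+1) true n + a' * Ec (a'+1) false n + 2*a' * Vc (a'+1) false n := by
  rw [Ec_succ]; simp [mul_comm]

lemma Est (a' n : ℕ) : Ec (a'+1) true (n+1)
    = Ec (a'+1) true n + a' * Ec (a'+1) false n + Ec (a'+1) false n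
      + (2*a'+2) * Vc (a'+1) false n := by
  rw [Ec_succ]; simp

lemma Vsf (a' n : ℕ) : Vc (a'+1) false (n+1)
    = Vc (a'+1) true n + a' * Vc (a'+1) false n := by
  rw [Vc_succ]; simp

lemma Vst (a' n : ℕ) : Vc (a'+1) true (n+1)
    = Vc (a'+1) true n + a' * Vc (a'+1) false n + Vc (a'+1) false n := by
  rw [Vc_succ]; simp

lemma Ec_rec (a' n : ℕ) :
    Ec (a'+1) false (n+4) + (a'+1)^2 * Ec (a'+1) false (n+2)
      + 2*(a'+1)*Ec (a'+1) false (n+1) + Ec (a'+1) false n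
    = 2*(a'+1)*Ec (a'+1) false (n+3) + 2*Ec (a'+1) false (n+2) := by
  rw [show n+4 = n+1+1+1+1 from rfl, show n+3 = n+1+1+1 from rfl,
    show n+2 = n+1+1 from rfl]
  simp only [Esf, Est, Vsf, Vst]
  ring

-- graph glue
lemma metallicOK_iff (a n : ℕ) (α : Fin n → Fin (a+1)) :
    MetallicOK a n α ↔ okf a false α := by
  constructor
  · intro h i hi; exact Or.inr (h i hi)
  · intro h i hi
    rcases h i hi with ⟨_, hb⟩ | h2
    · exact absurd hb (by simp)
    · exact h2

def dartEquiv (a n : ℕ) : (metallicCube a n).Dart ≃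
    {p : (Fin n → Fin (a+1)) × (Fin n → Fin (a+1)) //
      okf a false p.1 ∧ okf a false p.2
        ∧ (∑ i : Fin n, Nat.dist (p.1 i : ℕ) (p.2 i : ℕ)) = 1} where
  toFun d := ⟨(d.toProd.1.1, d.toProd.2.1),
    (metallicOK_iff a n _).1 d.toProd.1.2, (metallicOK_iff a n _).1 d.toProd.2.2, d.adj⟩
  invFun p := ⟨(⟨p.1.1, (metallicOK_iff a n _).2 p.2.1⟩,
      ⟨p.1.2, (metallicOK_iff a n _).2 p.2.2.1⟩), p.2.2.2⟩
  left_inv d := rfl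
  right_inv p := rfl

lemma Ec_twice (a n : ℕ) : Ec a false n = 2 * (metallicCube a n).edgeFinset.card := by
  rw [← SimpleGraph.dart_card_eq_twice_card_edges, Ec]
  exact (Fintype.card_congr (dartEquiv a n)).symm

-- base values
lemma Vf1 (a' : ℕ) : Vc (a'+1) false 1 = a'+1 := by
  have h := Vsf a' 0; norm_num [Vc_zero] at h; omega
lemma Vt1 (a' : ℕ) : Vc (a'+1) true 1 = a'+2 := by
  have h := Vst a' 0; norm_num [Vc_zero] at h; omega
lemma Ef1 (a' : ℕ) : Ec (a'+1) false 1 = 2*a' := by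
  have h := Esf a' 0; norm_num [Vc_zero, Ec_zero] at h
  rw [h]; try ring
lemma Et1 (a' : ℕ) : Ec (a'+1) true 1 = 2*a'+2 := by
  have h := Est a' 0; norm_num [Vc_zero, Ec_zero] at h
  rw [h]; try ring
lemma Vf2 (a' : ℕ) : Vc (a'+1) false 2 = a'^2+2*a'+2 := by
  have h := Vsf a' 1; norm_num [Vf1, Vt1] at h
  rw [h]; try ring
lemma Vt2 (a' : ℕ) : Vc (a'+1) true 2 = a'^2+3*a'+3 := by
  have h := Vst a' 1; norm_num [Vf1, Vt1] at h
  rw [h]; try ring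
lemma Ef2 (a' : ℕ) : Ec (a'+1) false 2 = 4*a'^2+4*a'+2 := by
  have h := Esf a' 1; norm_num [Vf1, Ef1, Et1] at h
  rw [h]; try ring
lemma Et2 (a' : ℕ) : Ec (a'+1) true 2 = 4*a'^2+8*a'+4 := by
  have h := Est a' 1; norm_num [Vf1, Ef1, Et1] at h
  rw [h]; try ring
lemma Vf3 (a' : ℕ) : Vc (a'+1) false 3 = a'^3+3*a'^2+5*a'+3 := by
  have h := Vsf a' 2; norm_num [Vf2, Vt2] at h
  rw [h]; try ring
lemma Ef3 (a' : ℕ) : Ec (a'+1) false 3 = 6*a'^3+12*a'^2+14*a'+4 := by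
  have h := Esf a' 2; norm_num [Vf2, Ef2, Et2] at h
  rw [h]; try ring
lemma Et3 (a' : ℕ) : Ec (a'+1) true 3 = 6*a'^3+18*a'^2+22*a'+10 := by
  have h := Est a' 2; norm_num [Vf2, Ef2, Et2] at h
  rw [h]; try ring
lemma Ef4 (a' : ℕ) : Ec (a'+1) false 4 = 8*a'^4+24*a'^3+42*a'^2+32*a'+10 := by
  have h := Esf a' 3; norm_num [Vf3, Ef3, Et3] at h
  rw [h]; try ring

lemma Rt1 (a' : ℕ) : Rt (a'+1) 1 = (a' : ℤ) := by
  simp [Rt, mterm, Finset.sum_range_succ]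
  try push_cast
  try ring
lemma Rt2 (a' : ℕ) : Rt (a'+1) 2 = 2*(a':ℤ)^2+2*(a':ℤ)+1 := by
  simp [Rt, mterm, Finset.sum_range_succ]
  try push_cast
  try ring
lemma Rt3 (a' : ℕ) : Rt (a'+1) 3 = 3*(a':ℤ)^3+6*(a':ℤ)^2+7*(a':ℤ)+2 := by
  simp [Rt, mterm, Finset.sum_range_succ]
  try push_cast
  try ring
lemma Rt4 (a' : ℕ) : Rt (a'+1) 4 = 4*(a':ℤ)^4+12*(a':ℤ)^3+21*(a':ℤ)^2+16*(a':ℤ)+5 := by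
  simp [Rt, mterm, Finset.sum_range_succ]
  try push_cast
  try ring

lemma main_ind (a' : ℕ) : ∀ m : ℕ, ((Ec (a'+1) false (m+1) : ℕ) : ℤ) = 2 * Rt (a'+1) (m+1) := by
  intro m
  induction m using Nat.strong_induction_on with
  | _ m ih =>
    match m with
    | 0 => rw [Ef1, Rt1]; push_cast; ring
    | 1 => rw [Ef2, Rt2]; push_cast; ring
    | 2 => rw [Ef3, Rt3]; push_cast; ring
    | 3 => rw [Ef4, Rt4]; push_cast; ring
    | (k+4) =>
      have ih0 := ih k (by omega)
      have ih1 := ih (k+1) (by omega)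
      have ih2 := ih (k+2) (by omega)
      have ih3 := ih (k+3) (by omega)
      have hE := Ec_rec a' (k+1)
      zify at hE
      have hR := Rt_rec (a'+1) (k+1)
      norm_num at ih0 ih1 ih2 ih3 hE hR ⊢
      push_cast at hE hR ⊢
      linear_combination hE + 2*((a':ℤ)+1)*ih3 + 2*ih2 - ((a':ℤ)+1)^2*ih2
        - 2*((a':ℤ)+1)*ih1 - ih0 - 2*hR
/-- the number of edges of `Π^a_n` equals
`Σ_{k=0}^{n} (−1)^{n+k} · ⌈(n+k)/2⌉ · C(⌊(n+k)/2⌋, k) · a^k`. -/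
theorem metallic_edge_formula (a n : ℕ) (ha : 1 ≤ a) (hn : 1 ≤ n) :
    ((metallicCube a n).edgeFinset.card : ℤ) =
      ∑ k ∈ Finset.range (n + 1),
        (-1 : ℤ) ^ (n + k) * (((n + k + 1) / 2 : ℕ) : ℤ) *
          (Nat.choose ((n + k) / 2) k : ℤ) * (a : ℤ) ^ k := by
  obtain ⟨a', rfl⟩ : ∃ a', a = a'+1 := ⟨a-1, by omega⟩
  obtain ⟨m, rfl⟩ : ∃ m, n = m+1 := ⟨n-1, by omega⟩
  have h1 := main_ind a' m
  rw [Ec_twice (a'+1) (m+1)] at h1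
  push_cast at h1
  have h2 : (((metallicCube (a'+1) (m+1)).edgeFinset.card : ℕ) : ℤ) = Rt (a'+1) (m+1) := by
    linarith
  rw [h2, Rt]
  exact Finset.sum_congr rfl fun k _ => rfl
end
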